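/- arXiv:math/0509518 — 3 statements merged into one kernel-verified Lean document; each statement's English description precedes it below -/
import Mathlib

section
/- The set of branching points of a complete, locally compact rooted real tree is at most countable: if (T,d,ρ) is a complete, locally compact rooted real tree, then Br(T) = {s ∈ T \ {ρ} : T \ {s} has at least 3 connected components} is a countable set. -/
/-- The property of `f` being the (unique) isometric arc-parametrisation joining `s` to `t`
in a metric space. -/
def arcProp {T : Type*} [MetricSpace T] (s t : T)
    (f : Set.Icc (0 : ℝ) (dist s t) → T) : Prop :=
  Isometry f ∧ f ⟨0, Set.left_mem_Icc.2 dist_nonneg⟩ = s ∧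
    f ⟨dist s t, Set.right_mem_Icc.2 dist_nonneg⟩ = t

/-- A metric space is a real tree if any two points are joined by a unique isometric arc,
and every continuous injective path has as image the corresponding arc. -/
def IsRealTree (T : Type*) [MetricSpace T] : Prop :=
  (∀ s t : T, ∃! f : Set.Icc (0 : ℝ) (dist s t) → T, arcProp s t f) ∧
  (∀ q : Set.Icc (0 : ℝ) (1 : ℝ) → T, Continuous q → Function.Injective q →
    ∀ f : Set.Icc (0 : ℝ)
        (dist (q ⟨0, Set.left_mem_Icc.2 zero_le_one⟩)
              (q ⟨1, Set.right_mem_Icc.2 zero_le_one⟩)) → T,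
      arcProp (q ⟨0, Set.left_mem_Icc.2 zero_le_one⟩)
              (q ⟨1, Set.right_mem_Icc.2 zero_le_one⟩) f →
      Set.range q = Set.range f)

/-- The degree of a point: the number of connected components of the complement. -/
noncomputable def treeDegree {T : Type*} [MetricSpace T] (s : T) : Cardinal :=
  Cardinal.mk (ConnectedComponents {x : T // x ≠ s})

/-- The set of branching points of a rooted real tree: points distinct from the root whose
complement has at least 3 connected components. -/
def branchPoints {T : Type*} [MetricSpace T] (ρ : T) : Set T :=
  {s : T | s ≠ ρ ∧ 3 ≤ treeDegree s}

open Set Metric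

section Aux

variable {T : Type*} [MetricSpace T]

/-- A choice of geodesic arc between any two points. -/
noncomputable def arcF (hex : ∀ s t : T, ∃ f : Set.Icc (0 : ℝ) (dist s t) → T, arcProp s t f)
    (a b : T) : Set.Icc (0 : ℝ) (dist a b) → T :=
  (hex a b).choose

lemma arcF_spec (hex : ∀ s t : T, ∃ f : Set.Icc (0 : ℝ) (dist s t) → T, arcProp s t f)
    (a b : T) : arcProp a b (arcF hex a b) :=
  (hex a b).choose_spec

lemma arcF_dist_left (hex : ∀ s t : T, ∃ f : Set.Icc (0 : ℝ) (dist s t) → T, arcProp s t f)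
    (a b : T) (u : Set.Icc (0 : ℝ) (dist a b)) :
    dist a (arcF hex a b u) = u.1 := by
  have h := arcF_spec hex a b
  have key := h.1.dist_eq ⟨0, Set.left_mem_Icc.2 dist_nonneg⟩ u
  rw [h.2.1, Subtype.dist_eq, Real.dist_eq] at key
  rw [key, abs_sub_comm, abs_of_nonneg (by simpa using u.2.1)]
  simp

lemma arcF_dist_right (hex : ∀ s t : T, ∃ f : Set.Icc (0 : ℝ) (dist s t) → T, arcProp s t f)
    (a b : T) (u : Set.Icc (0 : ℝ) (dist a b)) :
    dist (arcF hex a b u) b = dist a b - u.1 := by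
  have h := arcF_spec hex a b
  have key := h.1.dist_eq u ⟨dist a b, Set.right_mem_Icc.2 dist_nonneg⟩
  rw [h.2.2, Subtype.dist_eq, Real.dist_eq] at key
  rw [key, abs_sub_comm, abs_of_nonneg (by simpa using u.2.2)]

/-- `s` separates `a` from `b`: both are distinct from `s` and `s` lies on the chosen arc. -/
def SepPt (hex : ∀ s t : T, ∃ f : Set.Icc (0 : ℝ) (dist s t) → T, arcProp s t f)
    (s a b : T) : Prop :=
  a ≠ s ∧ b ≠ s ∧ ∃ u, arcF hex a b u = s

lemma SepPt.dist_add {hex : ∀ s t : T, ∃ f : Set.Icc (0 : ℝ) (dist s t) → T, arcProp s t f}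
    {s a b : T} (h : SepPt hex s a b) : dist a s + dist s b = dist a b := by
  obtain ⟨-, -, u, hu⟩ := h
  have h1 := arcF_dist_left hex a b u
  have h2 := arcF_dist_right hex a b u
  rw [hu] at h1 h2
  linarith

lemma SepPt.eq_of_dist_eq {hex : ∀ s t : T, ∃ f : Set.Icc (0 : ℝ) (dist s t) → T, arcProp s t f}
    {s s' a b : T} (h : SepPt hex s a b) (h' : SepPt hex s' a b)
    (hd : dist a s = dist a s') : s = s' := by
  obtain ⟨-, -, u, hu⟩ := h
  obtain ⟨-, -, u', hu'⟩ := h'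
  have h1 := arcF_dist_left hex a b u
  have h1' := arcF_dist_left hex a b u'
  rw [hu] at h1; rw [hu'] at h1'
  have : u = u' := Subtype.ext (by rw [← h1, ← h1', hd])
  rw [← hu, ← hu', this]

lemma eq_of_sepPt_three {hex : ∀ s t : T, ∃ f : Set.Icc (0 : ℝ) (dist s t) → T, arcProp s t f}
    {s s' a b c : T} (h1 : SepPt hex s a b) (h2 : SepPt hex s a c) (h3 : SepPt hex s b c)
    (h1' : SepPt hex s' a b) (h2' : SepPt hex s' a c) (h3' : SepPt hex s' b c) : s = s' := by
  have e1 := h1.dist_add; have e2 := h2.dist_add; have e3 := h3.dist_add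
  have e1' := h1'.dist_add; have e2' := h2'.dist_add; have e3' := h3'.dist_add
  apply h1.eq_of_dist_eq h1'
  have db : dist s b = dist b s := dist_comm _ _
  have db' : dist s' b = dist b s' := dist_comm _ _
  linarith

/-- If the chosen arc from `x` to `y` avoids `s`, then `x` and `y` lie in the same connected
component of the complement of `s`. -/
lemma same_component_of_arc_avoids
    (hex : ∀ s t : T, ∃ f : Set.Icc (0 : ℝ) (dist s t) → T, arcProp s t f)
    (s : T) (x y : {z : T // z ≠ s}) (h : ∀ u, arcF hex x.1 y.1 u ≠ s) :
    (x : ConnectedComponents {z : T // z ≠ s}) = y := by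
  have hP := arcF_spec hex x.1 y.1
  set g : Set.Icc (0 : ℝ) (dist x.1 y.1) → {z : T // z ≠ s} :=
    fun u => ⟨arcF hex x.1 y.1 u, h u⟩ with hg
  have hgc : Continuous g := (hP.1.continuous).subtype_mk _
  haveI : PreconnectedSpace (Set.Icc (0 : ℝ) (dist x.1 y.1)) :=
    Subtype.preconnectedSpace isPreconnected_Icc
  have hconn : IsPreconnected (Set.range g) := isPreconnected_range hgc
  have hx : x ∈ Set.range g := ⟨⟨0, Set.left_mem_Icc.2 dist_nonneg⟩, Subtype.ext hP.2.1⟩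
  have hy : y ∈ Set.range g :=
    ⟨⟨dist x.1 y.1, Set.right_mem_Icc.2 dist_nonneg⟩, Subtype.ext hP.2.2⟩
  symm
  rw [ConnectedComponents.coe_eq_coe']
  exact hconn.subset_connectedComponent hx hy

lemma same_component_of_dist_lt
    (hex : ∀ s t : T, ∃ f : Set.Icc (0 : ℝ) (dist s t) → T, arcProp s t f)
    (s : T) (x y : {z : T // z ≠ s}) (h : dist x.1 y.1 < dist x.1 s) :
    (x : ConnectedComponents {z : T // z ≠ s}) = y := by
  apply same_component_of_arc_avoids hex s x y
  intro u heq
  have h1 := arcF_dist_left hex x.1 y.1 u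
  rw [heq] at h1
  have := u.2.2
  linarith

/-- Every connected component of the complement of `s` contains a point of any dense set. -/
lemma exists_dense_in_component
    (hex : ∀ s t : T, ∃ f : Set.Icc (0 : ℝ) (dist s t) → T, arcProp s t f)
    (s : T) {D : Set T} (hD : Dense D) (c : ConnectedComponents {z : T // z ≠ s}) :
    ∃ d ∈ D, ∃ hd : d ≠ s,
      ((⟨d, hd⟩ : {z : T // z ≠ s}) : ConnectedComponents {z : T // z ≠ s}) = c := by
  obtain ⟨x, rfl⟩ := ConnectedComponents.surjective_coe c
  set V : Set T := {z : T | ∃ hz : z ≠ s,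
    ((⟨z, hz⟩ : {w : T // w ≠ s}) : ConnectedComponents {w : T // w ≠ s}) = (x : _)} with hV
  have hVopen : IsOpen V := by
    rw [Metric.isOpen_iff]
    rintro z ⟨hz, hzc⟩
    refine ⟨dist z s, dist_pos.2 hz, ?_⟩
    intro w hw
    rw [mem_ball] at hw
    have hws : w ≠ s := by
      intro hws
      rw [hws, dist_comm] at hw
      exact lt_irrefl _ hw
    refine ⟨hws, ?_⟩
    rw [← hzc]
    symm
    exact same_component_of_dist_lt hex s ⟨z, hz⟩ ⟨w, hws⟩ (by rwa [dist_comm w z] at hw)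
  have hVne : V.Nonempty := ⟨x.1, x.2, by simp⟩
  obtain ⟨d, hdD, hdV⟩ := hD.exists_mem_open hVopen hVne
  obtain ⟨hd, hdc⟩ := hdV
  exact ⟨d, hdD, hd, hdc⟩

lemma exists_sep_triple
    (hex : ∀ s t : T, ∃ f : Set.Icc (0 : ℝ) (dist s t) → T, arcProp s t f)
    {D : Set T} (hD : Dense D) (s : T) (h3 : 3 ≤ treeDegree s) :
    ∃ a ∈ D, ∃ b ∈ D, ∃ c ∈ D,
      SepPt hex s a b ∧ SepPt hex s a c ∧ SepPt hex s b c := by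
  have h3' : 3 ≤ Cardinal.mk (ConnectedComponents {x : T // x ≠ s}) := h3
  have hne : Nonempty (ConnectedComponents {x : T // x ≠ s}) := by
    rw [← Cardinal.mk_ne_zero_iff]
    intro h0
    rw [h0] at h3'
    exact absurd h3' (by norm_num)
  obtain ⟨c1⟩ := hne
  obtain ⟨c2, hc21, -⟩ := Cardinal.three_le h3' c1 c1
  obtain ⟨c3, hc31, hc32⟩ := Cardinal.three_le h3' c1 c2
  obtain ⟨a, haD, ha, hac⟩ := exists_dense_in_component hex s hD c1
  obtain ⟨b, hbD, hb, hbc⟩ := exists_dense_in_component hex s hD c2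
  obtain ⟨c, hcD, hc, hcc⟩ := exists_dense_in_component hex s hD c3
  have sep : ∀ (u v : T) (hu : u ≠ s) (hv : v ≠ s),
      ((⟨u, hu⟩ : {z : T // z ≠ s}) : ConnectedComponents {z : T // z ≠ s}) ≠
        ((⟨v, hv⟩ : {z : T // z ≠ s}) : ConnectedComponents {z : T // z ≠ s}) →
      SepPt hex s u v := by
    intro u v hu hv hne
    refine ⟨hu, hv, ?_⟩
    by_contra hcon
    push_neg at hcon
    exact hne (same_component_of_arc_avoids hex s ⟨u, hu⟩ ⟨v, hv⟩ hcon)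
  refine ⟨a, haD, b, hbD, c, hcD, ?_, ?_, ?_⟩
  · exact sep a b ha hb (by rw [hac, hbc]; exact hc21.symm)
  · exact sep a c ha hc (by rw [hac, hcc]; exact hc31.symm)
  · exact sep b c hb hc (by rw [hbc, hcc]; exact hc32.symm)

/-- A point on the arc from `ρ` to `x` at distance `max 0 (dist ρ x - δ)` from `ρ`. -/
lemma exists_point_between
    (hex : ∀ s t : T, ∃ f : Set.Icc (0 : ℝ) (dist s t) → T, arcProp s t f)
    (ρ x : T) {δ : ℝ} (hδ : 0 ≤ δ) :
    ∃ z : T, dist ρ z = max 0 (dist ρ x - δ) ∧ dist z x ≤ δ := by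
  have hm : max 0 (dist ρ x - δ) ∈ Set.Icc (0 : ℝ) (dist ρ x) :=
    ⟨le_max_left _ _, max_le dist_nonneg (by linarith)⟩
  refine ⟨arcF hex ρ x ⟨_, hm⟩, arcF_dist_left hex ρ x _, ?_⟩
  rw [arcF_dist_right hex ρ x]
  have := le_max_right (0 : ℝ) (dist ρ x - δ)
  simp only
  linarith

lemma compact_closedBall_extend [LocallyCompactSpace T]
    (hex : ∀ s t : T, ∃ f : Set.Icc (0 : ℝ) (dist s t) → T, arcProp s t f)
    (ρ : T) (R : ℝ) (hR : 0 ≤ R) (hc : IsCompact (closedBall ρ R)) :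
    ∃ ε > 0, IsCompact (closedBall ρ (R + ε)) := by
  have hrad : ∀ x : T, ∃ r : ℝ, 0 < r ∧ IsCompact (closedBall x r) := by
    intro x
    obtain ⟨K, hK, hKn⟩ := exists_compact_mem_nhds x
    obtain ⟨r, hr, hsub⟩ := Metric.nhds_basis_closedBall.mem_iff.1 hKn
    exact ⟨r, hr, hK.of_isClosed_subset isClosed_closedBall hsub⟩
  choose r hrpos hrc using hrad
  have hcover : closedBall ρ R ⊆ ⋃ x ∈ closedBall ρ R, ball x (r x / 2) := by
    intro x hx
    exact mem_iUnion₂.2 ⟨x, hx, mem_ball_self (by linarith [hrpos x])⟩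
  obtain ⟨t, hts, htf, htc⟩ :=
    hc.elim_finite_subcover_image (fun x _ => isOpen_ball) hcover
  have hρ : ρ ∈ closedBall ρ R := mem_closedBall_self hR
  have htne : t.Nonempty := by
    obtain ⟨x, hx, -⟩ := mem_iUnion₂.1 (htc hρ)
    exact ⟨x, hx⟩
  have htne' : htf.toFinset.Nonempty := by
    rwa [Set.Finite.toFinset_nonempty]
  set ε := htf.toFinset.inf' htne' (fun x => r x / 2) with hε
  have hεpos : 0 < ε := by
    rw [hε, Finset.lt_inf'_iff]
    intro i _
    linarith [hrpos i]
  refine ⟨ε, hεpos, ?_⟩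
  have hsub : closedBall ρ (R + ε) ⊆ ⋃ x ∈ t, closedBall x (r x) := by
    intro y hy
    rw [mem_closedBall, dist_comm] at hy
    obtain ⟨z, hz1, hz2⟩ := exists_point_between hex ρ y (le_of_lt hεpos)
    have hzball : z ∈ closedBall ρ R := by
      rw [mem_closedBall, dist_comm, hz1]
      exact max_le hR (by linarith)
    obtain ⟨x, hxt, hzx⟩ := mem_iUnion₂.1 (htc hzball)
    rw [mem_ball] at hzx
    have hεx : ε ≤ r x / 2 := by
      rw [hε]
      exact Finset.inf'_le _ (htf.mem_toFinset.2 hxt)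
    refine mem_iUnion₂.2 ⟨x, hxt, ?_⟩
    rw [mem_closedBall]
    calc dist y x ≤ dist y z + dist z x := dist_triangle _ _ _
      _ ≤ ε + r x / 2 := by
          have h1 : dist y z ≤ ε := by rw [dist_comm]; exact hz2
          have h2 : dist z x ≤ r x / 2 := le_of_lt hzx
          linarith
      _ ≤ r x / 2 + r x / 2 := by linarith
      _ = r x := by ring
  exact ((htf.isCompact_biUnion (fun x _ => hrc x)).of_isClosed_subset
    isClosed_closedBall hsub)

lemma properSpace_of_tree [CompleteSpace T] [LocallyCompactSpace T]
    (hex : ∀ s t : T, ∃ f : Set.Icc (0 : ℝ) (dist s t) → T, arcProp s t f)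
    (ρ : T) : ProperSpace T := by
  set S := {rr : ℝ | 0 ≤ rr ∧ IsCompact (closedBall ρ rr)} with hS
  have h0 : (0 : ℝ) ∈ S := ⟨le_refl _, by
    rw [closedBall_zero]; exact isCompact_singleton⟩
  have hub : ¬ BddAbove S := by
    intro hbdd
    set R := sSup S with hRdef
    have hR0 : 0 ≤ R := le_csSup hbdd h0
    have hRS : IsCompact (closedBall ρ R) := by
      apply TotallyBounded.isCompact_of_isClosed _ isClosed_closedBall
      rw [Metric.totallyBounded_iff]
      intro ε hε
      obtain ⟨rr, hrS, hrlt⟩ := exists_lt_of_lt_csSup ⟨0, h0⟩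
        (show R - ε / 2 < R by linarith)
      have hrR : rr ≤ R := le_csSup hbdd hrS
      have htb := hrS.2.totallyBounded
      rw [Metric.totallyBounded_iff] at htb
      obtain ⟨t, htf, htc⟩ := htb (ε / 2) (by linarith)
      refine ⟨t, htf, ?_⟩
      intro y hy
      rw [mem_closedBall, dist_comm] at hy
      obtain ⟨z, hz1, hz2⟩ := exists_point_between hex ρ y (δ := R - rr) (by linarith)
      have hzr : z ∈ closedBall ρ rr := by
        rw [mem_closedBall, dist_comm, hz1]
        exact max_le hrS.1 (by linarith)
      obtain ⟨x, hxt, hzx⟩ := mem_iUnion₂.1 (htc hzr)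
      rw [mem_ball] at hzx
      refine mem_iUnion₂.2 ⟨x, hxt, ?_⟩
      rw [mem_ball]
      calc dist y x ≤ dist y z + dist z x := dist_triangle _ _ _
        _ < (R - rr) + ε / 2 := by
            have h1 : dist y z ≤ R - rr := by rw [dist_comm]; exact hz2
            have h2 : dist z x < ε / 2 := hzx
            linarith
        _ < ε := by linarith
    obtain ⟨ε, hεpos, hcomp⟩ := compact_closedBall_extend hex ρ R hR0 hRS
    have hmem : R + ε ∈ S := ⟨by linarith, hcomp⟩
    have := le_csSup hbdd hmem
    linarith
  rw [not_bddAbove_iff] at hub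
  apply ProperSpace.of_isCompact_closedBall_of_le 0
  intro x rr _
  obtain ⟨r', hr'S, hlt⟩ := hub (rr + dist x ρ)
  apply hr'S.2.of_isClosed_subset isClosed_closedBall
  intro y hy
  rw [mem_closedBall] at hy ⊢
  calc dist y ρ ≤ dist y x + dist x ρ := dist_triangle _ _ _
    _ ≤ rr + dist x ρ := by linarith
    _ ≤ r' := le_of_lt hlt

end Aux

/-- The set of branching points of a complete, locally compact rooted real tree is at most
countable. -/
theorem branchPoints_countable (T : Type*) [MetricSpace T] [CompleteSpace T]
    [LocallyCompactSpace T] (ρ : T) (hT : IsRealTree T) :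
    (branchPoints ρ).Countable := by
  have hex : ∀ s t : T, ∃ f : Set.Icc (0 : ℝ) (dist s t) → T, arcProp s t f :=
    fun s t => (hT.1 s t).exists
  haveI : ProperSpace T := properSpace_of_tree hex ρ
  obtain ⟨D, Dcnt, Ddense⟩ := TopologicalSpace.exists_countable_dense T
  have key : ∀ s : branchPoints ρ, ∃ a ∈ D, ∃ b ∈ D, ∃ c ∈ D,
      SepPt hex s.1 a b ∧ SepPt hex s.1 a c ∧ SepPt hex s.1 b c :=
    fun s => exists_sep_triple hex Ddense s.1 s.2.2
  choose a ha b hb c hc hab hac hbc using key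
  haveI : Countable D := Dcnt.to_subtype
  have hinj : Function.Injective
      (fun s : branchPoints ρ => ((⟨a s, ha s⟩, ⟨b s, hb s⟩, ⟨c s, hc s⟩) : D × D × D)) := by
    intro s1 s2 h
    simp only [Prod.mk.injEq, Subtype.mk.injEq] at h
    obtain ⟨e1, e2, e3⟩ := h
    have h1 := hab s2
    have h2 := hac s2
    have h3 := hbc s2
    rw [← e1, ← e2] at h1
    rw [← e1, ← e3] at h2
    rw [← e2, ← e3] at h3
    exact Subtype.ext (eq_of_sepPt_three (hab s1) (hac s1) (hbc s1) h1 h2 h3)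
  rw [← Set.countable_coe_iff]
  exact hinj.countable
end

section
/- Let (T,d,ρ) be a complete, locally compact rooted real tree. Then Lf(T) is a Borel subset of T, and there exists a unique Borel measure ℓ_T on T (the length measure) such that ℓ_T(Lf(T)) = 0 and ℓ_T([[s,s']]) = d(s,s') for all s, s' ∈ Sk(T). -/
/-- The set of leaves of a rooted real tree: points distinct from the root whose complement
is connected (degree one). -/
def treeLeaves {T : Type*} [MetricSpace T] (ρ : T) : Set T :=
  {s : T | s ≠ ρ ∧ treeDegree s = 1}

/-- The (internal) skeleton of a rooted real tree: the complement of the set of leaves. -/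
def treeSkeleton {T : Type*} [MetricSpace T] (ρ : T) : Set T :=
  Set.univ \ treeLeaves ρ

/-- The arc `[[s,t]]` between two points of a real tree: the image of the isometric
parametrisation joining `s` to `t`. -/
def treeArc {T : Type*} [MetricSpace T] (s t : T) : Set T :=
  {x : T | ∃ f : Set.Icc (0 : ℝ) (dist s t) → T, arcProp s t f ∧ x ∈ Set.range f}

open Set MeasureTheory Topology

namespace RealTreeAux

variable {T : Type*} [MetricSpace T]

noncomputable def geo (hT : IsRealTree T) (s t : T) : Set.Icc (0 : ℝ) (dist s t) → T :=
  (hT.1 s t).exists.choose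

lemma geo_spec (hT : IsRealTree T) (s t : T) : arcProp s t (geo hT s t) :=
  (hT.1 s t).exists.choose_spec

lemma geo_isometry (hT : IsRealTree T) (s t : T) : Isometry (geo hT s t) :=
  (geo_spec hT s t).1

lemma geo_zero (hT : IsRealTree T) (s t : T) :
    geo hT s t ⟨0, Set.left_mem_Icc.2 dist_nonneg⟩ = s := (geo_spec hT s t).2.1

lemma geo_last (hT : IsRealTree T) (s t : T) :
    geo hT s t ⟨dist s t, Set.right_mem_Icc.2 dist_nonneg⟩ = t := (geo_spec hT s t).2.2

lemma geo_unique (hT : IsRealTree T) {s t : T} {f : Set.Icc (0 : ℝ) (dist s t) → T}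
    (hf : arcProp s t f) : f = geo hT s t :=
  (hT.1 s t).unique hf (geo_spec hT s t)

lemma treeArc_eq_range (hT : IsRealTree T) (s t : T) :
    treeArc s t = Set.range (geo hT s t) := by
  ext x
  constructor
  · rintro ⟨f, hf, hx⟩
    rwa [geo_unique hT hf] at hx
  · intro hx
    exact ⟨geo hT s t, geo_spec hT s t, hx⟩

lemma dist_geo (hT : IsRealTree T) (s t : T) (a b : Set.Icc (0 : ℝ) (dist s t)) :
    dist (geo hT s t a) (geo hT s t b) = |a.1 - b.1| := by
  rw [(geo_isometry hT s t).dist_eq, Subtype.dist_eq, Real.dist_eq]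

lemma geo_eq_left (hT : IsRealTree T) {s t : T} (a : Set.Icc (0 : ℝ) (dist s t))
    (ha : a.1 = 0) : geo hT s t a = s := by
  have : a = ⟨0, Set.left_mem_Icc.2 dist_nonneg⟩ := Subtype.ext ha
  rw [this]; exact geo_zero hT s t

lemma geo_eq_right (hT : IsRealTree T) {s t : T} (a : Set.Icc (0 : ℝ) (dist s t))
    (ha : a.1 = dist s t) : geo hT s t a = t := by
  have : a = ⟨dist s t, Set.right_mem_Icc.2 dist_nonneg⟩ := Subtype.ext ha
  rw [this]; exact geo_last hT s t

lemma dist_geo_left (hT : IsRealTree T) (s t : T) (a : Set.Icc (0 : ℝ) (dist s t)) :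
    dist s (geo hT s t a) = a.1 := by
  have h := dist_geo hT s t ⟨0, Set.left_mem_Icc.2 dist_nonneg⟩ a
  rw [geo_zero] at h
  rw [h]
  show |(0:ℝ) - a.1| = a.1
  rw [zero_sub, abs_neg, abs_of_nonneg a.2.1]

lemma dist_geo_right (hT : IsRealTree T) (s t : T) (a : Set.Icc (0 : ℝ) (dist s t)) :
    dist (geo hT s t a) t = dist s t - a.1 := by
  have h := dist_geo hT s t a ⟨dist s t, Set.right_mem_Icc.2 dist_nonneg⟩
  rw [geo_last] at h
  rw [h]
  show |a.1 - dist s t| = dist s t - a.1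
  rw [abs_sub_comm, abs_of_nonneg (by linarith [a.2.2])]

/-- The fundamental characterization of arc membership. -/
lemma mem_treeArc_iff (hT : IsRealTree T) {s t p : T} :
    p ∈ treeArc s t ↔ dist s p + dist p t = dist s t := by
  rw [treeArc_eq_range hT]
  constructor
  · rintro ⟨a, rfl⟩
    rw [dist_geo_left, dist_geo_right]
    ring
  · intro hp
    set d1 := dist s p with hd1
    set d2 := dist p t with hd2
    have hd1n : (0:ℝ) ≤ d1 := dist_nonneg
    have hd2n : (0:ℝ) ≤ d2 := dist_nonneg
    have key : ∀ (a : Set.Icc (0:ℝ) (dist s p)) (b : Set.Icc (0:ℝ) (dist p t)),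
        dist (geo hT s p a) (geo hT p t b) = (d1 - a.1) + b.1 := by
      intro a b
      set u := geo hT s p a with hu
      set v := geo hT p t b with hv
      have h1 : dist s u = a.1 := dist_geo_left hT s p _
      have h2 : dist u p = d1 - a.1 := dist_geo_right hT s p _
      have h3 : dist p v = b.1 := dist_geo_left hT p t _
      have h4 : dist v t = d2 - b.1 := dist_geo_right hT p t _
      have hub : dist u v ≤ (d1 - a.1) + b.1 := by
        calc dist u v ≤ dist u p + dist p v := dist_triangle _ _ _
        _ = (d1 - a.1) + b.1 := by rw [h2, h3]
      have hlb := dist_triangle4 s u v t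
      rw [h1, h4] at hlb
      have : (d1 - a.1) + b.1 ≤ dist u v := by linarith
      linarith
    have hb : ∀ x : Set.Icc (0 : ℝ) (dist s t), ¬ x.1 ≤ d1 →
        x.1 - d1 ∈ Set.Icc (0:ℝ) (dist p t) := by
      intro x hx
      push_neg at hx
      exact ⟨by linarith, by linarith [x.2.2]⟩
    have hax : ∀ x : Set.Icc (0 : ℝ) (dist s t), x.1 ≤ d1 →
        x.1 ∈ Set.Icc (0:ℝ) (dist s p) := fun x hx => ⟨x.2.1, hx⟩
    set f : Set.Icc (0 : ℝ) (dist s t) → T := fun x =>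
      if hx : x.1 ≤ d1 then geo hT s p ⟨x.1, hax x hx⟩
      else geo hT p t ⟨x.1 - d1, hb x hx⟩ with hf
    have hiso : Isometry f := by
      apply Isometry.of_dist_eq
      intro x y
      rw [Subtype.dist_eq, Real.dist_eq]
      by_cases hx : x.1 ≤ d1 <;> by_cases hy : y.1 ≤ d1
      · simp only [hf, dif_pos hx, dif_pos hy]
        rw [dist_geo]
      · simp only [hf, dif_pos hx, dif_neg hy]
        rw [key]
        push_neg at hy
        show d1 - x.1 + (y.1 - d1) = |x.1 - y.1|
        rw [abs_of_nonpos (by linarith)]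
        ring
      · simp only [hf, dif_neg hx, dif_pos hy]
        rw [dist_comm, key]
        push_neg at hx
        show d1 - y.1 + (x.1 - d1) = |x.1 - y.1|
        rw [abs_of_nonneg (by linarith)]
        ring
      · simp only [hf, dif_neg hx, dif_neg hy]
        rw [dist_geo]
        simp only [Real.dist_eq]
        congr 1
        ring
    have hf0 : f ⟨0, Set.left_mem_Icc.2 dist_nonneg⟩ = s := by
      simp only [hf, dif_pos hd1n]
      exact geo_eq_left hT _ rfl
    have hfL : f ⟨dist s t, Set.right_mem_Icc.2 dist_nonneg⟩ = t := by
      by_cases hL : dist s t ≤ d1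
      · have hd2z : d2 = 0 := le_antisymm (by linarith) hd2n
        have hpt : p = t := by rwa [← dist_eq_zero, ← hd2]
        simp only [hf, dif_pos hL]
        exact (geo_eq_right hT _ (show dist s t = dist s p by linarith)).trans hpt
      · simp only [hf, dif_neg hL]
        exact geo_eq_right hT _ (show dist s t - d1 = dist p t by linarith)
    have harc : arcProp s t f := ⟨hiso, hf0, hfL⟩
    refine ⟨⟨d1, ⟨hd1n, by linarith⟩⟩, ?_⟩
    rw [← geo_unique hT harc]
    show f _ = p
    simp only [hf, dif_pos (le_refl d1)]
    exact geo_eq_right hT _ rfl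


section ArcAlgebra

variable {T' : Type} -- dummy

lemma left_mem_arc (hT : IsRealTree T) (s t : T) : s ∈ treeArc s t := by
  rw [mem_treeArc_iff hT]; simp

lemma right_mem_arc (hT : IsRealTree T) (s t : T) : t ∈ treeArc s t := by
  rw [mem_treeArc_iff hT]; simp

lemma arc_comm (hT : IsRealTree T) (s t : T) : treeArc s t = treeArc t s := by
  ext p
  rw [mem_treeArc_iff hT, mem_treeArc_iff hT, dist_comm s p, dist_comm p t, dist_comm s t]
  constructor <;> intro h <;> linarith

lemma mem_arc_self (hT : IsRealTree T) {s p : T} : p ∈ treeArc s s ↔ p = s := by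
  rw [mem_treeArc_iff hT, dist_comm s p, dist_self]
  constructor
  · intro h
    have : dist p s = 0 := by linarith [dist_nonneg (x := p) (y := s)]
    rwa [dist_eq_zero] at this
  · rintro rfl; simp

lemma arc_isClosed (hT : IsRealTree T) (s t : T) : IsClosed (treeArc s t) := by
  have : treeArc s t = {p : T | dist s p + dist p t = dist s t} := by
    ext p; exact mem_treeArc_iff hT
  rw [this]
  exact isClosed_eq ((continuous_const.dist continuous_id).add (continuous_id.dist continuous_const)) continuous_const

/-- If `p ∈ [[s,t]]`, then `[[s,p]] ⊆ [[s,t]]`. -/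
lemma arc_subset_left (hT : IsRealTree T) {s t p : T} (hp : p ∈ treeArc s t) : treeArc s p ⊆ treeArc s t := by
  intro q hq
  rw [mem_treeArc_iff hT] at *
  have h1 : dist q t ≤ dist q p + dist p t := dist_triangle _ _ _
  have h2 : dist s t ≤ dist s q + dist q t := dist_triangle _ _ _
  linarith

lemma arc_subset_right (hT : IsRealTree T) {s t p : T} (hp : p ∈ treeArc s t) : treeArc p t ⊆ treeArc s t := by
  rw [arc_comm hT s t, arc_comm hT p t]
  exact arc_subset_left hT (by rwa [← arc_comm hT s t])

/-- If `q ∈ [[s,p]]` and `p ∈ [[s,t]]` then `p ∈ [[q,t]]`. -/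
lemma mem_arc_trans (hT : IsRealTree T) {s t p q : T} (hp : p ∈ treeArc s t) (hq : q ∈ treeArc s p) :
    p ∈ treeArc q t := by
  rw [mem_treeArc_iff hT] at hp hq ⊢
  have h1 : dist q t ≤ dist q p + dist p t := dist_triangle _ _ _
  have h2 : dist s t ≤ dist s q + dist q t := dist_triangle _ _ _
  linarith

/-- The extended parametrisation of an arc, defined on all of `ℝ`. -/
noncomputable def geoR (hT : IsRealTree T) (s t : T) : ℝ → T :=
  fun r => geo hT s t (Set.projIcc 0 (dist s t) dist_nonneg r)

lemma geoR_continuous (hT : IsRealTree T) (s t : T) : Continuous (geoR hT s t) :=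
  (geo_isometry hT s t).continuous.comp continuous_projIcc

lemma geoR_of_mem (hT : IsRealTree T) {s t : T} {r : ℝ} (hr : r ∈ Set.Icc (0:ℝ) (dist s t)) :
    geoR hT s t r = geo hT s t ⟨r, hr⟩ := by
  rw [geoR, Set.projIcc_of_mem]

lemma geoR_mem_arc (hT : IsRealTree T) {s t : T} {r : ℝ} (hr : r ∈ Set.Icc (0:ℝ) (dist s t)) :
    geoR hT s t r ∈ treeArc s t := by
  rw [treeArc_eq_range hT, geoR_of_mem hT hr]
  exact ⟨_, rfl⟩

lemma dist_geoR_left (hT : IsRealTree T) {s t : T} {r : ℝ} (hr : r ∈ Set.Icc (0:ℝ) (dist s t)) :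
    dist s (geoR hT s t r) = r := by
  rw [geoR_of_mem hT hr]; exact dist_geo_left hT s t _

lemma dist_geoR_right (hT : IsRealTree T) {s t : T} {r : ℝ} (hr : r ∈ Set.Icc (0:ℝ) (dist s t)) :
    dist (geoR hT s t r) t = dist s t - r := by
  rw [geoR_of_mem hT hr]; exact dist_geo_right hT s t _

lemma geoR_zero (hT : IsRealTree T) (s t : T) : geoR hT s t 0 = s := by
  rw [geoR_of_mem hT (Set.left_mem_Icc.2 dist_nonneg)]
  exact geo_eq_left hT _ rfl

lemma geoR_last (hT : IsRealTree T) (s t : T) : geoR hT s t (dist s t) = t := by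
  rw [geoR_of_mem hT (Set.right_mem_Icc.2 dist_nonneg)]
  exact geo_eq_right hT _ rfl

/-- Each point of an arc is the point at parameter `dist s p`. -/
lemma geoR_param (hT : IsRealTree T) {s t p : T} (hp : p ∈ treeArc s t) :
    geoR hT s t (dist s p) = p := by
  rw [treeArc_eq_range hT] at hp
  obtain ⟨a, rfl⟩ := hp
  rw [dist_geo_left hT s t a, geoR_of_mem hT a.2]

lemma arc_eq_image_geoR (hT : IsRealTree T) (s t : T) :
    treeArc s t = geoR hT s t '' (Set.Icc 0 (dist s t)) := by
  ext p
  constructor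
  · intro hp
    exact ⟨dist s p, ⟨dist_nonneg, by
      rw [mem_treeArc_iff hT] at hp
      linarith [dist_nonneg (x := p) (y := t)]⟩, geoR_param hT hp⟩
  · rintro ⟨r, hr, rfl⟩
    exact geoR_mem_arc hT hr

/-- The distance between two points of the parametrisation. -/
lemma dist_geoR (hT : IsRealTree T) {s t : T} {a b : ℝ} (ha : a ∈ Set.Icc (0:ℝ) (dist s t))
    (hb : b ∈ Set.Icc (0:ℝ) (dist s t)) :
    dist (geoR hT s t a) (geoR hT s t b) = |a - b| := by
  rw [geoR_of_mem hT ha, geoR_of_mem hT hb, dist_geo]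

/-- Splitting an arc at one of its points. -/
lemma mem_arc_split (hT : IsRealTree T) {s t p w : T} (hp : p ∈ treeArc s t) (hw : w ∈ treeArc s t) :
    w ∈ treeArc s p ∨ w ∈ treeArc p t := by
  have L := dist s t
  have hdp : dist s p + dist p t = dist s t := (mem_treeArc_iff hT).1 hp
  have hdw : dist s w + dist w t = dist s t := (mem_treeArc_iff hT).1 hw
  have hwp : dist w p = |dist s w - dist s p| := by
    have h1 := geoR_param hT hp
    have h2 := geoR_param hT hw
    calc dist w p = dist (geoR hT s t (dist s w)) (geoR hT s t (dist s p)) := by rw [h1, h2]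
    _ = |dist s w - dist s p| := dist_geoR hT
        ⟨dist_nonneg, by linarith [dist_nonneg (x := w) (y := t)]⟩
        ⟨dist_nonneg, by linarith [dist_nonneg (x := p) (y := t)]⟩
  rcases le_or_gt (dist s w) (dist s p) with h | h
  · left
    rw [mem_treeArc_iff hT, hwp, abs_of_nonpos (by linarith)]
    ring
  · right
    rw [mem_treeArc_iff hT, dist_comm p w, hwp, abs_of_nonneg (by linarith)]
    linarith

/-- Subarcs of an arc: the arc between two parameter points is the image of the parameter
interval. -/
lemma subarc_eq (hT : IsRealTree T) {s t : T} {a b : ℝ} (h0 : 0 ≤ a) (hab : a ≤ b) (hL : b ≤ dist s t) :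
    treeArc (geoR hT s t a) (geoR hT s t b) = geoR hT s t '' (Set.Icc a b) := by
  have ha : a ∈ Set.Icc (0:ℝ) (dist s t) := ⟨h0, le_trans hab hL⟩
  have hb : b ∈ Set.Icc (0:ℝ) (dist s t) := ⟨le_trans h0 hab, hL⟩
  have hdab : dist (geoR hT s t a) (geoR hT s t b) = b - a := by
    rw [dist_geoR hT ha hb, abs_of_nonpos (by linarith), neg_sub]
  ext p
  constructor
  · intro hp
    -- p lies on the big arc
    have hsub : treeArc (geoR hT s t a) (geoR hT s t b) ⊆ treeArc s t := by
      have h1 : geoR hT s t b ∈ treeArc s t := geoR_mem_arc hT hb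
      have h2 : geoR hT s t a ∈ treeArc s (geoR hT s t b) := by
        rw [mem_treeArc_iff hT, dist_geoR_left hT ha, hdab, dist_geoR_left hT hb]
        ring
      exact le_trans (arc_subset_right hT h2) (arc_subset_left hT h1)
    have hpst : p ∈ treeArc s t := hsub hp
    refine ⟨dist s p, ⟨?_, ?_⟩, geoR_param hT hpst⟩
    · have h1 : dist s p ≥ dist s (geoR hT s t b) - dist p (geoR hT s t b) := by
        have := dist_triangle s p (geoR hT s t b)
        linarith
      have h2 : dist p (geoR hT s t b) ≤ b - a := by
        rw [mem_treeArc_iff hT, hdab] at hp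
        linarith [dist_nonneg (x := geoR hT s t a) (y := p)]
      rw [dist_geoR_left hT hb] at h1
      linarith
    · have h1 : dist s p ≤ dist s (geoR hT s t a) + dist (geoR hT s t a) p :=
        dist_triangle _ _ _
      have h2 : dist (geoR hT s t a) p ≤ b - a := by
        rw [mem_treeArc_iff hT, hdab] at hp
        linarith [dist_nonneg (x := p) (y := geoR hT s t b)]
      rw [dist_geoR_left hT ha] at h1
      linarith
  · rintro ⟨r, hr, rfl⟩
    have hrI : r ∈ Set.Icc (0:ℝ) (dist s t) := ⟨le_trans h0 hr.1, le_trans hr.2 hL⟩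
    rw [mem_treeArc_iff hT, hdab, dist_geoR hT ha hrI, dist_geoR hT hrI hb,
      abs_of_nonpos (by linarith [hr.1]), abs_of_nonpos (by linarith [hr.2])]
    ring

end ArcAlgebra

section Median

/-- The median (branch) point of three points in a real tree. -/
lemma exists_median (hT : IsRealTree T) (s t u : T) :
    ∃ m, m ∈ treeArc s t ∧ m ∈ treeArc s u ∧ m ∈ treeArc t u := by
  classical
  set L := dist s t with hL
  set A : Set ℝ := {a | a ∈ Set.Icc (0:ℝ) L ∧ geoR hT s t a ∈ treeArc s u} with hA
  have hne : A.Nonempty := ⟨0, Set.left_mem_Icc.2 dist_nonneg, by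
    rw [geoR_zero hT]; exact left_mem_arc hT s u⟩
  have hbdd : BddAbove A := ⟨L, fun a ha => ha.1.2⟩
  have hclosed : IsClosed A := by
    have : A = Set.Icc (0:ℝ) L ∩ (geoR hT s t) ⁻¹' (treeArc s u) := rfl
    rw [this]
    exact isClosed_Icc.inter ((arc_isClosed hT s u).preimage (geoR_continuous hT s t))
  set r := sSup A with hr
  have hrA : r ∈ A := hclosed.csSup_mem hne hbdd
  set m := geoR hT s t r with hm
  have hm_st : m ∈ treeArc s t := geoR_mem_arc hT hrA.1
  have hm_su : m ∈ treeArc s u := hrA.2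
  have hsm : dist s m = r := dist_geoR_left hT hrA.1
  have hsingle : ∀ p, p ∈ treeArc m t → p ∈ treeArc m u → p = m := by
    intro p h1 h2
    have hpst : p ∈ treeArc s t := arc_subset_right hT hm_st h1
    have hpsu : p ∈ treeArc s u := arc_subset_right hT hm_su h2
    have hd : dist s p = dist s m + dist m p := by
      have e1 : dist s m + dist m t = dist s t := (mem_treeArc_iff hT).1 hm_st
      have e2 : dist m p + dist p t = dist m t := (mem_treeArc_iff hT).1 h1
      have e3 : dist s p + dist p t = dist s t := (mem_treeArc_iff hT).1 hpst
      have e4 : dist s p ≤ dist s m + dist m p := dist_triangle _ _ _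
      linarith
    have hinA : dist s p ∈ A := by
      refine ⟨⟨dist_nonneg, ?_⟩, ?_⟩
      · have := (mem_treeArc_iff hT).1 hpst
        have := dist_nonneg (x := p) (y := t)
        linarith
      · rw [geoR_param hT hpst]; exact hpsu
    have hle : dist s p ≤ r := le_csSup hbdd hinA
    have : dist m p ≤ 0 := by linarith
    have : dist m p = 0 := le_antisymm this dist_nonneg
    rw [dist_comm] at this
    rwa [dist_eq_zero] at this
  refine ⟨m, hm_st, hm_su, ?_⟩
  by_cases hmt : m = t
  · rw [hmt]; exact left_mem_arc hT t u
  by_cases hmu : m = u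
  · rw [hmu]; exact right_mem_arc hT t u
  set L1 := dist t m with hL1
  set L2 := dist m u with hL2
  have hL1pos : 0 < L1 := dist_pos.2 fun h => hmt h.symm
  have hL2pos : 0 < L2 := dist_pos.2 hmu
  set Λ := L1 + L2 with hΛdef
  have hΛ : 0 < Λ := by positivity
  set F : ℝ → T := fun y => if y ≤ L1 then geoR hT t m y else geoR hT m u (y - L1) with hF
  have hFcont : Continuous F := by
    apply Continuous.if_le (geoR_continuous hT t m)
      ((geoR_continuous hT m u).comp (continuous_id.sub continuous_const))
      continuous_id continuous_const
    intro y hy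
    have hy' : y = dist t m := by simpa [hL1] using hy
    subst hy'
    show geoR hT t m (dist t m) = geoR hT m u (dist t m - dist t m)
    rw [geoR_last hT t m, sub_self, geoR_zero hT m u]
  set q : Set.Icc (0:ℝ) 1 → T := fun x => F (x.1 * Λ) with hq
  have hqcont : Continuous q :=
    hFcont.comp ((continuous_subtype_val.mul continuous_const))
  have hmul_mem : ∀ x : Set.Icc (0:ℝ) 1, x.1 * Λ ∈ Set.Icc (0:ℝ) Λ := by
    intro x
    constructor
    · exact mul_nonneg x.2.1 hΛ.le
    · calc x.1 * Λ ≤ 1 * Λ := by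
            apply mul_le_mul_of_nonneg_right x.2.2 hΛ.le
      _ = Λ := one_mul Λ
  have hq0 : q ⟨0, Set.left_mem_Icc.2 zero_le_one⟩ = t := by
    show F ((0:ℝ) * Λ) = t
    rw [zero_mul, hF]
    simp only [if_pos hL1pos.le]
    exact geoR_zero hT t m
  have hq1 : q ⟨1, Set.right_mem_Icc.2 zero_le_one⟩ = u := by
    show F ((1:ℝ) * Λ) = u
    rw [one_mul, hF]
    simp only [if_neg (by rw [hΛdef]; push_neg; linarith : ¬ Λ ≤ L1)]
    rw [show Λ - L1 = L2 by rw [hΛdef]; ring]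
    exact geoR_last hT m u
  have hqinj : Function.Injective q := by
    intro x y hxy
    have hx2 := hmul_mem x
    have hy2 := hmul_mem y
    have hval : x.1 * Λ = y.1 * Λ := by
      by_cases hx : x.1 * Λ ≤ L1 <;> by_cases hy : y.1 * Λ ≤ L1
      · have : geoR hT t m (x.1 * Λ) = geoR hT t m (y.1 * Λ) := by
          simpa only [hq, hF, if_pos hx, if_pos hy] using hxy
        have hd := dist_geoR hT (s := t) (t := m) ⟨hx2.1, hx⟩ ⟨hy2.1, hy⟩
        rw [this, dist_self] at hd
        have := abs_eq_zero.1 hd.symm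
        linarith
      · exfalso
        push_neg at hy
        have hmem : geoR hT t m (x.1 * Λ) ∈ treeArc m t := by
          rw [← arc_comm hT]
          exact geoR_mem_arc hT ⟨hx2.1, hx⟩
        have hmemu : geoR hT t m (x.1 * Λ) ∈ treeArc m u := by
          have : geoR hT t m (x.1 * Λ) = geoR hT m u (y.1 * Λ - L1) := by
            simpa only [hq, hF, if_pos hx, if_neg (not_le.2 hy)] using hxy
          rw [this]
          exact geoR_mem_arc hT ⟨by linarith, by rw [← hL2]; linarith [hy2.2]⟩
        have heq := hsingle _ hmem hmemu
        have : geoR hT m u (y.1 * Λ - L1) = m := by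
          have h' : geoR hT t m (x.1 * Λ) = geoR hT m u (y.1 * Λ - L1) := by
            simpa only [hq, hF, if_pos hx, if_neg (not_le.2 hy)] using hxy
          rw [← h', heq]
        have hdd : dist m (geoR hT m u (y.1 * Λ - L1)) = y.1 * Λ - L1 :=
          dist_geoR_left hT ⟨by linarith, by rw [← hL2]; linarith [hy2.2]⟩
        rw [this, dist_self] at hdd
        linarith
      · exfalso
        push_neg at hx
        have hmem : geoR hT t m (y.1 * Λ) ∈ treeArc m t := by
          rw [← arc_comm hT]
          exact geoR_mem_arc hT ⟨hy2.1, hy⟩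
        have hmemu : geoR hT t m (y.1 * Λ) ∈ treeArc m u := by
          have : geoR hT t m (y.1 * Λ) = geoR hT m u (x.1 * Λ - L1) := by
            simpa only [hq, hF, if_pos hy, if_neg (not_le.2 hx)] using hxy.symm
          rw [this]
          exact geoR_mem_arc hT ⟨by linarith, by rw [← hL2]; linarith [hx2.2]⟩
        have heq := hsingle _ hmem hmemu
        have h' : geoR hT t m (y.1 * Λ) = geoR hT m u (x.1 * Λ - L1) := by
          simpa only [hq, hF, if_pos hy, if_neg (not_le.2 hx)] using hxy.symm
        have : geoR hT m u (x.1 * Λ - L1) = m := by rw [← h', heq]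
        have hdd : dist m (geoR hT m u (x.1 * Λ - L1)) = x.1 * Λ - L1 :=
          dist_geoR_left hT ⟨by linarith, by rw [← hL2]; linarith [hx2.2]⟩
        rw [this, dist_self] at hdd
        linarith
      · push_neg at hx hy
        have : geoR hT m u (x.1 * Λ - L1) = geoR hT m u (y.1 * Λ - L1) := by
          simpa only [hq, hF, if_neg (not_le.2 hx), if_neg (not_le.2 hy)] using hxy
        have hd := dist_geoR hT (s := m) (t := u)
          (a := x.1 * Λ - L1) (b := y.1 * Λ - L1)
          ⟨by linarith, by rw [← hL2]; linarith [hx2.2]⟩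
          ⟨by linarith, by rw [← hL2]; linarith [hy2.2]⟩
        rw [this, dist_self] at hd
        have := abs_eq_zero.1 hd.symm
        linarith
    apply Subtype.ext
    exact mul_right_cancel₀ hΛ.ne' hval
  have hrange : Set.range q = treeArc (q ⟨0, Set.left_mem_Icc.2 zero_le_one⟩)
      (q ⟨1, Set.right_mem_Icc.2 zero_le_one⟩) := by
    rw [treeArc_eq_range hT]
    exact hT.2 q hqcont hqinj _ (geo_spec hT _ _)
  rw [hq0, hq1] at hrange
  have hmmem : m ∈ Set.range q := by
    refine ⟨⟨L1/Λ, ⟨by positivity, by rw [div_le_one hΛ]; linarith⟩⟩, ?_⟩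
    show F (L1/Λ * Λ) = m
    rw [div_mul_cancel₀ _ hΛ.ne', hF]
    simp only [if_pos (le_refl L1)]
    exact geoR_last hT t m
  rw [hrange] at hmmem
  exact hmmem

/-- `[[y,w]] ⊆ [[y,z]] ∪ [[z,w]]` for any three points. -/
lemma arc_subset_union (hT : IsRealTree T) (y w z : T) :
    treeArc y w ⊆ treeArc y z ∪ treeArc z w := by
  obtain ⟨m, hm_yw, hm_yz, hm_wz⟩ := exists_median hT y w z
  intro p hp
  rcases mem_arc_split hT hm_yw hp with h | h
  · exact Or.inl (arc_subset_left hT hm_yz h)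
  · refine Or.inr (arc_subset_right hT ?_ h)
    rwa [arc_comm hT]

end Median

section Components

lemma arc_preconnected (hT : IsRealTree T) (s t : T) : IsPreconnected (treeArc s t) := by
  rw [arc_eq_image_geoR hT]
  exact isPreconnected_Icc.image _ (geoR_continuous hT s t).continuousOn

lemma arc_avoid_open (hT : IsRealTree T) (x y : T) : IsOpen {z : T | x ∉ treeArc y z} := by
  rw [Metric.isOpen_iff]
  intro z hz
  have hzx : z ≠ x := fun h => hz (h ▸ right_mem_arc hT y z)
  refine ⟨dist z x, dist_pos.2 hzx, fun z' hz' hx => ?_⟩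
  rcases arc_subset_union hT y z' z hx with h | h
  · exact hz h
  · have : dist z x ≤ dist z z' := by
      have := (mem_treeArc_iff hT).1 h
      have := dist_nonneg (x := x) (y := z')
      linarith
    rw [Metric.mem_ball, dist_comm] at hz'
    linarith

lemma class_preconnected (hT : IsRealTree T) (x a : T) :
    IsPreconnected {z : T | x ∉ treeArc a z} := by
  have heq : {z : T | x ∉ treeArc a z} =
      ⋃₀ {S : Set T | ∃ z, x ∉ treeArc a z ∧ S = treeArc a z} := by
    ext w
    constructor
    · intro hw
      exact ⟨treeArc a w, ⟨w, hw, rfl⟩, right_mem_arc hT a w⟩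
    · rintro ⟨S, ⟨z, hz, rfl⟩, hw⟩
      exact fun hx => hz (arc_subset_left hT hw hx)
  rw [heq]
  apply isPreconnected_sUnion a
  · rintro S ⟨z, hz, rfl⟩
    exact left_mem_arc hT a z
  · rintro S ⟨z, hz, rfl⟩
    exact arc_preconnected hT a z

lemma class_subset_compl (hT : IsRealTree T) (x a : T) :
    {z : T | x ∉ treeArc a z} ⊆ {z : T | z ≠ x} := by
  intro z hz
  exact fun h => hz (h ▸ right_mem_arc hT a z)

lemma connectedComponent_eq_class (hT : IsRealTree T) (x : T) (a : {p : T // p ≠ x}) :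
    connectedComponent a = {b : {p : T // p ≠ x} | x ∉ treeArc a.1 b.1} := by
  set C : Set {p : T // p ≠ x} := Subtype.val ⁻¹' {z : T | x ∉ treeArc a.1 z} with hC
  have hrefl : ∀ b : {p : T // p ≠ x}, x ∉ treeArc b.1 b.1 := by
    intro b hx
    exact b.2 ((mem_arc_self hT).1 hx).symm
  have haC : a ∈ C := hrefl a
  have hopen : IsOpen C := (arc_avoid_open hT x a.1).preimage continuous_subtype_val
  have hpre : IsPreconnected C := by
    have himg : Subtype.val '' C = {z : T | x ∉ treeArc a.1 z} := by
      rw [hC, Set.image_preimage_eq_inter_range, Subtype.range_coe_subtype]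
      exact Set.inter_eq_self_of_subset_left (class_subset_compl hT x a.1)
    have hp := class_preconnected hT x a.1
    rw [← himg] at hp
    exact Topology.IsInducing.subtypeVal.isPreconnected_image.mp hp
  have hclosed : IsClosed C := by
    rw [← isOpen_compl_iff]
    have hcompl : Cᶜ = ⋃ (b : {p : T // p ≠ x}) (_ : x ∈ treeArc a.1 b.1),
        Subtype.val ⁻¹' {z : T | x ∉ treeArc b.1 z} := by
      ext c
      simp only [Set.mem_compl_iff, Set.mem_iUnion, Set.mem_preimage, Set.mem_setOf_eq, hC,
        not_not]
      constructor
      · intro hc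
        exact ⟨c, hc, hrefl c⟩
      · rintro ⟨b, hb, hbc⟩
        by_contra hac
        have : x ∉ treeArc c.1 b.1 := by
          rw [arc_comm hT]; exact hbc
        have : x ∉ treeArc a.1 b.1 := fun hx => by
          rcases arc_subset_union hT a.1 b.1 c.1 hx with h | h
          · exact hac h
          · exact this h
        exact this hb
    rw [hcompl]
    exact isOpen_iUnion fun b => isOpen_iUnion fun _ =>
      (arc_avoid_open hT x b.1).preimage continuous_subtype_val
  apply subset_antisymm
  · exact IsClopen.connectedComponent_subset ⟨hclosed, hopen⟩ haC
  · exact hpre.subset_connectedComponent haC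

lemma degree_eq_one_iff (hT : IsRealTree T) (x : T) (hne : Nonempty {p : T // p ≠ x}) :
    treeDegree x = 1 ↔ ∀ a b : T, a ≠ x → b ≠ x → x ∉ treeArc a b := by
  rw [treeDegree, Cardinal.eq_one_iff_unique]
  constructor
  · rintro ⟨hsub, -⟩ a b ha hb hx
    have h1 : ConnectedComponents.mk (⟨a, ha⟩ : {p : T // p ≠ x}) =
        ConnectedComponents.mk ⟨b, hb⟩ := Subsingleton.elim _ _
    rw [ConnectedComponents.coe_eq_coe, connectedComponent_eq_class hT,
      connectedComponent_eq_class hT] at h1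
    have hb_in : (⟨b, hb⟩ : {p : T // p ≠ x}) ∈
        {c : {p : T // p ≠ x} | x ∉ treeArc b c.1} := by
      intro hxx
      exact hb (((mem_arc_self hT).1 hxx).symm ▸ rfl)
    rw [← h1] at hb_in
    exact hb_in hx
  · intro h
    constructor
    · constructor
      intro A B
      obtain ⟨a, rfl⟩ := ConnectedComponents.surjective_coe A
      obtain ⟨b, rfl⟩ := ConnectedComponents.surjective_coe B
      rw [ConnectedComponents.coe_eq_coe, connectedComponent_eq_class hT,
        connectedComponent_eq_class hT]
      ext c
      simp only [Set.mem_setOf_eq]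
      constructor
      · intro _; exact h b.1 c.1 b.2 c.2
      · intro _; exact h a.1 c.1 a.2 c.2
    · exact hne.map ConnectedComponents.mk

lemma not_leaf_aux (hT : IsRealTree T) (ρ x : T) (h : ∀ t, x ∈ treeArc ρ t → x = t) :
    ∀ a b : T, a ≠ x → b ≠ x → x ∉ treeArc a b := by
  intro a b ha hb hx
  obtain ⟨m, hm_ra, hm_rb, hm_ab⟩ := exists_median hT ρ a b
  rcases mem_arc_split hT hm_ab hx with h1 | h1
  · have : x ∈ treeArc ρ a := by
      apply arc_subset_right hT hm_ra
      rwa [arc_comm hT]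
    exact ha.symm (h a this)
  · have : x ∈ treeArc ρ b := arc_subset_right hT hm_rb h1
    exact hb.symm (h b this)

lemma mem_leaves_iff (hT : IsRealTree T) (ρ x : T) :
    x ∈ treeLeaves ρ ↔ x ≠ ρ ∧ ∀ t, x ∈ treeArc ρ t → x = t := by
  constructor
  · rintro ⟨hxρ, hdeg⟩
    refine ⟨hxρ, fun t hxt => ?_⟩
    by_cases hts : t = x
    · exact hts.symm
    · exfalso
      exact (degree_eq_one_iff hT x ⟨⟨ρ, hxρ.symm⟩⟩).1 hdeg ρ t hxρ.symm hts hxt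
  · rintro ⟨hxρ, h⟩
    exact ⟨hxρ, (degree_eq_one_iff hT x ⟨⟨ρ, hxρ.symm⟩⟩).2 (not_leaf_aux hT ρ x h)⟩

lemma mem_skeleton_iff (hT : IsRealTree T) (ρ x : T) :
    x ∈ treeSkeleton ρ ↔ x = ρ ∨ ∃ t, x ∈ treeArc ρ t ∧ x ≠ t := by
  rw [treeSkeleton, Set.mem_diff]
  simp only [Set.mem_univ, true_and]
  rw [mem_leaves_iff hT]
  push_neg
  constructor
  · intro h
    by_cases hxρ : x = ρ
    · exact Or.inl hxρ
    · exact Or.inr (h hxρ)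
  · rintro (h | h)
    · intro hc; exact absurd h hc
    · intro _; exact h

lemma root_mem_skeleton (ρ : T) : ρ ∈ treeSkeleton ρ := by
  refine ⟨trivial, fun h => h.1 rfl⟩

lemma arc_subset_skeleton (hT : IsRealTree T) (ρ : T) {a b : T}
    (ha : a ∈ treeSkeleton ρ) (hb : b ∈ treeSkeleton ρ) :
    treeArc a b ⊆ treeSkeleton ρ := by
  intro p hp
  by_contra hps
  have hpl : p ∈ treeLeaves ρ := by
    by_contra hpl
    exact hps ⟨trivial, hpl⟩
  obtain ⟨hpρ, hall⟩ := (mem_leaves_iff hT ρ p).1 hpl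
  have hnot := not_leaf_aux hT ρ p hall
  by_cases hap : a = p
  · exact (hap ▸ ha).2 hpl
  by_cases hbp : b = p
  · exact (hbp ▸ hb).2 hpl
  exact hnot a b hap hbp hp

end Components

section Proper

variable [CompleteSpace T] [LocallyCompactSpace T]

lemma isCompact_closedBall_root (hT : IsRealTree T) (ρ : T) (r : ℝ) :
    IsCompact (Metric.closedBall ρ r) := by
  set s : Set ℝ := {r | IsCompact (Metric.closedBall ρ r)} with hs
  have hdown : ∀ r' r'' : ℝ, r' ≤ r'' → r'' ∈ s → r' ∈ s := fun r' r'' h hc =>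
    hc.of_isClosed_subset Metric.isClosed_closedBall (Metric.closedBall_subset_closedBall h)
  have hloc : ∀ y : T, ∃ ε > (0:ℝ), IsCompact (Metric.closedBall y ε) := by
    intro y
    obtain ⟨K, hK, hKn⟩ := exists_compact_mem_nhds y
    obtain ⟨ε, hε, hb⟩ := Metric.mem_nhds_iff.1 hKn
    exact ⟨ε/2, by linarith, hK.of_isClosed_subset Metric.isClosed_closedBall
      (le_trans (Metric.closedBall_subset_ball (by linarith)) hb)⟩
  obtain ⟨ε₀, hε₀, hε₀s⟩ := hloc ρ
  have hmid : ∀ (x : T) (c : ℝ), 0 ≤ c → c ≤ dist ρ x →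
      ∃ y, dist ρ y = c ∧ dist y x = dist ρ x - c := fun x c h1 h2 =>
    ⟨geoR hT ρ x c, dist_geoR_left hT ⟨h1, h2⟩, dist_geoR_right hT ⟨h1, h2⟩⟩
  by_contra hr
  have hbdd : BddAbove s := by
    refine ⟨r, fun r' hr' => ?_⟩
    by_contra hlt
    push_neg at hlt
    exact hr (hdown r r' hlt.le hr')
  have hsne : s.Nonempty := ⟨ε₀, hε₀s⟩
  set R := sSup s with hR
  have hRpos : 0 < R := lt_of_lt_of_le hε₀ (le_csSup hbdd hε₀s)
  have hlt : ∀ r' : ℝ, r' < R → r' ∈ s := by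
    intro r' h
    obtain ⟨r'', hr''s, hr''⟩ := exists_lt_of_lt_csSup hsne h
    exact hdown r' r'' hr''.le hr''s
  have hRs : R ∈ s := by
    show IsCompact _
    rw [isCompact_iff_totallyBounded_isComplete]
    constructor
    · rw [Metric.totallyBounded_iff]
      intro ε' hε'
      set c := max 0 (R - ε'/3) with hc
      have hcR : R - ε'/3 ≤ c := le_max_right _ _
      have hcs : c ∈ s := by
        by_cases h1 : R - ε'/3 ≤ 0
        · rw [hc, max_eq_left h1]
          exact hdown 0 ε₀ hε₀.le hε₀s
        · push_neg at h1
          rw [hc, max_eq_right h1.le]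
          exact hlt _ (by linarith)
      have htb : TotallyBounded (Metric.closedBall ρ c) := hcs.totallyBounded
      rw [Metric.totallyBounded_iff] at htb
      obtain ⟨N, hNfin, hNcov⟩ := htb (ε'/3) (by linarith)
      refine ⟨N, hNfin, fun x hx => ?_⟩
      rw [Metric.mem_closedBall] at hx
      have hx' : ∃ y, dist y ρ ≤ c ∧ dist y x ≤ ε'*2/3 := by
        rcases le_or_gt (dist ρ x) c with h | h
        · exact ⟨x, by rwa [dist_comm], by linarith [dist_self x, dist_nonneg (x:=x) (y:=x)]⟩
        · obtain ⟨y, hy1, hy2⟩ := hmid x c (le_max_left _ _) h.le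
          refine ⟨y, by rw [dist_comm, hy1], ?_⟩
          rw [hy2]
          have : dist ρ x ≤ R := by rwa [dist_comm]
          linarith
      obtain ⟨y, hyc, hyx⟩ := hx'
      have := hNcov hyc
      rw [Set.mem_iUnion₂] at this
      obtain ⟨n, hn, hyn⟩ := this
      rw [Set.mem_iUnion₂]
      refine ⟨n, hn, ?_⟩
      rw [Metric.mem_ball] at hyn ⊢
      have : dist x n ≤ dist x y + dist y n := dist_triangle _ _ _
      rw [dist_comm x y] at this
      linarith
    · exact Metric.isClosed_closedBall.isComplete
  have hext : ∃ δ > (0:ℝ), R + δ ∈ s := by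
    choose ε' hε'pos hε'cpt using hloc
    obtain ⟨t, _, ht_cov⟩ := hRs.elim_nhds_subcover (fun y => Metric.ball y (ε' y / 2))
      (fun y _ => Metric.ball_mem_nhds y (by linarith [hε'pos y]))
    have htne : t.Nonempty := by
      rcases Finset.eq_empty_or_nonempty t with h | h
      · exfalso
        have : ρ ∈ Metric.closedBall ρ R := Metric.mem_closedBall_self hRpos.le
        have := ht_cov this
        rw [h] at this
        simp at this
      · exact h
    set δ := t.inf' htne fun y => ε' y / 2 with hδdef
    have hδpos : 0 < δ := by
      rw [hδdef, Finset.lt_inf'_iff]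
      intro b _
      linarith [hε'pos b]
    refine ⟨δ, hδpos, ?_⟩
    have hsub : Metric.closedBall ρ (R+δ) ⊆ ⋃ y ∈ t, Metric.closedBall y (ε' y) := by
      intro x hx
      rw [Metric.mem_closedBall] at hx
      have hx' : ∃ y, y ∈ Metric.closedBall ρ R ∧ dist y x ≤ δ := by
        rcases le_or_gt (dist x ρ) R with h | h
        · exact ⟨x, Metric.mem_closedBall.2 h, by
            rw [dist_self]; exact hδpos.le⟩
        · have h' : R ≤ dist ρ x := by rw [dist_comm]; exact h.le
          obtain ⟨y, hy1, hy2⟩ := hmid x R hRpos.le h'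
          refine ⟨y, Metric.mem_closedBall.2 (by rw [dist_comm, hy1]), ?_⟩
          rw [hy2]
          have hcc : dist ρ x = dist x ρ := dist_comm ρ x
          linarith
      obtain ⟨y, hyR, hyx⟩ := hx'
      have := ht_cov hyR
      rw [Set.mem_iUnion₂] at this
      obtain ⟨n, hn, hyn⟩ := this
      rw [Set.mem_iUnion₂]
      refine ⟨n, hn, Metric.mem_closedBall.2 ?_⟩
      rw [Metric.mem_ball] at hyn
      have h1 : dist x n ≤ dist x y + dist y n := dist_triangle _ _ _
      have h2 : δ ≤ ε' n / 2 := Finset.inf'_le _ hn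
      rw [dist_comm x y] at h1
      linarith
    have hcpt : IsCompact (⋃ y ∈ t, Metric.closedBall y (ε' y)) :=
      t.finite_toSet.isCompact_biUnion fun y _ => hε'cpt y
    exact hcpt.of_isClosed_subset Metric.isClosed_closedBall hsub
  obtain ⟨δ, hδ, hRδ⟩ := hext
  have := le_csSup hbdd hRδ
  linarith

lemma exists_countable_dense_tree (hT : IsRealTree T) (ρ : T) :
    ∃ D : Set T, D.Countable ∧ ∀ x : T, ∀ ε > (0:ℝ), ∃ d ∈ D, dist x d < ε := by
  have hsep : ∀ n : ℕ, TopologicalSpace.IsSeparable (Metric.closedBall ρ n) := fun n =>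
    (isCompact_closedBall_root hT ρ n).isSeparable
  choose c hc_count hc_sub using hsep
  refine ⟨⋃ n, c n, Set.countable_iUnion hc_count, ?_⟩
  intro x ε hε
  have hx : x ∈ Metric.closedBall ρ (⌈dist x ρ⌉₊ : ℕ) :=
    Metric.mem_closedBall.2 (Nat.le_ceil _)
  have := hc_sub _ hx
  rw [Metric.mem_closure_iff] at this
  obtain ⟨d, hd, hdist⟩ := this ε hε
  exact ⟨d, Set.mem_iUnion.2 ⟨_, hd⟩, hdist⟩

end Proper

section Cover

lemma mem_arc_of_param_le (hT : IsRealTree T) {s t : T} {a b : ℝ}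
    (h0 : 0 ≤ a) (hab : a ≤ b) (hb : b ≤ dist s t) :
    geoR hT s t a ∈ treeArc s (geoR hT s t b) := by
  have h := subarc_eq hT (le_refl (0:ℝ)) (le_trans h0 hab) hb
  rw [geoR_zero hT] at h
  rw [h]
  exact ⟨a, ⟨h0, hab⟩, rfl⟩

lemma skel_approx (hT : IsRealTree T) {ρ x t t' : T}
    (hx : x ∈ treeArc ρ t) (hxt : x ≠ t) (h : dist t t' < dist x t) :
    x ∈ treeArc ρ t' ∧ x ≠ t' := by
  obtain ⟨b, hb_rt, hb_rt', hb_tt'⟩ := exists_median hT ρ t t'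
  have hbt : dist t b ≤ dist t t' := by
    have := (mem_treeArc_iff hT).1 hb_tt'
    have := dist_nonneg (x := b) (y := t')
    linarith
  have hxb : x ∈ treeArc ρ b := by
    rcases mem_arc_split hT hb_rt hx with h' | h'
    · exact h'
    · exfalso
      have h1 := (mem_treeArc_iff hT).1 h'
      have h2 : dist b t = dist t b := dist_comm b t
      have := dist_nonneg (x := b) (y := x)
      linarith
  refine ⟨arc_subset_left hT hb_rt' hxb, fun hxt' => ?_⟩
  rw [hxt'] at h
  rw [dist_comm t' t] at h
  exact lt_irrefl _ h

variable [CompleteSpace T] [LocallyCompactSpace T]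

lemma skeleton_eq_iUnion (hT : IsRealTree T) (ρ : T) :
    ∃ x : ℕ → T, (∀ n, x n ∈ treeSkeleton ρ) ∧
      treeSkeleton ρ = ⋃ n, treeArc ρ (x n) := by
  classical
  obtain ⟨D, hDc, hDd⟩ := exists_countable_dense_tree hT ρ
  set g : T × ℚ → T := fun p =>
    if h : 0 ≤ (p.2:ℝ) ∧ (p.2:ℝ) < dist ρ p.1 then geoR hT ρ p.1 p.2 else ρ with hg
  have hg_skel : ∀ p : T × ℚ, g p ∈ treeSkeleton ρ := by
    intro p
    rw [hg]
    by_cases h : 0 ≤ (p.2:ℝ) ∧ (p.2:ℝ) < dist ρ p.1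
    · simp only [dif_pos h]
      rw [mem_skeleton_iff hT]
      refine Or.inr ⟨p.1, geoR_mem_arc hT ⟨h.1, h.2.le⟩, fun he => ?_⟩
      have := dist_geoR_left hT (s := ρ) (t := p.1) (r := (p.2:ℝ)) ⟨h.1, h.2.le⟩
      rw [he] at this
      linarith [h.2]
    · simp only [dif_neg h]
      exact root_mem_skeleton ρ
  set E : Set T := insert ρ (g '' (D ×ˢ (Set.univ : Set ℚ))) with hE
  have hEc : E.Countable :=
    (Set.Countable.image (hDc.prod Set.countable_univ) g).insert ρ
  have hEne : E.Nonempty := ⟨ρ, Set.mem_insert _ _⟩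
  obtain ⟨f, hf⟩ := hEc.exists_eq_range hEne
  have hf_skel : ∀ n, f n ∈ treeSkeleton ρ := by
    intro n
    have : f n ∈ E := by rw [hf]; exact ⟨n, rfl⟩
    rcases this with h | ⟨p, -, hgp⟩
    · rw [h]; exact root_mem_skeleton ρ
    · rw [← hgp]; exact hg_skel p
  refine ⟨f, hf_skel, subset_antisymm ?_ ?_⟩
  · intro x hx
    rw [mem_skeleton_iff hT] at hx
    have hexE : ∃ y ∈ E, x ∈ treeArc ρ y := by
      rcases hx with h | ⟨t, hxt, hxt_ne⟩
      · exact ⟨ρ, Set.mem_insert _ _, by rw [h]; exact left_mem_arc hT ρ ρ⟩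
      · have hdxt : 0 < dist x t := dist_pos.2 hxt_ne
        obtain ⟨t', hDt', hdt'⟩ := hDd t (dist x t) hdxt
        obtain ⟨hx', hx'ne⟩ := skel_approx hT hxt hxt_ne hdt'
        have hlt : dist ρ x < dist ρ t' := by
          have := (mem_treeArc_iff hT).1 hx'
          have := dist_pos.2 hx'ne
          linarith
        obtain ⟨q, hq1, hq2⟩ := exists_rat_btwn hlt
        have hcond : 0 ≤ (q:ℝ) ∧ (q:ℝ) < dist ρ t' :=
          ⟨le_trans dist_nonneg hq1.le, hq2⟩
        refine ⟨g (t', q), Set.mem_insert_of_mem _ ⟨(t', q), ⟨hDt', trivial⟩, rfl⟩, ?_⟩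
        rw [hg]
        simp only [dif_pos hcond]
        have := mem_arc_of_param_le hT (s := ρ) (t := t')
          (a := dist ρ x) (b := (q:ℝ)) dist_nonneg hq1.le hcond.2.le
        rwa [geoR_param hT hx'] at this
    obtain ⟨y, hyE, hxy⟩ := hexE
    rw [hf] at hyE
    obtain ⟨n, rfl⟩ := hyE
    exact Set.mem_iUnion.2 ⟨n, hxy⟩
  · intro x hx
    obtain ⟨n, hn⟩ := Set.mem_iUnion.1 hx
    exact arc_subset_skeleton hT ρ (root_mem_skeleton ρ) (hf_skel n) hn

lemma measurableSet_skeleton [MeasurableSpace T] [BorelSpace T]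
    (hT : IsRealTree T) (ρ : T) : MeasurableSet (treeSkeleton ρ) := by
  obtain ⟨f, -, hcov⟩ := skeleton_eq_iUnion hT ρ
  rw [hcov]
  exact MeasurableSet.iUnion fun n => (arc_isClosed hT ρ (f n)).measurableSet

lemma measurableSet_leaves [MeasurableSpace T] [BorelSpace T]
    (hT : IsRealTree T) (ρ : T) : MeasurableSet (treeLeaves ρ) := by
  have h : treeLeaves ρ = (treeSkeleton ρ)ᶜ := by
    rw [treeSkeleton]
    ext p
    simp [Set.mem_diff]
  rw [h]
  exact (measurableSet_skeleton hT ρ).compl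

end Cover

section Existence

variable [MeasurableSpace T] [BorelSpace T]

lemma hausdorff_arc (hT : IsRealTree T) (s t : T) :
    μH[1] (treeArc s t) = ENNReal.ofReal (dist s t) := by
  rw [treeArc_eq_range hT, ← Set.image_univ,
    Isometry.hausdorffMeasure_image (geo_isometry hT s t) (Or.inl zero_le_one)]
  have h2 := Isometry.hausdorffMeasure_image
    (isometry_subtype_coe (s := Set.Icc (0:ℝ) (dist s t))) (Or.inl zero_le_one) Set.univ
  rw [Set.image_univ, Subtype.range_coe] at h2
  rw [← h2, MeasureTheory.hausdorffMeasure_real, Real.volume_Icc, sub_zero]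

/-- The length measure of a rooted real tree. -/
noncomputable def lengthMeasure (hT : IsRealTree T) [CompleteSpace T] [LocallyCompactSpace T]
    (ρ : T) : Measure T :=
  (μH[1] : Measure T).restrict (treeSkeleton ρ)

lemma compl_skeleton (hT : IsRealTree T) (ρ : T) : (treeSkeleton ρ)ᶜ = treeLeaves ρ := by
  rw [treeSkeleton]
  ext p
  simp [Set.mem_diff]

variable [CompleteSpace T] [LocallyCompactSpace T]

lemma lengthMeasure_leaves (hT : IsRealTree T) (ρ : T) :
    lengthMeasure hT ρ (treeLeaves ρ) = 0 := by
  rw [lengthMeasure, Measure.restrict_apply (measurableSet_leaves hT ρ),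
    ← compl_skeleton hT ρ, Set.compl_inter_self]
  simp

lemma lengthMeasure_arc (hT : IsRealTree T) (ρ : T) {s t : T}
    (hs : s ∈ treeSkeleton ρ) (ht : t ∈ treeSkeleton ρ) :
    lengthMeasure hT ρ (treeArc s t) = ENNReal.ofReal (dist s t) := by
  rw [lengthMeasure, Measure.restrict_apply (arc_isClosed hT s t).measurableSet,
    Set.inter_eq_self_of_subset_left (arc_subset_skeleton hT ρ hs ht),
    hausdorff_arc hT]

end Existence

section Uniqueness

variable [MeasurableSpace T] [BorelSpace T]

lemma image_val_preimage_Iio (hT : IsRealTree T) (ρ c : T) {r : ℝ} (h0 : 0 < r)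
    (hL : r ≤ dist ρ c) :
    geo hT ρ c '' (Subtype.val ⁻¹' (Set.Iio r)) =
      treeArc ρ (geoR hT ρ c r) \ {geoR hT ρ c r} := by
  have hrI : r ∈ Set.Icc (0:ℝ) (dist ρ c) := ⟨h0.le, hL⟩
  ext p
  constructor
  · rintro ⟨x, hx, rfl⟩
    rw [Set.mem_preimage, Set.mem_Iio] at hx
    have hgx : geo hT ρ c x = geoR hT ρ c x.1 := (geoR_of_mem hT x.2).symm
    constructor
    · rw [hgx]
      exact mem_arc_of_param_le hT x.2.1 hx.le hL
    · rw [Set.mem_singleton_iff, hgx]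
      intro he
      have h1 : dist ρ (geoR hT ρ c x.1) = x.1 := dist_geoR_left hT x.2
      have h2 : dist ρ (geoR hT ρ c r) = r := dist_geoR_left hT hrI
      rw [he, h2] at h1
      linarith
  · rintro ⟨hp, hpne⟩
    rw [Set.mem_singleton_iff] at hpne
    have hc' : geoR hT ρ c r ∈ treeArc ρ c := geoR_mem_arc hT hrI
    have hpc : p ∈ treeArc ρ c := arc_subset_left hT hc' hp
    have hdp : dist ρ p ≤ r := by
      have h1 := (mem_treeArc_iff hT).1 hp
      have h2 : dist ρ (geoR hT ρ c r) = r := dist_geoR_left hT hrI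
      have := dist_nonneg (x := p) (y := geoR hT ρ c r)
      linarith
    have hdplt : dist ρ p < r := by
      rcases lt_or_eq_of_le hdp with h | h
      · exact h
      · exfalso
        apply hpne
        rw [← geoR_param hT hpc, h]
    refine ⟨⟨dist ρ p, ⟨dist_nonneg, le_trans hdp hL⟩⟩, ?_, ?_⟩
    · rw [Set.mem_preimage, Set.mem_Iio]
      exact hdplt
    · rw [← geoR_of_mem hT ⟨dist_nonneg, le_trans hdp hL⟩]
      exact geoR_param hT hpc

variable [CompleteSpace T] [LocallyCompactSpace T]

/-- Any two measures satisfying the length-measure axioms agree on Borel subsets of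
arcs from the root to skeleton points. -/
lemma measures_agree_on_arc (hT : IsRealTree T) (ρ : T) (μ ν : Measure T)
    (hμ : ∀ s ∈ treeSkeleton ρ, ∀ s' ∈ treeSkeleton ρ,
      μ (treeArc s s') = ENNReal.ofReal (dist s s'))
    (hν : ∀ s ∈ treeSkeleton ρ, ∀ s' ∈ treeSkeleton ρ,
      ν (treeArc s s') = ENNReal.ofReal (dist s s'))
    {c : T} (hc : c ∈ treeSkeleton ρ) {B : Set T} (hB : MeasurableSet B) :
    μ (B ∩ treeArc ρ c) = ν (B ∩ treeArc ρ c) := by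
  classical
  set L := dist ρ c with hLdef
  set I := Set.Icc (0:ℝ) L with hI
  haveI : CompactSpace I := isCompact_iff_compactSpace.mp isCompact_Icc
  set γ : I → T := geo hT ρ c with hγ
  have hγcont : Continuous γ := (geo_isometry hT ρ c).continuous
  have hγinj : Function.Injective γ := (geo_isometry hT ρ c).injective
  have hγemb : MeasurableEmbedding γ :=
    (hγcont.isClosedEmbedding hγinj).measurableEmbedding
  have hrange : Set.range γ = treeArc ρ c := (treeArc_eq_range hT ρ c).symm
  -- the measure of subarc pieces
  have harc_skel : ∀ p ∈ treeArc ρ c, p ∈ treeSkeleton ρ :=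
    fun p hp => arc_subset_skeleton hT ρ (root_mem_skeleton ρ) hc hp
  have hμarc : μ (treeArc ρ c) = ENNReal.ofReal L :=
    hμ ρ (root_mem_skeleton ρ) c hc
  have hνarc : ν (treeArc ρ c) = ENNReal.ofReal L :=
    hν ρ (root_mem_skeleton ρ) c hc
  -- basic sets
  have hbasic : ∀ r : ℝ, μ (γ '' (Subtype.val ⁻¹' (Set.Iio r))) =
      ν (γ '' (Subtype.val ⁻¹' (Set.Iio r))) := by
    intro r
    rcases le_or_gt r 0 with hr | hr
    · have : (Subtype.val ⁻¹' (Set.Iio r) : Set I) = ∅ := by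
        ext x
        simp only [Set.mem_preimage, Set.mem_Iio, Set.mem_empty_iff_false, iff_false, not_lt]
        exact le_trans hr x.2.1
      rw [this]
      simp
    rcases le_or_gt r L with hrL | hrL
    · rw [image_val_preimage_Iio hT ρ c hr hrL]
      have hc' : geoR hT ρ c r ∈ treeSkeleton ρ :=
        harc_skel _ (geoR_mem_arc hT ⟨hr.le, hrL⟩)
      have hμs : μ {geoR hT ρ c r} = 0 := by
        have := hμ _ hc' _ hc'
        rw [dist_self] at this
        have harc : treeArc (geoR hT ρ c r) (geoR hT ρ c r) = {geoR hT ρ c r} := by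
          ext p
          rw [mem_arc_self hT, Set.mem_singleton_iff]
        rw [harc] at this
        simpa using this
      have hνs : ν {geoR hT ρ c r} = 0 := by
        have := hν _ hc' _ hc'
        rw [dist_self] at this
        have harc : treeArc (geoR hT ρ c r) (geoR hT ρ c r) = {geoR hT ρ c r} := by
          ext p
          rw [mem_arc_self hT, Set.mem_singleton_iff]
        rw [harc] at this
        simpa using this
      rw [measure_diff_null hμs, measure_diff_null hνs]
      have hd : dist ρ (geoR hT ρ c r) = r := dist_geoR_left hT ⟨hr.le, hrL⟩
      rw [hμ ρ (root_mem_skeleton ρ) _ hc', hν ρ (root_mem_skeleton ρ) _ hc', hd]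
    · have : (Subtype.val ⁻¹' (Set.Iio r) : Set I) = Set.univ := by
        ext x
        simp only [Set.mem_preimage, Set.mem_Iio, Set.mem_univ, iff_true]
        exact lt_of_le_of_lt x.2.2 hrL
      rw [this, Set.image_univ, hrange, hμarc, hνarc]
  -- Dynkin argument on the subtype
  have h_eq : (inferInstance : MeasurableSpace I) =
      MeasurableSpace.generateFrom ((Set.preimage (Subtype.val : I → ℝ)) ''
        (Set.range Set.Iio)) := by
    have h1 : (inferInstance : MeasurableSpace I) =
        MeasurableSpace.comap (Subtype.val : I → ℝ) (borel ℝ) := by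
      rw [← BorelSpace.measurable_eq]
      rfl
    rw [h1, borel_eq_generateFrom_Iio, MeasurableSpace.comap_generateFrom]
  have h_pi : IsPiSystem ((Set.preimage (Subtype.val : I → ℝ)) '' (Set.range Set.Iio)) := by
    rintro A ⟨A', ⟨a, rfl⟩, rfl⟩ B ⟨B', ⟨b, rfl⟩, rfl⟩ -
    exact ⟨Set.Iio (min a b), ⟨min a b, rfl⟩, by
      rw [← Set.preimage_inter, Set.Iio_inter_Iio]⟩
  have hmain : ∀ E : Set I, MeasurableSet E → μ (γ '' E) = ν (γ '' E) := by
    intro E hE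
    refine MeasurableSpace.induction_on_inter (C := fun E _ => μ (γ '' E) = ν (γ '' E)) h_eq h_pi ?_ ?_ ?_ ?_ E hE
    · simp
    · rintro A ⟨A', ⟨a, rfl⟩, rfl⟩
      exact hbasic a
    · intro A hA hμA
      have himg : γ '' Aᶜ = treeArc ρ c \ γ '' A := by
        rw [← hrange, ← Set.image_univ, ← Set.image_diff hγinj]
        congr 1
        rw [Set.compl_eq_univ_diff]
      have hAm : MeasurableSet (γ '' A) := hγemb.measurableSet_image.2 hA
      have hsubr : γ '' A ⊆ treeArc ρ c := by
        rw [← hrange]; exact Set.image_subset_range γ A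
      have hμfin : μ (γ '' A) ≠ ⊤ :=
        ne_top_of_le_ne_top (by rw [hμarc]; exact ENNReal.ofReal_ne_top)
          (measure_mono hsubr)
      have hνfin : ν (γ '' A) ≠ ⊤ :=
        ne_top_of_le_ne_top (by rw [hνarc]; exact ENNReal.ofReal_ne_top)
          (measure_mono hsubr)
      rw [himg, measure_diff hsubr hAm.nullMeasurableSet hμfin,
        measure_diff hsubr hAm.nullMeasurableSet hνfin, hμarc, hνarc, hμA]
    · intro g hdisj hmeas hC
      rw [Set.image_iUnion, measure_iUnion ?_ ?_, measure_iUnion ?_ ?_]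
      · exact tsum_congr hC
      · intro i j hij
        exact (Set.disjoint_image_iff hγinj).2 (hdisj hij)
      · intro i
        exact hγemb.measurableSet_image.2 (hmeas i)
      · intro i j hij
        exact (Set.disjoint_image_iff hγinj).2 (hdisj hij)
      · intro i
        exact hγemb.measurableSet_image.2 (hmeas i)
  have hBint : B ∩ treeArc ρ c = γ '' (γ ⁻¹' B) := by
    rw [Set.image_preimage_eq_inter_range, hrange, Set.inter_comm]
  rw [hBint]
  exact hmain _ (hγcont.measurable hB)

/-- Uniqueness of the length measure. -/
lemma length_measure_unique (hT : IsRealTree T) (ρ : T) (μ ν : Measure T)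
    (hμ0 : μ (treeLeaves ρ) = 0) (hν0 : ν (treeLeaves ρ) = 0)
    (hμ : ∀ s ∈ treeSkeleton ρ, ∀ s' ∈ treeSkeleton ρ,
      μ (treeArc s s') = ENNReal.ofReal (dist s s'))
    (hν : ∀ s ∈ treeSkeleton ρ, ∀ s' ∈ treeSkeleton ρ,
      ν (treeArc s s') = ENNReal.ofReal (dist s s')) : μ = ν := by
  obtain ⟨f, hf_skel, hskel_eq⟩ := skeleton_eq_iUnion hT ρ
  have hS : MeasurableSet (treeSkeleton ρ) := measurableSet_skeleton hT ρ
  set A : ℕ → Set T := fun n => treeArc ρ (f n) with hA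
  have hAmeas : ∀ n, MeasurableSet (A n) := fun n => (arc_isClosed hT ρ (f n)).measurableSet
  apply Measure.ext
  intro B hB
  -- reduce to the skeleton
  have hrestr : ∀ (κ : Measure T), κ (treeLeaves ρ) = 0 → κ B = κ (B ∩ treeSkeleton ρ) := by
    intro κ hκ
    apply le_antisymm
    · calc κ B ≤ κ ((B ∩ treeSkeleton ρ) ∪ treeLeaves ρ) := by
            apply measure_mono
            intro x hx
            by_cases hxs : x ∈ treeSkeleton ρ
            · exact Or.inl ⟨hx, hxs⟩
            · refine Or.inr ?_
              rw [← compl_skeleton hT ρ]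
              exact hxs
      _ ≤ κ (B ∩ treeSkeleton ρ) + κ (treeLeaves ρ) := measure_union_le _ _
      _ = κ (B ∩ treeSkeleton ρ) := by rw [hκ, add_zero]
    · exact measure_mono Set.inter_subset_left
  rw [hrestr μ hμ0, hrestr ν hν0]
  -- decompose into disjoint pieces of arcs
  have hcover : B ∩ treeSkeleton ρ = ⋃ n, (B ∩ treeSkeleton ρ) ∩ disjointed A n := by
    rw [← Set.inter_iUnion, iUnion_disjointed, ← hA, ← hskel_eq]
    rw [Set.inter_assoc, Set.inter_self]
  rw [hcover]
  have hdisj : Pairwise (Function.onFun Disjoint fun n => (B ∩ treeSkeleton ρ) ∩ disjointed A n) := by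
    intro i j hij
    exact (disjoint_disjointed A hij).mono Set.inter_subset_right Set.inter_subset_right
  have hmeas : ∀ n, MeasurableSet ((B ∩ treeSkeleton ρ) ∩ disjointed A n) := by
    intro n
    exact (hB.inter hS).inter (MeasurableSet.disjointed hAmeas n)
  rw [measure_iUnion hdisj hmeas, measure_iUnion hdisj hmeas]
  apply tsum_congr
  intro n
  have hsub : (B ∩ treeSkeleton ρ) ∩ disjointed A n ⊆ treeArc ρ (f n) :=
    le_trans Set.inter_subset_right (disjointed_subset A n)
  have hterm : (B ∩ treeSkeleton ρ) ∩ disjointed A n =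
      ((B ∩ treeSkeleton ρ) ∩ disjointed A n) ∩ treeArc ρ (f n) :=
    (Set.inter_eq_left.2 hsub).symm
  rw [hterm]
  exact measures_agree_on_arc hT ρ μ ν hμ hν (hf_skel n) (hmeas n)

end Uniqueness

end RealTreeAux

/-- On a complete, locally compact rooted real tree, the set of leaves is Borel measurable and
there is a unique Borel measure (the length measure) vanishing on the leaves and giving each
arc between two skeleton points its length. -/
theorem exists_unique_length_measure (T : Type*) [MetricSpace T] [CompleteSpace T]
    [LocallyCompactSpace T] [MeasurableSpace T] [BorelSpace T] (ρ : T) (hT : IsRealTree T) :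
    MeasurableSet (treeLeaves ρ) ∧
    ∃! μ : MeasureTheory.Measure T,
      μ (treeLeaves ρ) = 0 ∧
      ∀ s ∈ treeSkeleton ρ, ∀ s' ∈ treeSkeleton ρ,
        μ (treeArc s s') = ENNReal.ofReal (dist s s') := by
  refine ⟨RealTreeAux.measurableSet_leaves hT ρ, RealTreeAux.lengthMeasure hT ρ,
    ⟨RealTreeAux.lengthMeasure_leaves hT ρ,
      fun s hs s' hs' => RealTreeAux.lengthMeasure_arc hT ρ hs hs'⟩, ?_⟩
  rintro ν ⟨hν0, hν⟩
  exact RealTreeAux.length_measure_unique hT ρ ν (RealTreeAux.lengthMeasure hT ρ) hν0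
    (RealTreeAux.lengthMeasure_leaves hT ρ) hν
    (fun s hs s' hs' => RealTreeAux.lengthMeasure_arc hT ρ hs hs')
end

section
/- Grafting real trees onto a real tree yields a real tree: let (T,d,ρ) be a rooted real tree, I an index set, (σ_i)_{i∈I} points of T, and for each i ∈ I let (T_i, d_i, ρ_i) be a rooted real tree. Let T' be the disjoint union of T and the sets T_i \ {ρ_i}, i ∈ I, and define d' on T'×T' by: d' = d on T×T; for s ∈ T_i \ {ρ_i} and s' ∈ T, d'(s,s') = d_i(s,ρ_i) + d(σ_i, s'); for s ∈ T_i \ {ρ_i} and s' ∈ T_j \ {ρ_j} with i ≠ j, d'(s,s') = d_i(s,ρ_i) + d(σ_i,σ_j) + d_j(s',ρ_j); and for s,s' ∈ T_i \ {ρ_i}, d'(s,s') = d_i(s,s'). Then (T', d', ρ) is a rooted real tree. -/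
/-- The distance function of an explicitly given metric space structure. -/
noncomputable def mdist {X : Type*} (m : MetricSpace X) : X → X → ℝ :=
  letI := m; dist


section ArcBasics

variable {X : Type*} [MetricSpace X] {Z : Type*} [MetricSpace Z]
variable {s t : X} {f : Set.Icc (0 : ℝ) (dist s t) → X}

theorem arc_dist (h : arcProp s t f) (u v : Set.Icc (0:ℝ) (dist s t)) :
    dist (f u) (f v) = |u.1 - v.1| := by
  rw [h.1.dist_eq, Subtype.dist_eq, Real.dist_eq]

theorem arc_dist_left (h : arcProp s t f) (u : Set.Icc (0:ℝ) (dist s t)) :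
    dist s (f u) = u.1 := by
  calc dist s (f u) = dist (f ⟨0, Set.left_mem_Icc.2 dist_nonneg⟩) (f u) := by rw [h.2.1]
  _ = |0 - u.1| := arc_dist h _ _
  _ = u.1 := by rw [zero_sub, abs_neg, abs_of_nonneg u.2.1]

theorem arc_dist_right (h : arcProp s t f) (u : Set.Icc (0:ℝ) (dist s t)) :
    dist (f u) t = dist s t - u.1 := by
  calc dist (f u) t = dist (f u) (f ⟨dist s t, Set.right_mem_Icc.2 dist_nonneg⟩) := by
        rw [h.2.2]
  _ = |u.1 - dist s t| := arc_dist h _ _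
  _ = dist s t - u.1 := by
        rw [abs_of_nonpos (by linarith [u.2.2])]; ring

end ArcBasics

section ArcOps

variable {X : Type*} [MetricSpace X] {Z : Type*} [MetricSpace Z]

/-- reversal of an arc -/
noncomputable def revArc (s t : X) (f : Set.Icc (0 : ℝ) (dist s t) → X) :
    Set.Icc (0 : ℝ) (dist t s) → X :=
  fun u => f ⟨dist s t - u.1,
    ⟨by have h1 : u.1 ≤ dist t s := u.2.2
        have h2 : dist t s = dist s t := dist_comm t s
        linarith,
     by linarith [u.2.1]⟩⟩

theorem revArc_arcProp {s t : X} {f : Set.Icc (0 : ℝ) (dist s t) → X}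
    (h : arcProp s t f) : arcProp t s (revArc s t f) := by
  refine ⟨?_, ?_, ?_⟩
  · intro u v
    simp only [revArc]
    rw [h.1.edist_eq, Subtype.edist_eq, Subtype.edist_eq, edist_dist, edist_dist,
      Real.dist_eq, Real.dist_eq]
    congr 1
    rw [show dist s t - u.1 - (dist s t - v.1) = -(u.1 - v.1) by ring, abs_neg]
  · show f _ = t
    convert h.2.2 using 3
    ring
  · show f _ = s
    convert h.2.1 using 3
    have : dist t s = dist s t := dist_comm t s
    apply Subtype.ext; dsimp only; linarith

theorem revArc_range {s t : X} (f : Set.Icc (0 : ℝ) (dist s t) → X) :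
    Set.range (revArc s t f) = Set.range f := by
  ext z
  constructor
  · rintro ⟨u, rfl⟩; exact ⟨_, rfl⟩
  · rintro ⟨u, rfl⟩
    refine ⟨⟨dist s t - u.1, ⟨by linarith [u.2.2],
      by have : dist t s = dist s t := dist_comm t s; linarith [u.2.1]⟩⟩, ?_⟩
    simp only [revArc]
    congr 1
    exact Subtype.ext (by simp)

theorem revArc_inj {s t : X} {f g : Set.Icc (0 : ℝ) (dist s t) → X}
    (h : revArc s t f = revArc s t g) : f = g := by
  funext u
  have hc := congrFun h ⟨dist s t - u.1, ⟨by linarith [u.2.2],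
    by have : dist t s = dist s t := dist_comm t s; linarith [u.2.1]⟩⟩
  simp only [revArc] at hc
  calc f u = f ⟨dist s t - (dist s t - u.1), _⟩ := by congr 1; exact Subtype.ext (by ring)
  _ = g ⟨dist s t - (dist s t - u.1), _⟩ := hc
  _ = g u := by congr 1; exact Subtype.ext (by ring)

/-- left restriction of an arc up to parameter `a`, as an arc from `s` to `f ⟨a, _⟩`. -/
theorem arc_restrict_left {s t : X} {f : Set.Icc (0 : ℝ) (dist s t) → X}
    (h : arcProp s t f) {a : ℝ} (ha : a ∈ Set.Icc 0 (dist s t)) :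
    arcProp s (f ⟨a, ha⟩)
      (fun u => f ⟨u.1, ⟨u.2.1, le_trans (le_trans u.2.2
        (le_of_eq (arc_dist_left h ⟨a, ha⟩))) ha.2⟩⟩) := by
  have hda : dist s (f ⟨a, ha⟩) = a := arc_dist_left h _
  refine ⟨?_, ?_, ?_⟩
  · intro u v
    rw [h.1.edist_eq, Subtype.edist_eq, Subtype.edist_eq]
  · show f _ = s
    convert h.2.1 using 3
  · show f _ = f ⟨a, ha⟩
    congr 1
    exact Subtype.ext hda

theorem arc_restrict_right {s t : X} {f : Set.Icc (0 : ℝ) (dist s t) → X}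
    (h : arcProp s t f) {a : ℝ} (ha : a ∈ Set.Icc 0 (dist s t)) :
    arcProp (f ⟨a, ha⟩) t
      (fun u => f ⟨a + u.1, ⟨by linarith [ha.1, u.2.1],
        le_trans (by linarith [u.2.2, le_of_eq (arc_dist_right h ⟨a, ha⟩)] :
          a + u.1 ≤ a + (dist s t - a)) (by linarith)⟩⟩) := by
  have hd : dist (f ⟨a, ha⟩) t = dist s t - a := arc_dist_right h _
  refine ⟨?_, ?_, ?_⟩
  · intro u v
    rw [h.1.edist_eq, Subtype.edist_eq, Subtype.edist_eq, edist_dist, edist_dist,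
      Real.dist_eq, Real.dist_eq]
    congr 1; ring
  · show f _ = f ⟨a, ha⟩
    congr 1; exact Subtype.ext (by ring)
  · show f _ = t
    convert h.2.2 using 3
    apply Subtype.ext; dsimp only; linarith

/-- distance between a point on an arc `s → m` and a point on an arc `m → t`,
when `m` is between `s` and `t`. -/
theorem arc_mixed_dist {s m t : X} (hd : dist s t = dist s m + dist m t)
    {f : Set.Icc (0 : ℝ) (dist s m) → X} {g : Set.Icc (0 : ℝ) (dist m t) → X}
    (hf : arcProp s m f) (hg : arcProp m t g)
    (u : Set.Icc (0:ℝ) (dist s m)) (v : Set.Icc (0:ℝ) (dist m t)) :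
    dist (f u) (g v) = (dist s m - u.1) + v.1 := by
  have h1 : dist (f u) m = dist s m - u.1 := arc_dist_right hf _
  have h2 : dist m (g v) = v.1 := arc_dist_left hg _
  have h3 : dist s (f u) = u.1 := arc_dist_left hf _
  have h4 : dist (g v) t = dist m t - v.1 := arc_dist_right hg _
  have hub : dist (f u) (g v) ≤ (dist s m - u.1) + v.1 := by
    calc dist (f u) (g v) ≤ dist (f u) m + dist m (g v) := dist_triangle _ _ _
    _ = _ := by rw [h1, h2]
  have hlb : dist s t ≤ dist s (f u) + dist (f u) (g v) + dist (g v) t :=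
    dist_triangle4 _ _ _ _
  rw [h3, h4] at hlb
  linarith

/-- concatenation of arcs -/
noncomputable def concatArc (s m t : X) (hd : dist s t = dist s m + dist m t)
    (f : Set.Icc (0 : ℝ) (dist s m) → X) (g : Set.Icc (0 : ℝ) (dist m t) → X) :
    Set.Icc (0 : ℝ) (dist s t) → X :=
  fun u => if hc : u.1 ≤ dist s m then f ⟨u.1, ⟨u.2.1, hc⟩⟩
    else g ⟨u.1 - dist s m, ⟨by linarith [not_le.1 hc], by linarith [u.2.2, hd.symm.le]⟩⟩

theorem concatArc_arcProp {s m t : X} (hd : dist s t = dist s m + dist m t)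
    {f : Set.Icc (0 : ℝ) (dist s m) → X} {g : Set.Icc (0 : ℝ) (dist m t) → X}
    (hf : arcProp s m f) (hg : arcProp m t g) :
    arcProp s t (concatArc s m t hd f g) := by
  have key : ∀ u v : Set.Icc (0:ℝ) (dist s t), u.1 ≤ v.1 →
      dist (concatArc s m t hd f g u) (concatArc s m t hd f g v) = |u.1 - v.1| := by
    intro u v huv
    simp only [concatArc]
    by_cases hu : u.1 ≤ dist s m <;> by_cases hv : v.1 ≤ dist s m
    · rw [dif_pos hu, dif_pos hv, arc_dist hf]
    · rw [dif_pos hu, dif_neg hv, arc_mixed_dist hd hf hg,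
        abs_of_nonpos (by linarith)]
      dsimp only
      ring
    · linarith
    · rw [dif_neg hu, dif_neg hv, arc_dist hg]
      dsimp only
      congr 1; ring
  refine ⟨?_, ?_, ?_⟩
  · intro u v
    rw [edist_dist, Subtype.edist_eq, edist_dist, Real.dist_eq]
    rcases le_total u.1 v.1 with h | h
    · rw [key u v h]
    · rw [dist_comm, key v u h, abs_sub_comm]
  · show concatArc s m t hd f g _ = s
    simp only [concatArc]
    rw [dif_pos dist_nonneg]
    exact hf.2.1
  · show concatArc s m t hd f g _ = t
    simp only [concatArc]
    by_cases hL : dist s t ≤ dist s m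
    · rw [dif_pos hL]
      have hsm : (0:ℝ) ≤ dist m t := dist_nonneg
      have hmt : dist m t = 0 := by linarith
      have hmt' : m = t := by rwa [dist_eq_zero] at hmt
      subst hmt'
      convert hf.2.2 using 3
    · rw [dif_neg hL]
      convert hg.2.2 using 3
      apply Subtype.ext; dsimp only; linarith

theorem concatArc_range {s m t : X} (hd : dist s t = dist s m + dist m t)
    {f : Set.Icc (0 : ℝ) (dist s m) → X} {g : Set.Icc (0 : ℝ) (dist m t) → X}
    (hf : arcProp s m f) (hg : arcProp m t g) :
    Set.range (concatArc s m t hd f g) = Set.range f ∪ Set.range g := by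
  ext z
  constructor
  · rintro ⟨u, rfl⟩
    simp only [concatArc]
    by_cases hu : u.1 ≤ dist s m
    · rw [dif_pos hu]; exact Or.inl ⟨_, rfl⟩
    · rw [dif_neg hu]; exact Or.inr ⟨_, rfl⟩
  · have hmt : (0:ℝ) ≤ dist m t := dist_nonneg
    have hsm : (0:ℝ) ≤ dist s m := dist_nonneg
    rintro (⟨u, rfl⟩ | ⟨u, rfl⟩)
    · refine ⟨⟨u.1, ⟨u.2.1, by linarith [u.2.2]⟩⟩, ?_⟩
      simp only [concatArc]
      rw [dif_pos u.2.2]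
    · refine ⟨⟨dist s m + u.1, ⟨by linarith [u.2.1], by linarith [u.2.2]⟩⟩, ?_⟩
      simp only [concatArc]
      by_cases hu : dist s m + u.1 ≤ dist s m
      · rw [dif_pos hu]
        have hu0 : u.1 = 0 := le_antisymm (by linarith) u.2.1
        have e2 : u = ⟨0, Set.left_mem_Icc.2 dist_nonneg⟩ := Subtype.ext hu0
        have hgu : g u = m := by rw [e2]; exact hg.2.1
        rw [hgu]
        convert hf.2.2 using 3
        apply Subtype.ext; dsimp only; linarith
      · rw [dif_neg hu]
        congr 1
        exact Subtype.ext (by ring)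

/-- pushforward of an arc along an isometry -/
noncomputable def compArc (e : Z → X) (he : Isometry e) (s t : Z)
    (f : Set.Icc (0 : ℝ) (dist s t) → Z) :
    Set.Icc (0 : ℝ) (dist (e s) (e t)) → X :=
  fun u => e (f ⟨u.1, ⟨u.2.1, le_trans u.2.2 (le_of_eq (he.dist_eq s t))⟩⟩)

theorem compArc_arcProp {e : Z → X} (he : Isometry e) {s t : Z}
    {f : Set.Icc (0 : ℝ) (dist s t) → Z} (hf : arcProp s t f) :
    arcProp (e s) (e t) (compArc e he s t f) := by
  refine ⟨?_, ?_, ?_⟩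
  · intro u v
    simp only [compArc]
    rw [he.edist_eq, hf.1.edist_eq, Subtype.edist_eq, Subtype.edist_eq]
  · show e (f _) = e s
    congr 1
    convert hf.2.1 using 3
  · show e (f _) = e t
    congr 1
    convert hf.2.2 using 3
    exact Subtype.ext (he.dist_eq s t)

theorem compArc_range (e : Z → X) (he : Isometry e) (s t : Z)
    (f : Set.Icc (0 : ℝ) (dist s t) → Z) :
    Set.range (compArc e he s t f) = e '' Set.range f := by
  ext z
  constructor
  · rintro ⟨u, rfl⟩; exact ⟨_, ⟨_, rfl⟩, rfl⟩
  · rintro ⟨w, ⟨u, rfl⟩, rfl⟩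
    refine ⟨⟨u.1, ⟨u.2.1, le_trans u.2.2 (le_of_eq (he.dist_eq s t).symm)⟩⟩, ?_⟩
    simp only [compArc]

/-- pulling an arc back through an isometry when it lands in the range -/
theorem arc_pullback {e : Z → X} (he : Isometry e) {z w : Z} {s t : X}
    (hs : s = e z) (ht : t = e w) {f : Set.Icc (0 : ℝ) (dist s t) → X}
    (hf : arcProp s t f) (hmem : ∀ u, f u ∈ Set.range e) :
    ∃ g : Set.Icc (0 : ℝ) (dist z w) → Z, arcProp z w g ∧
      ∀ u : Set.Icc (0:ℝ) (dist s t), f u = e (g ⟨u.1, ⟨u.2.1,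
        le_trans u.2.2 (le_of_eq (by rw [hs, ht, he.dist_eq]))⟩⟩) := by
  have hdist : dist s t = dist z w := by rw [hs, ht, he.dist_eq]
  choose g hg using fun u : Set.Icc (0:ℝ) (dist z w) =>
    hmem ⟨u.1, ⟨u.2.1, le_trans u.2.2 (le_of_eq hdist.symm)⟩⟩
  refine ⟨g, ⟨?_, ?_, ?_⟩, ?_⟩
  · intro u v
    have h1 : edist (g u) (g v) = edist (e (g u)) (e (g v)) := (he.edist_eq _ _).symm
    rw [h1, hg u, hg v, hf.1.edist_eq, Subtype.edist_eq, Subtype.edist_eq]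
  · apply he.injective
    rw [hg, ← hs]
    convert hf.2.1 using 3
  · apply he.injective
    rw [hg, ← ht]
    convert hf.2.2 using 3
    exact Subtype.ext hdist.symm
  · intro u
    exact (hg ⟨u.1, ⟨u.2.1, le_trans u.2.2 (le_of_eq hdist)⟩⟩).symm

theorem arc_unique_via {e : Z → X} (he : Isometry e) {z w : Z} {s t : X}
    (hs : s = e z) (ht : t = e w)
    (huniq : ∀ g g' : Set.Icc (0 : ℝ) (dist z w) → Z,
      arcProp z w g → arcProp z w g' → g = g')
    {f f' : Set.Icc (0 : ℝ) (dist s t) → X}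
    (hf : arcProp s t f) (hf' : arcProp s t f')
    (hmem : ∀ u, f u ∈ Set.range e) (hmem' : ∀ u, f' u ∈ Set.range e) :
    f = f' := by
  obtain ⟨g, hg, hfg⟩ := arc_pullback he hs ht hf hmem
  obtain ⟨g', hg', hfg'⟩ := arc_pullback he hs ht hf' hmem'
  have hgg := huniq g g' hg hg'
  subst hgg
  funext u
  rw [hfg u, hfg' u]

end ArcOps

section Gate

variable {X : Type*} [MetricSpace X]

theorem mem_closure_right_of {P : Set X} {Q : ℝ → X} (hQ : Continuous Q) {a b' : ℝ}
    (hab : a < b') (h : ∀ z, a < z → z ≤ b' → Q z ∈ P) : Q a ∈ closure P := by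
  have h1 : Q a ∈ Q '' closure (Set.Ioc a b') :=
    ⟨a, by rw [closure_Ioc (ne_of_lt hab)]; exact ⟨le_refl a, le_of_lt hab⟩, rfl⟩
  have h2 := image_closure_subset_closure_image hQ h1
  refine closure_mono ?_ h2
  rintro _ ⟨z, ⟨hz1, hz2⟩, rfl⟩
  exact h z hz1 hz2

theorem mem_closure_left_of {P : Set X} {Q : ℝ → X} (hQ : Continuous Q) {a b' : ℝ}
    (hab : a < b') (h : ∀ z, a ≤ z → z < b' → Q z ∈ P) : Q b' ∈ closure P := by
  have h1 : Q b' ∈ Q '' closure (Set.Ico a b') :=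
    ⟨b', by rw [closure_Ico (ne_of_lt hab)]; exact ⟨le_of_lt hab, le_refl b'⟩, rfl⟩
  have h2 := image_closure_subset_closure_image hQ h1
  refine closure_mono ?_ h2
  rintro _ ⟨z, ⟨hz1, hz2⟩, rfl⟩
  exact h z hz1 hz2

/-- If a continuous path has both endpoints outside an open set `P` whose closure adds at most
the single point `b`, then the path never meets `P`. -/
theorem gate1 {P : Set X} (hP : IsOpen P) {b : X} (hb : closure P ⊆ insert b P)
    {Q : ℝ → X} (hQ : Continuous Q) (hinj : Set.InjOn Q (Set.Icc 0 1))
    (h0 : Q 0 ∉ P) (h1 : Q 1 ∉ P) : ∀ u ∈ Set.Icc (0:ℝ) 1, Q u ∉ P := by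
  rintro u ⟨hu0, hu1⟩ hu
  -- left exit point
  set S : Set ℝ := Set.Icc 0 u ∩ Q ⁻¹' Pᶜ with hS
  have hSne : S.Nonempty := ⟨0, ⟨le_refl 0, hu0⟩, h0⟩
  have hSbdd : BddAbove S := BddAbove.mono Set.inter_subset_left bddAbove_Icc
  have hSc : IsClosed S := isClosed_Icc.inter (hP.isClosed_compl.preimage hQ)
  set c := sSup S with hc
  have hcS : c ∈ S := hSc.csSup_mem hSne hSbdd
  have hcu : c < u := lt_of_le_of_ne hcS.1.2 (fun h => hcS.2 (h ▸ hu))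
  have hmidP : ∀ v, c < v → v ≤ u → Q v ∈ P := by
    intro v hv hv'
    by_contra hvP
    exact absurd (le_csSup hSbdd ⟨⟨le_trans hcS.1.1 (le_of_lt hv), hv'⟩, hvP⟩) (not_le.2 hv)
  have hcb : Q c = b := by
    rcases hb (mem_closure_right_of hQ hcu hmidP) with h | h
    · exact h
    · exact absurd h hcS.2
  -- right exit point
  set S' : Set ℝ := Set.Icc u 1 ∩ Q ⁻¹' Pᶜ with hS'
  have hSne' : S'.Nonempty := ⟨1, ⟨hu1, le_refl 1⟩, h1⟩
  have hSbdd' : BddBelow S' := BddBelow.mono Set.inter_subset_left bddBelow_Icc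
  have hSc' : IsClosed S' := isClosed_Icc.inter (hP.isClosed_compl.preimage hQ)
  set d := sInf S' with hd
  have hdS : d ∈ S' := hSc'.csInf_mem hSne' hSbdd'
  have hud : u < d := lt_of_le_of_ne hdS.1.1 (fun h => hdS.2 (h ▸ hu))
  have hmidP' : ∀ v, u ≤ v → v < d → Q v ∈ P := by
    intro v hv hv'
    by_contra hvP
    exact absurd (csInf_le hSbdd' ⟨⟨hv, le_trans (le_of_lt hv') hdS.1.2⟩, hvP⟩) (not_le.2 hv')
  have hdb : Q d = b := by
    rcases hb (mem_closure_left_of hQ hud hmidP') with h | h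
    · exact h
    · exact absurd h hdS.2
  have : c = d := hinj ⟨hcS.1.1, le_trans (le_of_lt hcu) hu1⟩
    ⟨le_trans hu0 (le_of_lt hud), hdS.1.2⟩ (hcb.trans hdb.symm)
  linarith

/-- If a continuous injective path starts in `P` and ends outside, it exits through `b`
exactly once. -/
theorem gate2 {P : Set X} (hP : IsOpen P) {b : X} (hb : closure P ⊆ insert b P)
    {Q : ℝ → X} (hQ : Continuous Q) (hinj : Set.InjOn Q (Set.Icc 0 1))
    (h0 : Q 0 ∈ P) (h1 : Q 1 ∉ P) :
    ∃ c ∈ Set.Ioc (0:ℝ) 1, Q c = b ∧ (∀ v, 0 ≤ v → v < c → Q v ∈ P) ∧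
      (∀ v, c < v → v ≤ 1 → Q v ∉ P) := by
  set S : Set ℝ := Set.Icc 0 1 ∩ Q ⁻¹' Pᶜ with hS
  have hSne : S.Nonempty := ⟨1, ⟨zero_le_one, le_refl 1⟩, h1⟩
  have hSbdd : BddBelow S := BddBelow.mono Set.inter_subset_left bddBelow_Icc
  have hSc : IsClosed S := isClosed_Icc.inter (hP.isClosed_compl.preimage hQ)
  set c := sInf S with hc
  have hcS : c ∈ S := hSc.csInf_mem hSne hSbdd
  have hbefore : ∀ v, 0 ≤ v → v < c → Q v ∈ P := by
    intro v hv hv'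
    by_contra hvP
    exact absurd (csInf_le hSbdd ⟨⟨hv, le_trans (le_of_lt hv') hcS.1.2⟩, hvP⟩) (not_le.2 hv')
  have hc0 : 0 < c := lt_of_le_of_ne hcS.1.1 (fun h => hcS.2 (h ▸ h0))
  have hQcb : Q c = b := by
    rcases hb (mem_closure_left_of hQ hc0 hbefore) with h | h
    · exact h
    · exact absurd h hcS.2
  refine ⟨c, ⟨hc0, hcS.1.2⟩, hQcb, hbefore, ?_⟩
  intro v hcv hv1 hvP
  -- everything in (c, v] is in P
  have hseg : ∀ w, c < w → w ≤ v → Q w ∈ P := by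
    set S2 : Set ℝ := Set.Icc c v ∩ Q ⁻¹' Pᶜ with hS2
    have hS2ne : S2.Nonempty := ⟨c, ⟨le_refl c, le_of_lt hcv⟩, hcS.2⟩
    have hS2bdd : BddAbove S2 := BddAbove.mono Set.inter_subset_left bddAbove_Icc
    have hS2c : IsClosed S2 := isClosed_Icc.inter (hP.isClosed_compl.preimage hQ)
    set d := sSup S2 with hd2
    have hdS2 : d ∈ S2 := hS2c.csSup_mem hS2ne hS2bdd
    have hdvlt : d < v := lt_of_le_of_ne hdS2.1.2 (fun h => hdS2.2 (h ▸ hvP))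
    have hmid : ∀ z, d < z → z ≤ v → Q z ∈ P := by
      intro z hz hz'
      by_contra hzP
      exact absurd (le_csSup hS2bdd ⟨⟨le_trans hdS2.1.1 (le_of_lt hz), hz'⟩, hzP⟩) (not_le.2 hz)
    have hQdb : Q d = b := by
      rcases hb (mem_closure_right_of hQ hdvlt hmid) with h | h
      · exact h
      · exact absurd h hdS2.2
    have hd01 : d ∈ Set.Icc (0:ℝ) 1 := ⟨le_trans (le_of_lt hc0) hdS2.1.1,
      le_trans hdS2.1.2 hv1⟩
    have hcd : c = d := hinj ⟨le_of_lt hc0, hcS.1.2⟩ hd01 (hQcb.trans hQdb.symm)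
    intro w hw hw'
    exact hmid w (hcd ▸ hw) hw'
  -- next exit beyond v contradicts injectivity
  set S3 : Set ℝ := Set.Icc v 1 ∩ Q ⁻¹' Pᶜ with hS3
  have hS3ne : S3.Nonempty := ⟨1, ⟨hv1, le_refl 1⟩, h1⟩
  have hS3bdd : BddBelow S3 := BddBelow.mono Set.inter_subset_left bddBelow_Icc
  have hS3c : IsClosed S3 := isClosed_Icc.inter (hP.isClosed_compl.preimage hQ)
  set e := sInf S3 with he3
  have heS3 : e ∈ S3 := hS3c.csInf_mem hS3ne hS3bdd
  have hve : v < e := lt_of_le_of_ne heS3.1.1 (fun h => heS3.2 (h ▸ hvP))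
  have hmid3 : ∀ z, v ≤ z → z < e → Q z ∈ P := by
    intro z hz hz'
    by_contra hzP
    exact absurd (csInf_le hS3bdd ⟨⟨hz, le_trans (le_of_lt hz') heS3.1.2⟩, hzP⟩) (not_le.2 hz')
  have hQeb : Q e = b := by
    rcases hb (mem_closure_left_of hQ hve hmid3) with h | h
    · exact h
    · exact absurd h heS3.2
  have hc1 : c ∈ Set.Icc (0:ℝ) 1 := ⟨le_of_lt hc0, hcS.1.2⟩
  have he1 : e ∈ Set.Icc (0:ℝ) 1 := ⟨by linarith [heS3.1.1], heS3.1.2⟩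
  have : c = e := hinj hc1 he1 (hQcb.trans hQeb.symm)
  linarith

end Gate

section Piece

variable {X : Type*} [MetricSpace X] {Z : Type*} [MetricSpace Z]

theorem piece {e : Z → X} (he : Isometry e) (hZ : IsRealTree Z)
    {q : Set.Icc (0:ℝ) 1 → X} (hq : Continuous q) (hinj : Function.Injective q)
    {c d : ℝ} (hc : 0 ≤ c) (hcd : c ≤ d) (hd : d ≤ 1)
    (hmem : ∀ v : Set.Icc (0:ℝ) 1, c ≤ v.1 → v.1 ≤ d → q v ∈ Set.range e) :
    ∃ z w : Z, q ⟨c, ⟨hc, le_trans hcd hd⟩⟩ = e z ∧ q ⟨d, ⟨le_trans hc hcd, hd⟩⟩ = e w ∧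
      ∀ f' : Set.Icc (0:ℝ) (dist z w) → Z, arcProp z w f' →
        q '' {v | c ≤ v.1 ∧ v.1 ≤ d} = e '' Set.range f' := by
  rcases eq_or_lt_of_le hcd with rfl | hlt
  · -- degenerate piece
    obtain ⟨z, hz⟩ := hmem ⟨c, ⟨hc, hd⟩⟩ (le_refl c) (le_refl c)
    refine ⟨z, z, hz.symm, hz.symm, ?_⟩
    intro f' hf'
    have hrange : Set.range f' = {z} := by
      have hzz : dist z z = 0 := dist_self z
      ext y
      constructor
      · rintro ⟨u, rfl⟩
        have hu0 : u.1 = 0 := le_antisymm (le_trans u.2.2 (le_of_eq hzz)) u.2.1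
        have : u = ⟨0, Set.left_mem_Icc.2 dist_nonneg⟩ := Subtype.ext hu0
        rw [this, hf'.2.1]
        rfl
      · rintro rfl
        exact ⟨⟨0, Set.left_mem_Icc.2 dist_nonneg⟩, hf'.2.1⟩
    rw [hrange]
    have hset : {v : Set.Icc (0:ℝ) 1 | c ≤ v.1 ∧ v.1 ≤ c} = {⟨c, ⟨hc, hd⟩⟩} := by
      ext v
      simp only [Set.mem_setOf_eq, Set.mem_singleton_iff]
      constructor
      · rintro ⟨h1, h2⟩; exact Subtype.ext (le_antisymm h2 h1)
      · rintro rfl; exact ⟨le_refl _, le_refl _⟩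
    rw [hset]
    simp [hz.symm]
  · -- nondegenerate piece
    have hdc : (0:ℝ) < d - c := by linarith
    set φ : Set.Icc (0:ℝ) 1 → Set.Icc (0:ℝ) 1 := fun v =>
      ⟨c + v.1 * (d - c), ⟨by nlinarith [v.2.1], by nlinarith [v.2.2]⟩⟩ with hφ
    have hφc : Continuous φ := by
      apply Continuous.subtype_mk
      exact continuous_const.add (continuous_subtype_val.mul continuous_const)
    have hφinj : Function.Injective φ := by
      intro a b h
      have := congrArg Subtype.val h
      simp only [hφ] at this
      have h2 : a.1 * (d - c) = b.1 * (d - c) := by linarith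
      exact Subtype.ext (mul_right_cancel₀ (ne_of_gt hdc) h2)
    set p := q ∘ φ with hp
    have hpc : Continuous p := hq.comp hφc
    have hpinj : Function.Injective p := hinj.comp hφinj
    have hφval : ∀ v, (φ v).1 = c + v.1 * (d - c) := fun v => rfl
    have hpm : ∀ v, p v ∈ Set.range e := by
      intro v
      apply hmem (φ v)
      · rw [hφval]; nlinarith [v.2.1]
      · rw [hφval]; nlinarith [v.2.2]
    choose g hg using hpm
    have hecomp : e ∘ g = p := funext hg
    have hgc : Continuous g := by
      rw [he.isEmbedding.continuous_iff, hecomp]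
      exact hpc
    have hginj : Function.Injective g := by
      intro a b h
      apply hpinj
      rw [← hg a, ← hg b, h]
    have key := hZ.2 g hgc hginj
    refine ⟨g ⟨0, Set.left_mem_Icc.2 zero_le_one⟩, g ⟨1, Set.right_mem_Icc.2 zero_le_one⟩,
      ?_, ?_, ?_⟩
    · rw [hg]
      show q _ = q (φ _)
      congr 1
      refine (Subtype.ext ?_).symm
      rw [hφval]
      norm_num
    · rw [hg]
      show q _ = q (φ _)
      congr 1
      refine (Subtype.ext ?_).symm
      rw [hφval]
      norm_num
    · intro f' hf'
      have h1 : q '' {v : Set.Icc (0:ℝ) 1 | c ≤ v.1 ∧ v.1 ≤ d} = Set.range p := by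
        have hrφ : Set.range φ = {v : Set.Icc (0:ℝ) 1 | c ≤ v.1 ∧ v.1 ≤ d} := by
          ext v
          constructor
          · rintro ⟨a, rfl⟩
            refine ⟨?_, ?_⟩ <;> rw [hφval] <;> nlinarith [a.2.1, a.2.2]
          · rintro ⟨h1, h2⟩
            refine ⟨⟨(v.1 - c) / (d - c), ⟨div_nonneg (by linarith) (by linarith),
              by rw [div_le_one hdc]; linarith⟩⟩, ?_⟩
            refine Subtype.ext ?_
            rw [hφval]
            field_simp
            ring
        rw [← hrφ, hp, Set.range_comp]
      have h2 : Set.range p = e '' Set.range g := by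
        rw [← hecomp, Set.range_comp]
      rw [h1, h2, key f' hf']
  
end Piece

universe u v w

structure GraftSetup where
  T : Type u
  [mT : MetricSpace T]
  I : Type v
  sig : I → T
  Ti : I → Type w
  [mTi : ∀ i, MetricSpace (Ti i)]
  ρi : ∀ i, Ti i

attribute [instance] GraftSetup.mT GraftSetup.mTi

def GraftSetup.Space (G : GraftSetup) : Type _ :=
  G.T ⊕ (Σ i : G.I, {x : G.Ti i // x ≠ G.ρi i})

namespace GraftSetup

variable (G : GraftSetup)

noncomputable def gdist : G.Space → G.Space → ℝ :=
  letI : DecidableEq G.I := Classical.decEq _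
  fun z w => match z, w with
  | .inl a, .inl b => dist a b
  | .inl a, .inr ⟨i, x⟩ => dist (x : G.Ti i) (G.ρi i) + dist (G.sig i) a
  | .inr ⟨i, x⟩, .inl b => dist (x : G.Ti i) (G.ρi i) + dist (G.sig i) b
  | .inr ⟨i, x⟩, .inr ⟨j, y⟩ =>
      if h : i = j then dist (x : G.Ti i) (cast (congrArg G.Ti h.symm) (y : G.Ti j))
      else dist (x : G.Ti i) (G.ρi i) + dist (G.sig i) (G.sig j) + dist (y : G.Ti j) (G.ρi j)

variable {G}

theorem gdist_inr_inr_same (i : G.I) (x y : {x : G.Ti i // x ≠ G.ρi i}) :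
    G.gdist (.inr ⟨i, x⟩) (.inr ⟨i, y⟩) = dist (x : G.Ti i) (y : G.Ti i) := by
  simp [gdist]

theorem gdist_inr_inr_ne {i j : G.I} (h : i ≠ j) (x : {x : G.Ti i // x ≠ G.ρi i})
    (y : {x : G.Ti j // x ≠ G.ρi j}) :
    G.gdist (.inr ⟨i, x⟩) (.inr ⟨j, y⟩) =
      dist (x : G.Ti i) (G.ρi i) + dist (G.sig i) (G.sig j) + dist (y : G.Ti j) (G.ρi j) := by
  simp [gdist, h]

theorem gdist_comm (z w : G.Space) : G.gdist z w = G.gdist w z := by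
  rcases z with a | ⟨i, x⟩ <;> rcases w with b | ⟨j, y⟩
  · simp [gdist, dist_comm]
  · simp [gdist]
  · simp [gdist]
  · by_cases h : i = j
    · subst h
      rw [gdist_inr_inr_same, gdist_inr_inr_same, dist_comm]
    · rw [gdist_inr_inr_ne h, gdist_inr_inr_ne (Ne.symm h), dist_comm (G.sig i)]
      ring

theorem gdist_self (z : G.Space) : G.gdist z z = 0 := by
  rcases z with a | ⟨i, x⟩
  · simp [gdist]
  · rw [gdist_inr_inr_same]; simp

theorem gdist_pos_ne_root {i : G.I} (x : {x : G.Ti i // x ≠ G.ρi i}) :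
    0 < dist (x : G.Ti i) (G.ρi i) := dist_pos.2 x.2

theorem gdist_eq_zero {z w : G.Space} (h : G.gdist z w = 0) : z = w := by
  rcases z with a | ⟨i, x⟩ <;> rcases w with b | ⟨j, y⟩
  · simp [gdist] at h; rw [h]
  · exfalso
    simp only [gdist] at h
    have h1 := gdist_pos_ne_root y
    have h2 : (0:ℝ) ≤ dist (G.sig j) a := dist_nonneg
    linarith
  · exfalso
    simp only [gdist] at h
    have h1 := gdist_pos_ne_root x
    have h2 : (0:ℝ) ≤ dist (G.sig i) b := dist_nonneg
    linarith
  · by_cases hij : i = j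
    · subst hij
      rw [gdist_inr_inr_same] at h
      have : (x : G.Ti i) = y := by rwa [dist_eq_zero] at h
      have : x = y := Subtype.ext this
      rw [this]
    · exfalso
      rw [gdist_inr_inr_ne hij] at h
      have h1 := gdist_pos_ne_root x
      have h2 := gdist_pos_ne_root y
      have h3 : (0:ℝ) ≤ dist (G.sig i) (G.sig j) := dist_nonneg
      linarith

theorem gdist_triangle (z w v : G.Space) : G.gdist z v ≤ G.gdist z w + G.gdist w v := by
  rcases z with a | ⟨i, x⟩ <;> rcases w with b | ⟨j, y⟩ <;> rcases v with c | ⟨k, u⟩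
  · simp only [gdist]; exact dist_triangle a b c
  · simp only [gdist]
    have := dist_triangle (G.sig k) b a
    have h2 : dist b a = dist a b := dist_comm b a
    linarith
  · simp only [gdist]
    have := dist_triangle a (G.sig j) c
    have h1 : dist (G.sig j) a = dist a (G.sig j) := dist_comm _ _
    linarith [gdist_pos_ne_root y]
  · by_cases h : j = k
    · subst h
      rw [gdist_inr_inr_same]
      simp only [gdist]
      have := dist_triangle (u : G.Ti j) (y : G.Ti j) (G.ρi j)
      have h2 : dist (y : G.Ti j) (u : G.Ti j) = dist (u : G.Ti j) (y : G.Ti j) := dist_comm _ _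
      linarith
    · rw [gdist_inr_inr_ne h]
      simp only [gdist]
      have := dist_triangle (G.sig k) (G.sig j) a
      have h1 : dist (G.sig j) (G.sig k) = dist (G.sig k) (G.sig j) := dist_comm _ _
      have h2 : dist (G.sig j) a = dist a (G.sig j) := dist_comm _ _
      linarith [gdist_pos_ne_root y]
  · simp only [gdist]
    have := dist_triangle (x : G.Ti i) (G.ρi i) (G.ρi i)
    have h1 := dist_triangle (G.sig i) b c
    linarith
  · by_cases h : i = k
    · subst h
      rw [gdist_inr_inr_same]
      simp only [gdist]
      have := dist_triangle (x : G.Ti i) (G.ρi i) (u : G.Ti i)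
      have h2 : dist (G.ρi i) (u : G.Ti i) = dist (u : G.Ti i) (G.ρi i) := dist_comm _ _
      have h3 : (0:ℝ) ≤ dist (G.sig i) b := dist_nonneg
      linarith
    · rw [gdist_inr_inr_ne h]
      simp only [gdist]
      have := dist_triangle (G.sig i) b (G.sig k)
      have h2 : dist b (G.sig k) = dist (G.sig k) b := dist_comm _ _
      linarith
  · by_cases h : i = j
    · subst h
      rw [gdist_inr_inr_same]
      simp only [gdist]
      have := dist_triangle (x : G.Ti i) (y : G.Ti i) (G.ρi i)
      linarith
    · rw [gdist_inr_inr_ne h]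
      simp only [gdist]
      have := dist_triangle (G.sig i) (G.sig j) c
      linarith [gdist_pos_ne_root y]
  · by_cases hij : i = j <;> by_cases hjk : j = k
    · subst hij; subst hjk
      rw [gdist_inr_inr_same, gdist_inr_inr_same, gdist_inr_inr_same]
      exact dist_triangle _ _ _
    · subst hij
      rw [gdist_inr_inr_ne hjk, gdist_inr_inr_same, gdist_inr_inr_ne hjk]
      have := dist_triangle (x : G.Ti i) (y : G.Ti i) (G.ρi i)
      linarith
    · subst hjk
      rw [gdist_inr_inr_ne hij, gdist_inr_inr_same, gdist_inr_inr_ne hij]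
      have := dist_triangle (G.ρi j) (y : G.Ti j) (u : G.Ti j)
      have h2 : dist (G.ρi j) (y : G.Ti j) = dist (y : G.Ti j) (G.ρi j) := dist_comm _ _
      have h3 : dist (G.ρi j) (u : G.Ti j) = dist (u : G.Ti j) (G.ρi j) := dist_comm _ _
      linarith
    · by_cases hik : i = k
      · subst hik
        rw [gdist_inr_inr_same, gdist_inr_inr_ne hij, gdist_inr_inr_ne (fun hh => hij hh.symm)]
        have := dist_triangle (x : G.Ti i) (G.ρi i) (u : G.Ti i)
        have h2 : dist (G.ρi i) (u : G.Ti i) = dist (u : G.Ti i) (G.ρi i) := dist_comm _ _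
        have h3 : (0:ℝ) ≤ dist (G.sig i) (G.sig j) := dist_nonneg
        have h4 : dist (G.sig j) (G.sig i) = dist (G.sig i) (G.sig j) := dist_comm _ _
        linarith [gdist_pos_ne_root y]
      · rw [gdist_inr_inr_ne hik, gdist_inr_inr_ne hij, gdist_inr_inr_ne hjk]
        have := dist_triangle (G.sig i) (G.sig j) (G.sig k)
        linarith [gdist_pos_ne_root y]

noncomputable instance metricSpace : MetricSpace G.Space where
  dist := G.gdist
  dist_self := gdist_self
  dist_comm := gdist_comm
  dist_triangle := gdist_triangle
  eq_of_dist_eq_zero := gdist_eq_zero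
  edist_dist _ _ := rfl

end GraftSetup
namespace GraftSetup

variable {G : GraftSetup}

/-- constructor helpers for the graft space -/
abbrev inlS (a : G.T) : G.Space := Sum.inl a

abbrev inrS {i : G.I} (x : {x : G.Ti i // x ≠ G.ρi i}) : G.Space := Sum.inr ⟨i, x⟩

@[simp] theorem dist_inl_inl (a b : G.T) :
    dist (inlS a) (inlS b) = dist a b := rfl

@[simp] theorem dist_inl_inr (a : G.T) (i : G.I) (x : {x : G.Ti i // x ≠ G.ρi i}) :
    dist (inlS a) (inrS x) =
      dist (x : G.Ti i) (G.ρi i) + dist (G.sig i) a := rfl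

@[simp] theorem dist_inr_inl (a : G.T) (i : G.I) (x : {x : G.Ti i // x ≠ G.ρi i}) :
    dist (inrS x) (inlS a) =
      dist (x : G.Ti i) (G.ρi i) + dist (G.sig i) a := rfl

@[simp] theorem dist_inr_inr_same (i : G.I) (x y : {x : G.Ti i // x ≠ G.ρi i}) :
    dist (inrS x) (inrS y) = dist (x : G.Ti i) (y : G.Ti i) :=
  gdist_inr_inr_same i x y

theorem dist_inr_inr_ne {i j : G.I} (h : i ≠ j) (x : {x : G.Ti i // x ≠ G.ρi i})
    (y : {x : G.Ti j // x ≠ G.ρi j}) :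
    dist (inrS x) (inrS y) =
      dist (x : G.Ti i) (G.ρi i) + dist (G.sig i) (G.sig j) + dist (y : G.Ti j) (G.ρi j) :=
  gdist_inr_inr_ne h x y

theorem isometry_inl : Isometry (inlS : G.T → G.Space) :=
  Isometry.of_dist_eq fun _ _ => rfl

noncomputable def emb (i : G.I) : G.Ti i → G.Space :=
  letI : ∀ x y : G.Ti i, Decidable (x = y) := fun x y => Classical.dec _
  fun x => if h : x = G.ρi i then inlS (G.sig i) else inrS ⟨x, h⟩

theorem emb_root (i : G.I) : emb i (G.ρi i) = inlS (G.sig i) := by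
  simp [emb]

theorem emb_ne {i : G.I} {x : G.Ti i} (h : x ≠ G.ρi i) :
    emb i x = inrS ⟨x, h⟩ := by
  simp [emb, h]

theorem emb_sub {i : G.I} (y : {x : G.Ti i // x ≠ G.ρi i}) :
    emb i (y : G.Ti i) = inrS y := by
  rw [emb_ne y.2]

theorem isometry_emb (i : G.I) : Isometry (emb i) := by
  apply Isometry.of_dist_eq
  intro x y
  by_cases hx : x = G.ρi i <;> by_cases hy : y = G.ρi i
  · subst hx; subst hy; simp [emb_root]
  · subst hx
    rw [emb_root, emb_ne hy, dist_inl_inr]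
    simp [dist_comm]
  · subst hy
    rw [emb_root, emb_ne hx, dist_inr_inl]
    simp
  · rw [emb_ne hx, emb_ne hy, dist_inr_inr_same]

/-- the open part of the `i`-th grafted tree -/
def P (i : G.I) : Set G.Space := Set.range fun y : {x : G.Ti i // x ≠ G.ρi i} => inrS y

theorem mem_P_inr {i : G.I} (y : {x : G.Ti i // x ≠ G.ρi i}) :
    (inrS y : G.Space) ∈ P i := ⟨y, rfl⟩

theorem not_mem_P_inl {i : G.I} (a : G.T) : (inlS a : G.Space) ∉ P i := by
  rintro ⟨y, h⟩; cases h

theorem mem_P_iff {i : G.I} {z : G.Space} :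
    z ∈ P i ↔ ∃ y : {x : G.Ti i // x ≠ G.ρi i}, z = inrS y := by
  constructor
  · rintro ⟨y, rfl⟩; exact ⟨y, rfl⟩
  · rintro ⟨y, rfl⟩; exact ⟨y, rfl⟩

theorem not_mem_P_inr_ne {i j : G.I} (h : j ≠ i) (y : {x : G.Ti j // x ≠ G.ρi j}) :
    (inrS y : G.Space) ∉ P i := by
  rintro ⟨v, hv⟩
  injection hv with hv
  exact h (congrArg Sigma.fst hv).symm

theorem range_emb_eq (i : G.I) :
    Set.range (emb i) = insert (inlS (G.sig i)) (P i) := by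
  ext z
  constructor
  · rintro ⟨x, rfl⟩
    by_cases hx : x = G.ρi i
    · subst hx; rw [emb_root]; exact Set.mem_insert _ _
    · rw [emb_ne hx]; exact Set.mem_insert_of_mem _ (mem_P_inr _)
  · rintro (rfl | ⟨y, rfl⟩)
    · exact ⟨G.ρi i, emb_root i⟩
    · exact ⟨(y : G.Ti i), emb_sub y⟩

theorem P_subset_range_emb (i : G.I) : P i ⊆ Set.range (emb i) := by
  rw [range_emb_eq]; exact Set.subset_insert _ _

theorem isOpen_P (i : G.I) : IsOpen (P i) := by
  rw [Metric.isOpen_iff]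
  rintro _ ⟨y, rfl⟩
  refine ⟨dist (y : G.Ti i) (G.ρi i), gdist_pos_ne_root y, ?_⟩
  intro w hw
  rw [Metric.mem_ball] at hw
  rcases w with b | ⟨j, v⟩
  · exfalso
    rw [dist_inl_inr] at hw
    have : (0:ℝ) ≤ dist (G.sig i) b := dist_nonneg
    have h2 := gdist_pos_ne_root (G := G) y
    linarith
  · by_cases hj : j = i
    · subst hj; exact mem_P_inr v
    · exfalso
      rw [dist_inr_inr_ne hj] at hw
      have h1 : (0:ℝ) ≤ dist (v : G.Ti j) (G.ρi j) := dist_nonneg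
      have h2 : (0:ℝ) ≤ dist (G.sig j) (G.sig i) := dist_nonneg
      linarith

theorem isClosed_range_emb (i : G.I) : IsClosed (Set.range (emb i)) := by
  rw [← isOpen_compl_iff, Metric.isOpen_iff]
  intro z hz
  rcases z with b | ⟨j, v⟩
  · have hb : b ≠ G.sig i := by
      rintro rfl
      exact hz ⟨G.ρi i, emb_root i⟩
    refine ⟨dist (G.sig i) b, dist_pos.2 (Ne.symm hb), ?_⟩
    intro w hw hwr
    change dist w (inlS b : G.Space) < _ at hw
    rw [range_emb_eq] at hwr
    rcases hwr with rfl | ⟨y, rfl⟩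
    · rw [dist_inl_inl] at hw
      exact absurd hw (lt_irrefl _)
    · rw [dist_inr_inl] at hw
      have := gdist_pos_ne_root (G := G) y
      linarith
  · have hj : j ≠ i := by
      rintro rfl
      exact hz (P_subset_range_emb j (mem_P_inr v))
    refine ⟨dist (v : G.Ti j) (G.ρi j), gdist_pos_ne_root v, ?_⟩
    intro w hw hwr
    change dist w (inrS v : G.Space) < _ at hw
    rw [range_emb_eq] at hwr
    rcases hwr with rfl | ⟨y, rfl⟩
    · rw [dist_inl_inr] at hw
      have : (0:ℝ) ≤ dist (G.sig j) (G.sig i) := dist_nonneg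
      linarith
    · rw [dist_inr_inr_ne (Ne.symm hj)] at hw
      have h1 := gdist_pos_ne_root (G := G) y
      have h2 : (0:ℝ) ≤ dist (G.sig i) (G.sig j) := dist_nonneg
      linarith

theorem closure_P (i : G.I) : closure (P i) ⊆ insert (inlS (G.sig i)) (P i) := by
  rw [← range_emb_eq]
  exact closure_minimal (P_subset_range_emb i) (isClosed_range_emb i)

theorem closure_compl_range_emb (i : G.I) :
    closure (Set.range (emb i))ᶜ ⊆ insert (inlS (G.sig i)) (Set.range (emb i))ᶜ := by
  intro z hz
  by_cases hzr : z ∈ Set.range (emb i)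
  · left
    rw [range_emb_eq] at hzr
    rcases hzr with rfl | hzP
    · rfl
    · exfalso
      rw [mem_closure_iff] at hz
      obtain ⟨w, hw1, hw2⟩ := hz (P i) (isOpen_P i) hzP
      exact hw2 (P_subset_range_emb i hw1)
  · right; exact hzr

end GraftSetup
namespace GraftSetup

variable {G : GraftSetup}

/-- recasting an arc along equalities of its endpoints -/
noncomputable def castArc {X : Type*} [MetricSpace X] {s t s' t' : X}
    (hs : s = s') (ht : t = t') (f : Set.Icc (0:ℝ) (dist s t) → X) :
    Set.Icc (0:ℝ) (dist s' t') → X :=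
  fun u => f ⟨u.1, by rw [hs, ht]; exact u.2⟩

theorem castArc_arcProp {X : Type*} [MetricSpace X] {s t s' t' : X}
    (hs : s = s') (ht : t = t') {f : Set.Icc (0:ℝ) (dist s t) → X}
    (h : arcProp s t f) : arcProp s' t' (castArc hs ht f) := by
  subst hs; subst ht; exact h

theorem castArc_range {X : Type*} [MetricSpace X] {s t s' t' : X}
    (hs : s = s') (ht : t = t') (f : Set.Icc (0:ℝ) (dist s t) → X) :
    Set.range (castArc hs ht f) = Set.range f := by
  subst hs; subst ht
  exact congrArg _ (funext fun u => rfl)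

theorem dist_inr_inl_sig {i : G.I} (x : {x : G.Ti i // x ≠ G.ρi i}) :
    dist (inrS x : G.Space) (inlS (G.sig i)) = dist (x : G.Ti i) (G.ρi i) := by
  rw [dist_inr_inl, dist_self, add_zero]

/-- on `[0, a]`, an arc starting at `inrS x` stays in the `i`-th grafted tree -/
theorem memb1 {i : G.I} {x : {x : G.Ti i // x ≠ G.ρi i}} {t : G.Space}
    {f : Set.Icc (0:ℝ) (dist (inrS x : G.Space) t) → G.Space}
    (h : arcProp (inrS x) t f) (u : Set.Icc (0:ℝ) (dist (inrS x : G.Space) t))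
    (hu : u.1 ≤ dist (x : G.Ti i) (G.ρi i)) : f u ∈ Set.range (emb i) := by
  have hd := arc_dist_left h u
  rcases hfu : f u with b | ⟨k, y⟩
  · rw [hfu] at hd
    rw [show (Sum.inl b : G.Space) = inlS b from rfl, dist_inr_inl] at hd
    have hb : dist (G.sig i) b = 0 := by
      have := dist_nonneg (α := G.T) (x := G.sig i) (y := b)
      linarith
    have : b = G.sig i := (dist_eq_zero.1 hb).symm
    rw [this]
    exact ⟨G.ρi i, emb_root i⟩
  · by_cases hk : k = i
    · subst hk
      exact ⟨(y : G.Ti k), by rw [emb_sub]⟩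
    · exfalso
      rw [hfu] at hd
      rw [show (Sum.inr ⟨k, y⟩ : G.Space) = inrS y from rfl, dist_inr_inr_ne (fun hh => hk hh.symm)] at hd
      have h1 := gdist_pos_ne_root (G := G) y
      have h2 : (0:ℝ) ≤ dist (G.sig i) (G.sig k) := dist_nonneg
      linarith

/-- the junction value of an arc from `inrS x` to `inlS b` -/
theorem junction_rl {i : G.I} {x : {x : G.Ti i // x ≠ G.ρi i}} {b : G.T}
    {f : Set.Icc (0:ℝ) (dist (inrS x : G.Space) (inlS b)) → G.Space}
    (h : arcProp (inrS x) (inlS b) f)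
    (ha : dist (x : G.Ti i) (G.ρi i) ∈ Set.Icc (0:ℝ) (dist (inrS x : G.Space) (inlS b))) :
    f ⟨dist (x : G.Ti i) (G.ρi i), ha⟩ = inlS (G.sig i) := by
  have hL : dist (inrS x : G.Space) (inlS b) =
      dist (x : G.Ti i) (G.ρi i) + dist (G.sig i) b := dist_inr_inl b i x
  have hd1 := arc_dist_left h ⟨_, ha⟩
  have hd2 := arc_dist_right h ⟨_, ha⟩
  rcases hfa : f ⟨_, ha⟩ with b' | ⟨k, y⟩
  · rw [hfa] at hd1
    rw [show (Sum.inl b' : G.Space) = inlS b' from rfl, dist_inr_inl] at hd1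
    have hb : dist (G.sig i) b' = 0 := by linarith
    rw [show (Sum.inl b' : G.Space) = inlS b' from rfl, (dist_eq_zero.1 hb)]
  · exfalso
    by_cases hk : k = i
    · subst hk
      rw [hfa] at hd2
      rw [show (Sum.inr ⟨k, y⟩ : G.Space) = inrS y from rfl, dist_inr_inl] at hd2
      have := gdist_pos_ne_root (G := G) y
      linarith
    · rw [hfa] at hd1
      rw [show (Sum.inr ⟨k, y⟩ : G.Space) = inrS y from rfl,
        dist_inr_inr_ne (fun hh => hk hh.symm)] at hd1
      have h1 := gdist_pos_ne_root (G := G) y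
      have h2 : (0:ℝ) ≤ dist (G.sig i) (G.sig k) := dist_nonneg
      linarith

/-- past the junction, an arc from `inrS x` to `inlS b` stays in the base tree -/
theorem memb2_rl {i : G.I} {x : {x : G.Ti i // x ≠ G.ρi i}} {b : G.T}
    {f : Set.Icc (0:ℝ) (dist (inrS x : G.Space) (inlS b)) → G.Space}
    (h : arcProp (inrS x) (inlS b) f) (u : Set.Icc (0:ℝ) (dist (inrS x : G.Space) (inlS b)))
    (hu : dist (x : G.Ti i) (G.ρi i) ≤ u.1) : f u ∈ Set.range (inlS : G.T → G.Space) := by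
  have hL : dist (inrS x : G.Space) (inlS b) =
      dist (x : G.Ti i) (G.ρi i) + dist (G.sig i) b := dist_inr_inl b i x
  have ha : dist (x : G.Ti i) (G.ρi i) ∈
      Set.Icc (0:ℝ) (dist (inrS x : G.Space) (inlS b)) := by
    constructor
    · exact dist_nonneg
    · rw [hL]; linarith [dist_nonneg (α := G.T) (x := G.sig i) (y := b)]
  have hj := junction_rl h ha
  have hd2 := arc_dist_right h u
  have hmid := arc_dist h ⟨_, ha⟩ u
  rw [hj] at hmid
  rw [abs_of_nonpos (by dsimp only; linarith)] at hmid
  rcases hfu : f u with c | ⟨k, y⟩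
  · exact ⟨c, rfl⟩
  · exfalso
    rw [hfu] at hmid hd2
    rw [show (Sum.inr ⟨k, y⟩ : G.Space) = inrS y from rfl] at hmid hd2
    rw [show dist (inlS (G.sig i) : G.Space) (inrS y) =
      dist (y : G.Ti k) (G.ρi k) + dist (G.sig k) (G.sig i) from dist_inl_inr _ k y] at hmid
    rw [dist_inr_inl] at hd2
    have htri : dist (G.sig i) b ≤ dist (G.sig i) (G.sig k) + dist (G.sig k) b :=
      dist_triangle _ _ _
    have hcomm : dist (G.sig k) (G.sig i) = dist (G.sig i) (G.sig k) := dist_comm _ _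
    have hy := gdist_pos_ne_root (G := G) y
    linarith

/-- the junction value of an arc between different grafted trees -/
theorem junction_rr {i j : G.I} (hij : i ≠ j) {x : {x : G.Ti i // x ≠ G.ρi i}}
    {y : {x : G.Ti j // x ≠ G.ρi j}}
    {f : Set.Icc (0:ℝ) (dist (inrS x : G.Space) (inrS y)) → G.Space}
    (h : arcProp (inrS x) (inrS y) f)
    (ha : dist (x : G.Ti i) (G.ρi i) ∈ Set.Icc (0:ℝ) (dist (inrS x : G.Space) (inrS y))) :
    f ⟨dist (x : G.Ti i) (G.ρi i), ha⟩ = inlS (G.sig i) := by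
  have hL : dist (inrS x : G.Space) (inrS y) = dist (x : G.Ti i) (G.ρi i) +
      dist (G.sig i) (G.sig j) + dist (y : G.Ti j) (G.ρi j) := dist_inr_inr_ne hij x y
  have hd1 := arc_dist_left h ⟨_, ha⟩
  have hd2 := arc_dist_right h ⟨_, ha⟩
  rcases hfa : f ⟨_, ha⟩ with b' | ⟨k, y'⟩
  · rw [hfa] at hd1
    rw [show (Sum.inl b' : G.Space) = inlS b' from rfl, dist_inr_inl] at hd1
    have hb : dist (G.sig i) b' = 0 := by linarith
    rw [show (Sum.inl b' : G.Space) = inlS b' from rfl, (dist_eq_zero.1 hb)]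
  · exfalso
    rw [hfa] at hd1 hd2
    rw [show (Sum.inr ⟨k, y'⟩ : G.Space) = inrS y' from rfl] at hd1 hd2
    by_cases hk : k = i
    · subst hk
      by_cases hkj : k = j
      · exact hij hkj
      rw [dist_inr_inr_ne hkj] at hd2
      have := gdist_pos_ne_root (G := G) y'
      linarith
    · rw [dist_inr_inr_ne (fun hh => hk hh.symm)] at hd1
      have h1 := gdist_pos_ne_root (G := G) y'
      have h2 : (0:ℝ) ≤ dist (G.sig i) (G.sig k) := dist_nonneg
      linarith

/-- an arc between two points of the base tree stays in the base tree -/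
theorem memb_ll {a b : G.T} {f : Set.Icc (0:ℝ) (dist (inlS a : G.Space) (inlS b)) → G.Space}
    (h : arcProp (inlS a) (inlS b) f) (u : Set.Icc (0:ℝ) (dist (inlS a : G.Space) (inlS b))) :
    f u ∈ Set.range (inlS : G.T → G.Space) := by
  have hd1 := arc_dist_left h u
  have hd2 := arc_dist_right h u
  rcases hfu : f u with c | ⟨k, y⟩
  · exact ⟨c, rfl⟩
  · exfalso
    rw [hfu] at hd1 hd2
    rw [show (Sum.inr ⟨k, y⟩ : G.Space) = inrS y from rfl] at hd1 hd2
    rw [show dist (inlS a : G.Space) (inrS y) =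
      dist (y : G.Ti k) (G.ρi k) + dist (G.sig k) a from dist_inl_inr a k y] at hd1
    rw [dist_inr_inl] at hd2
    have hL : dist (inlS a : G.Space) (inlS b) = dist a b := rfl
    have htri : dist a b ≤ dist a (G.sig k) + dist (G.sig k) b := dist_triangle _ _ _
    have hcomm : dist (G.sig k) a = dist a (G.sig k) := dist_comm _ _
    have hy := gdist_pos_ne_root (G := G) y
    linarith

/-- an arc between two points of the same grafted tree stays in that tree -/
theorem memb_rr_same {i : G.I} {x y : {x : G.Ti i // x ≠ G.ρi i}}
    {f : Set.Icc (0:ℝ) (dist (inrS x : G.Space) (inrS y)) → G.Space}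
    (h : arcProp (inrS x) (inrS y) f) (u : Set.Icc (0:ℝ) (dist (inrS x : G.Space) (inrS y))) :
    f u ∈ Set.range (emb i) := by
  have hd1 := arc_dist_left h u
  have hd2 := arc_dist_right h u
  have hL : dist (inrS x : G.Space) (inrS y) = dist (x : G.Ti i) (y : G.Ti i) :=
    dist_inr_inr_same i x y
  have htri : dist (x : G.Ti i) (y : G.Ti i) ≤
      dist (x : G.Ti i) (G.ρi i) + dist (G.ρi i) (y : G.Ti i) := dist_triangle _ _ _
  rcases hfu : f u with c | ⟨k, y'⟩
  · rw [hfu] at hd1 hd2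
    rw [show (Sum.inl c : G.Space) = inlS c from rfl] at hd1 hd2
    rw [show dist (inrS x : G.Space) (inlS c) =
      dist (x : G.Ti i) (G.ρi i) + dist (G.sig i) c from dist_inr_inl c i x] at hd1
    rw [show dist (inlS c : G.Space) (inrS y) =
      dist (y : G.Ti i) (G.ρi i) + dist (G.sig i) c from dist_inl_inr c i y] at hd2
    have hc : dist (G.sig i) c = 0 := by
      have h1 : (0:ℝ) ≤ dist (G.sig i) c := dist_nonneg
      have hcm : dist (G.ρi i) (y : G.Ti i) = dist (y : G.Ti i) (G.ρi i) := dist_comm _ _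
      linarith
    rw [show (Sum.inl c : G.Space) = inlS c from rfl, ← (dist_eq_zero.1 hc)]
    exact ⟨G.ρi i, emb_root i⟩
  · by_cases hk : k = i
    · subst hk
      exact ⟨(y' : G.Ti k), by rw [emb_sub]⟩
    · exfalso
      rw [hfu] at hd1 hd2
      rw [show (Sum.inr ⟨k, y'⟩ : G.Space) = inrS y' from rfl] at hd1 hd2
      rw [dist_inr_inr_ne (fun hh => hk hh.symm)] at hd1
      rw [dist_inr_inr_ne hk] at hd2
      have h1 := gdist_pos_ne_root (G := G) y'
      have h2 : (0:ℝ) ≤ dist (G.sig i) (G.sig k) := dist_nonneg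
      have hcm : dist (G.sig k) (G.sig i) = dist (G.sig i) (G.sig k) := dist_comm _ _
      have hcm2 : dist (G.ρi i) (y : G.Ti i) = dist (y : G.Ti i) (G.ρi i) := dist_comm _ _
      linarith

end GraftSetup
namespace GraftSetup

variable {G : GraftSetup}

theorem arc_eval_congr {X : Type*} [MetricSpace X] {L : ℝ} (f : Set.Icc (0:ℝ) L → X)
    {aa bb : ℝ} (pa : aa ∈ Set.Icc (0:ℝ) L) (pb : bb ∈ Set.Icc (0:ℝ) L) (h : aa = bb) :
    f ⟨aa, pa⟩ = f ⟨bb, pb⟩ := by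
  congr 1; exact Subtype.ext h

theorem det_ll (hT : IsRealTree G.T) {a b : G.T}
    {f f' : Set.Icc (0:ℝ) (dist (inlS a : G.Space) (inlS b)) → G.Space}
    (hf : arcProp (inlS a) (inlS b) f) (hf' : arcProp (inlS a) (inlS b) f') : f = f' :=
  arc_unique_via isometry_inl rfl rfl (fun g g' hg hg' => (hT.1 a b).unique hg hg')
    hf hf' (memb_ll hf) (memb_ll hf')

theorem det_rr_same (hTi : ∀ i, IsRealTree (G.Ti i)) {i : G.I}
    {x y : {x : G.Ti i // x ≠ G.ρi i}}
    {f f' : Set.Icc (0:ℝ) (dist (inrS x : G.Space) (inrS y)) → G.Space}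
    (hf : arcProp (inrS x) (inrS y) f) (hf' : arcProp (inrS x) (inrS y) f') : f = f' :=
  arc_unique_via (isometry_emb i) (emb_sub x).symm (emb_sub y).symm
    (fun g g' hg hg' => ((hTi i).1 _ _).unique hg hg')
    hf hf' (memb_rr_same hf) (memb_rr_same hf')

theorem mem_Icc_rl {i : G.I} (x : {x : G.Ti i // x ≠ G.ρi i}) (b : G.T) :
    dist (x : G.Ti i) (G.ρi i) ∈ Set.Icc (0:ℝ) (dist (inrS x : G.Space) (inlS b)) := by
  refine ⟨dist_nonneg, ?_⟩
  rw [dist_inr_inl]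
  linarith [dist_nonneg (α := G.T) (x := G.sig i) (y := b)]

theorem det_rl (hT : IsRealTree G.T) (hTi : ∀ i, IsRealTree (G.Ti i)) {i : G.I}
    {x : {x : G.Ti i // x ≠ G.ρi i}} {b : G.T}
    {f f' : Set.Icc (0:ℝ) (dist (inrS x : G.Space) (inlS b)) → G.Space}
    (hf : arcProp (inrS x) (inlS b) f) (hf' : arcProp (inrS x) (inlS b) f') : f = f' := by
  set a := dist (x : G.Ti i) (G.ρi i) with haa
  have ha : a ∈ Set.Icc (0:ℝ) (dist (inrS x : G.Space) (inlS b)) := mem_Icc_rl x b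
  have hj := junction_rl hf ha
  have hj' := junction_rl hf' ha
  have hL : dist (inrS x : G.Space) (inlS b) = a + dist (G.sig i) b := dist_inr_inl b i x
  funext u
  rcases le_total u.1 a with hu | hu
  · have C1 := castArc_arcProp rfl hj (arc_restrict_left hf ha)
    have C1' := castArc_arcProp rfl hj' (arc_restrict_left hf' ha)
    have heq := arc_unique_via (isometry_emb i) (emb_sub x).symm (emb_root i).symm
      (fun g g' hg hg' => ((hTi i).1 _ _).unique hg hg') C1 C1'
      (fun v => memb1 hf _ (le_trans v.2.2 (le_of_eq (dist_inr_inl_sig x))))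
      (fun v => memb1 hf' _ (le_trans v.2.2 (le_of_eq (dist_inr_inl_sig x))))
    exact congrFun heq ⟨u.1, ⟨u.2.1, by rw [dist_inr_inl_sig]; exact hu⟩⟩
  · have C2 := castArc_arcProp hj rfl (arc_restrict_right hf ha)
    have C2' := castArc_arcProp hj' rfl (arc_restrict_right hf' ha)
    have heq := arc_unique_via (isometry_inl (G := G)) rfl rfl
      (fun g g' hg hg' => (hT.1 _ _).unique hg hg') C2 C2'
      (fun v => memb2_rl hf _ (by dsimp only; linarith [v.2.1]))
      (fun v => memb2_rl hf' _ (by dsimp only; linarith [v.2.1]))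
    have hp : u.1 - a ∈ Set.Icc (0:ℝ) (dist (inlS (G.sig i) : G.Space) (inlS b)) := by
      constructor
      · linarith
      · show u.1 - a ≤ dist (G.sig i) b
        linarith [u.2.2, hL]
    have h2 := congrFun heq ⟨u.1 - a, hp⟩
    have q : a + (u.1 - a) ∈ Set.Icc (0:ℝ) (dist (inrS x : G.Space) (inlS b)) :=
      ⟨by linarith [u.2.1], by linarith [u.2.2]⟩
    exact (arc_eval_congr f u.2 q (by ring)).trans
      (h2.trans (arc_eval_congr f' q u.2 (by ring)))

theorem det_lr (hT : IsRealTree G.T) (hTi : ∀ i, IsRealTree (G.Ti i)) {i : G.I}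
    {x : {x : G.Ti i // x ≠ G.ρi i}} {b : G.T}
    {f f' : Set.Icc (0:ℝ) (dist (inlS b : G.Space) (inrS x)) → G.Space}
    (hf : arcProp (inlS b) (inrS x) f) (hf' : arcProp (inlS b) (inrS x) f') : f = f' := by
  apply revArc_inj (s := (inlS b : G.Space)) (t := inrS x)
  exact det_rl hT hTi (revArc_arcProp hf) (revArc_arcProp hf')

theorem mem_Icc_rr {i j : G.I} (hij : i ≠ j) (x : {x : G.Ti i // x ≠ G.ρi i})
    (y : {x : G.Ti j // x ≠ G.ρi j}) :
    dist (x : G.Ti i) (G.ρi i) ∈ Set.Icc (0:ℝ) (dist (inrS x : G.Space) (inrS y)) := by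
  refine ⟨dist_nonneg, ?_⟩
  rw [dist_inr_inr_ne hij]
  linarith [dist_nonneg (α := G.T) (x := G.sig i) (y := G.sig j), gdist_pos_ne_root (G := G) y]

theorem det_rr_ne (hT : IsRealTree G.T) (hTi : ∀ i, IsRealTree (G.Ti i)) {i j : G.I}
    (hij : i ≠ j) {x : {x : G.Ti i // x ≠ G.ρi i}} {y : {x : G.Ti j // x ≠ G.ρi j}}
    {f f' : Set.Icc (0:ℝ) (dist (inrS x : G.Space) (inrS y)) → G.Space}
    (hf : arcProp (inrS x) (inrS y) f) (hf' : arcProp (inrS x) (inrS y) f') : f = f' := by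
  set a := dist (x : G.Ti i) (G.ρi i) with haa
  have ha : a ∈ Set.Icc (0:ℝ) (dist (inrS x : G.Space) (inrS y)) := mem_Icc_rr hij x y
  have hj := junction_rr hij hf ha
  have hj' := junction_rr hij hf' ha
  have hL : dist (inrS x : G.Space) (inrS y) =
      a + dist (G.sig i) (G.sig j) + dist (y : G.Ti j) (G.ρi j) := dist_inr_inr_ne hij x y
  funext u
  rcases le_total u.1 a with hu | hu
  · have C1 := castArc_arcProp rfl hj (arc_restrict_left hf ha)
    have C1' := castArc_arcProp rfl hj' (arc_restrict_left hf' ha)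
    have heq := det_rl hT hTi C1 C1'
    exact congrFun heq ⟨u.1, ⟨u.2.1, by rw [dist_inr_inl_sig]; exact hu⟩⟩
  · have C2 := castArc_arcProp hj rfl (arc_restrict_right hf ha)
    have C2' := castArc_arcProp hj' rfl (arc_restrict_right hf' ha)
    have heq := det_lr hT hTi C2 C2'
    have hp : u.1 - a ∈ Set.Icc (0:ℝ) (dist (inlS (G.sig i) : G.Space) (inrS y)) := by
      constructor
      · linarith
      · rw [show dist (inlS (G.sig i) : G.Space) (inrS y) =
          dist (y : G.Ti j) (G.ρi j) + dist (G.sig j) (G.sig i) from dist_inl_inr _ j y]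
        have hcm : dist (G.sig j) (G.sig i) = dist (G.sig i) (G.sig j) := dist_comm _ _
        linarith [u.2.2, hL]
    have h2 := congrFun heq ⟨u.1 - a, hp⟩
    have q : a + (u.1 - a) ∈ Set.Icc (0:ℝ) (dist (inrS x : G.Space) (inrS y)) :=
      ⟨by linarith [u.2.1], by linarith [u.2.2]⟩
    exact (arc_eval_congr f u.2 q (by ring)).trans
      (h2.trans (arc_eval_congr f' q u.2 (by ring)))

end GraftSetup
namespace GraftSetup

variable {G : GraftSetup}

noncomputable def canLL (hT : IsRealTree G.T) (a b : G.T) :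
    Set.Icc (0:ℝ) (dist (inlS a : G.Space) (inlS b)) → G.Space :=
  compArc inlS isometry_inl a b (hT.1 a b).choose

theorem canLL_arcProp (hT : IsRealTree G.T) (a b : G.T) :
    arcProp (inlS a) (inlS b) (canLL (G := G) hT a b) :=
  compArc_arcProp isometry_inl (hT.1 a b).choose_spec.1

theorem canLL_range (hT : IsRealTree G.T) (a b : G.T) :
    Set.range (canLL (G := G) hT a b) =
      (inlS : G.T → G.Space) '' Set.range (hT.1 a b).choose :=
  compArc_range _ _ _ _ _

noncomputable def canRRsame (hTi : ∀ i, IsRealTree (G.Ti i)) (i : G.I)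
    (x y : {x : G.Ti i // x ≠ G.ρi i}) :
    Set.Icc (0:ℝ) (dist (inrS x : G.Space) (inrS y)) → G.Space :=
  castArc (emb_sub x) (emb_sub y)
    (compArc (emb i) (isometry_emb i) (x : G.Ti i) (y : G.Ti i)
      (((hTi i).1 (x : G.Ti i) (y : G.Ti i)).choose))

theorem canRRsame_arcProp (hTi : ∀ i, IsRealTree (G.Ti i)) (i : G.I)
    (x y : {x : G.Ti i // x ≠ G.ρi i}) :
    arcProp (inrS x) (inrS y) (canRRsame hTi i x y) :=
  castArc_arcProp _ _ (compArc_arcProp (isometry_emb i)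
    ((hTi i).1 (x : G.Ti i) (y : G.Ti i)).choose_spec.1)

theorem canRRsame_range (hTi : ∀ i, IsRealTree (G.Ti i)) (i : G.I)
    (x y : {x : G.Ti i // x ≠ G.ρi i}) :
    Set.range (canRRsame hTi i x y) =
      emb i '' Set.range ((hTi i).1 (x : G.Ti i) (y : G.Ti i)).choose := by
  rw [canRRsame, castArc_range, compArc_range]

theorem canRL_dist {i : G.I} (x : {x : G.Ti i // x ≠ G.ρi i}) (b : G.T) :
    dist (inrS x : G.Space) (inlS b) =
      dist (inrS x : G.Space) (inlS (G.sig i)) + dist (inlS (G.sig i) : G.Space) (inlS b) := by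
  rw [dist_inr_inl, dist_inr_inl_sig]
  rfl

noncomputable def canRL (hT : IsRealTree G.T) (hTi : ∀ i, IsRealTree (G.Ti i)) (i : G.I)
    (x : {x : G.Ti i // x ≠ G.ρi i}) (b : G.T) :
    Set.Icc (0:ℝ) (dist (inrS x : G.Space) (inlS b)) → G.Space :=
  concatArc (inrS x) (inlS (G.sig i)) (inlS b) (canRL_dist x b)
    (castArc (emb_sub x) (emb_root i)
      (compArc (emb i) (isometry_emb i) (x : G.Ti i) (G.ρi i)
        (((hTi i).1 (x : G.Ti i) (G.ρi i)).choose)))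
    (compArc inlS isometry_inl (G.sig i) b ((hT.1 (G.sig i) b).choose))

theorem canRL_arcProp (hT : IsRealTree G.T) (hTi : ∀ i, IsRealTree (G.Ti i)) (i : G.I)
    (x : {x : G.Ti i // x ≠ G.ρi i}) (b : G.T) :
    arcProp (inrS x) (inlS b) (canRL hT hTi i x b) :=
  concatArc_arcProp _
    (castArc_arcProp _ _ (compArc_arcProp (isometry_emb i)
      ((hTi i).1 (x : G.Ti i) (G.ρi i)).choose_spec.1))
    (compArc_arcProp isometry_inl (hT.1 (G.sig i) b).choose_spec.1)

theorem canRL_range (hT : IsRealTree G.T) (hTi : ∀ i, IsRealTree (G.Ti i)) (i : G.I)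
    (x : {x : G.Ti i // x ≠ G.ρi i}) (b : G.T) :
    Set.range (canRL hT hTi i x b) =
      emb i '' Set.range ((hTi i).1 (x : G.Ti i) (G.ρi i)).choose ∪
      (inlS : G.T → G.Space) '' Set.range ((hT.1 (G.sig i) b).choose) := by
  rw [canRL, concatArc_range _ (castArc_arcProp _ _ (compArc_arcProp (isometry_emb i)
      ((hTi i).1 (x : G.Ti i) (G.ρi i)).choose_spec.1))
      (compArc_arcProp isometry_inl (hT.1 (G.sig i) b).choose_spec.1),
    castArc_range, compArc_range, compArc_range]

noncomputable def canLR (hT : IsRealTree G.T) (hTi : ∀ i, IsRealTree (G.Ti i)) (i : G.I)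
    (b : G.T) (x : {x : G.Ti i // x ≠ G.ρi i}) :
    Set.Icc (0:ℝ) (dist (inlS b : G.Space) (inrS x)) → G.Space :=
  revArc (inrS x) (inlS b) (canRL hT hTi i x b)

theorem canLR_arcProp (hT : IsRealTree G.T) (hTi : ∀ i, IsRealTree (G.Ti i)) (i : G.I)
    (b : G.T) (x : {x : G.Ti i // x ≠ G.ρi i}) :
    arcProp (inlS b) (inrS x) (canLR hT hTi i b x) :=
  revArc_arcProp (canRL_arcProp hT hTi i x b)

theorem canLR_range (hT : IsRealTree G.T) (hTi : ∀ i, IsRealTree (G.Ti i)) (i : G.I)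
    (b : G.T) (x : {x : G.Ti i // x ≠ G.ρi i}) :
    Set.range (canLR hT hTi i b x) =
      emb i '' Set.range ((hTi i).1 (x : G.Ti i) (G.ρi i)).choose ∪
      (inlS : G.T → G.Space) '' Set.range ((hT.1 (G.sig i) b).choose) := by
  rw [canLR, revArc_range, canRL_range]

theorem canRRne_dist {i j : G.I} (hij : i ≠ j) (x : {x : G.Ti i // x ≠ G.ρi i})
    (y : {x : G.Ti j // x ≠ G.ρi j}) :
    dist (inrS x : G.Space) (inrS y) =
      dist (inrS x : G.Space) (inlS (G.sig i)) +
        dist (inlS (G.sig i) : G.Space) (inrS y) := by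
  rw [dist_inr_inr_ne hij, dist_inr_inl_sig, dist_inl_inr]
  have := dist_comm (G.sig j) (G.sig i)
  linarith

noncomputable def canRRne (hT : IsRealTree G.T) (hTi : ∀ i, IsRealTree (G.Ti i)) {i j : G.I}
    (hij : i ≠ j) (x : {x : G.Ti i // x ≠ G.ρi i}) (y : {x : G.Ti j // x ≠ G.ρi j}) :
    Set.Icc (0:ℝ) (dist (inrS x : G.Space) (inrS y)) → G.Space :=
  concatArc (inrS x) (inlS (G.sig i)) (inrS y) (canRRne_dist hij x y)
    (castArc (emb_sub x) (emb_root i)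
      (compArc (emb i) (isometry_emb i) (x : G.Ti i) (G.ρi i)
        (((hTi i).1 (x : G.Ti i) (G.ρi i)).choose)))
    (canLR hT hTi j (G.sig i) y)

theorem canRRne_arcProp (hT : IsRealTree G.T) (hTi : ∀ i, IsRealTree (G.Ti i)) {i j : G.I}
    (hij : i ≠ j) (x : {x : G.Ti i // x ≠ G.ρi i}) (y : {x : G.Ti j // x ≠ G.ρi j}) :
    arcProp (inrS x) (inrS y) (canRRne hT hTi hij x y) :=
  concatArc_arcProp _
    (castArc_arcProp _ _ (compArc_arcProp (isometry_emb i)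
      ((hTi i).1 (x : G.Ti i) (G.ρi i)).choose_spec.1))
    (canLR_arcProp hT hTi j (G.sig i) y)

theorem canRRne_range (hT : IsRealTree G.T) (hTi : ∀ i, IsRealTree (G.Ti i)) {i j : G.I}
    (hij : i ≠ j) (x : {x : G.Ti i // x ≠ G.ρi i}) (y : {x : G.Ti j // x ≠ G.ρi j}) :
    Set.range (canRRne hT hTi hij x y) =
      emb i '' Set.range ((hTi i).1 (x : G.Ti i) (G.ρi i)).choose ∪
      (emb j '' Set.range ((hTi j).1 (y : G.Ti j) (G.ρi j)).choose ∪
       (inlS : G.T → G.Space) '' Set.range ((hT.1 (G.sig j) (G.sig i)).choose)) := by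
  rw [canRRne, concatArc_range _ (castArc_arcProp _ _ (compArc_arcProp (isometry_emb i)
      ((hTi i).1 (x : G.Ti i) (G.ρi i)).choose_spec.1)) (canLR_arcProp hT hTi j (G.sig i) y),
    castArc_range, compArc_range, canLR_range]

theorem unique_arc (hT : IsRealTree G.T) (hTi : ∀ i, IsRealTree (G.Ti i)) :
    ∀ s t : G.Space, ∃! f : Set.Icc (0:ℝ) (dist s t) → G.Space, arcProp s t f := by
  intro s t
  rcases s with a | ⟨i, x⟩ <;> rcases t with b | ⟨j, y⟩
  · exact ⟨canLL hT a b, canLL_arcProp hT a b,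
      fun g hg => det_ll hT hg (canLL_arcProp hT a b)⟩
  · exact ⟨canLR hT hTi j a y, canLR_arcProp hT hTi j a y,
      fun g hg => det_lr hT hTi hg (canLR_arcProp hT hTi j a y)⟩
  · exact ⟨canRL hT hTi i x b, canRL_arcProp hT hTi i x b,
      fun g hg => det_rl hT hTi hg (canRL_arcProp hT hTi i x b)⟩
  · by_cases hij : i = j
    · subst hij
      exact ⟨canRRsame hTi i x y, canRRsame_arcProp hTi i x y,
        fun g hg => det_rr_same hTi hg (canRRsame_arcProp hTi i x y)⟩
    · exact ⟨canRRne hT hTi hij x y, canRRne_arcProp hT hTi hij x y,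
        fun g hg => det_rr_ne hT hTi hij hg (canRRne_arcProp hT hTi hij x y)⟩

end GraftSetup
namespace GraftSetup

variable {G : GraftSetup}

/-- reversal of the unit interval -/
def rev01 : Set.Icc (0:ℝ) 1 → Set.Icc (0:ℝ) 1 :=
  fun v => ⟨1 - v.1, ⟨by linarith [v.2.2], by linarith [v.2.1]⟩⟩

theorem rev01_continuous : Continuous (rev01) :=
  Continuous.subtype_mk (continuous_const.sub continuous_subtype_val) _

theorem rev01_injective : Function.Injective (rev01) := by
  intro u v h
  have := congrArg Subtype.val h
  simp only [rev01] at this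
  exact Subtype.ext (by linarith)

theorem rev01_surjective : Function.Surjective (rev01) := by
  intro v
  exact ⟨⟨1 - v.1, ⟨by linarith [v.2.2], by linarith [v.2.1]⟩⟩, Subtype.ext (by simp [rev01])⟩

theorem range_comp_rev01 {α : Type*} (q : Set.Icc (0:ℝ) 1 → α) :
    Set.range (q ∘ rev01) = Set.range q := by
  ext z
  constructor
  · rintro ⟨v, rfl⟩; exact ⟨rev01 v, rfl⟩
  · rintro ⟨v, rfl⟩
    obtain ⟨w, hw⟩ := rev01_surjective v
    exact ⟨w, by simp [Function.comp, hw]⟩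

theorem image_piece_full {α : Type*} (q : Set.Icc (0:ℝ) 1 → α) :
    q '' {v : Set.Icc (0:ℝ) 1 | 0 ≤ v.1 ∧ v.1 ≤ 1} = Set.range q := by
  ext z
  constructor
  · rintro ⟨v, _, rfl⟩; exact ⟨v, rfl⟩
  · rintro ⟨v, rfl⟩; exact ⟨v, ⟨v.2.1, v.2.2⟩, rfl⟩

theorem range_eq_union2 {α : Type*} (q : Set.Icc (0:ℝ) 1 → α) {c : ℝ} :
    Set.range q = q '' {v : Set.Icc (0:ℝ) 1 | 0 ≤ v.1 ∧ v.1 ≤ c} ∪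
      q '' {v : Set.Icc (0:ℝ) 1 | c ≤ v.1 ∧ v.1 ≤ 1} := by
  ext z
  constructor
  · rintro ⟨v, rfl⟩
    rcases le_total v.1 c with h | h
    · exact Or.inl ⟨v, ⟨v.2.1, h⟩, rfl⟩
    · exact Or.inr ⟨v, ⟨h, v.2.2⟩, rfl⟩
  · rintro (⟨v, _, rfl⟩ | ⟨v, _, rfl⟩) <;> exact ⟨v, rfl⟩

theorem range_eq_union3 {α : Type*} (q : Set.Icc (0:ℝ) 1 → α) {c d : ℝ} (hcd : c ≤ d) :
    Set.range q = q '' {v : Set.Icc (0:ℝ) 1 | 0 ≤ v.1 ∧ v.1 ≤ c} ∪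
      (q '' {v : Set.Icc (0:ℝ) 1 | d ≤ v.1 ∧ v.1 ≤ 1} ∪
       q '' {v : Set.Icc (0:ℝ) 1 | c ≤ v.1 ∧ v.1 ≤ d}) := by
  ext z
  constructor
  · rintro ⟨v, rfl⟩
    rcases le_total v.1 c with h | h
    · exact Or.inl ⟨v, ⟨v.2.1, h⟩, rfl⟩
    · rcases le_total v.1 d with h2 | h2
      · exact Or.inr (Or.inr ⟨v, ⟨h, h2⟩, rfl⟩)
      · exact Or.inr (Or.inl ⟨v, ⟨h2, v.2.2⟩, rfl⟩)
  · rintro (⟨v, _, rfl⟩ | ⟨v, _, rfl⟩ | ⟨v, _, rfl⟩) <;> exact ⟨v, rfl⟩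

theorem p2_ll (hT : IsRealTree G.T) (hTi : ∀ i, IsRealTree (G.Ti i)) {a b : G.T}
    (q : Set.Icc (0:ℝ) 1 → G.Space) (hqc : Continuous q) (hqi : Function.Injective q)
    (h0 : q ⟨0, Set.left_mem_Icc.2 zero_le_one⟩ = inlS a)
    (h1 : q ⟨1, Set.right_mem_Icc.2 zero_le_one⟩ = inlS b) :
    ∀ f : Set.Icc (0:ℝ) (dist (inlS a : G.Space) (inlS b)) → G.Space,
      arcProp (inlS a) (inlS b) f → Set.range q = Set.range f := by
  intro f hf
  have hdet : f = canLL hT a b := det_ll hT hf (canLL_arcProp hT a b)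
  rw [hdet, canLL_range]
  set Qr : ℝ → G.Space := fun v => q (Set.projIcc 0 1 zero_le_one v) with hQr
  have hQc : Continuous Qr := hqc.comp continuous_projIcc
  have hq' : ∀ v : Set.Icc (0:ℝ) 1, Qr v.1 = q v := by
    intro v
    simp only [hQr]
    rw [Set.projIcc_val]
  have hQinj : Set.InjOn Qr (Set.Icc 0 1) := by
    intro u hu v hv h
    have h1' : q ⟨u, hu⟩ = q ⟨v, hv⟩ :=
      (hq' ⟨u, hu⟩).symm.trans (h.trans (hq' ⟨v, hv⟩))
    exact congrArg Subtype.val (hqi h1')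
  have hmem : ∀ v : Set.Icc (0:ℝ) 1, q v ∈ Set.range (inlS : G.T → G.Space) := by
    intro v
    rcases hv : q v with c | ⟨k, y⟩
    · exact ⟨c, rfl⟩
    · exfalso
      have hg := gate1 (isOpen_P k) (closure_P k) hQc hQinj
        (by rw [hq' ⟨0, Set.left_mem_Icc.2 zero_le_one⟩, h0]; exact not_mem_P_inl a)
        (by rw [hq' ⟨1, Set.right_mem_Icc.2 zero_le_one⟩, h1]; exact not_mem_P_inl b)
        v.1 v.2
      rw [hq' v, hv] at hg
      exact hg (mem_P_inr y)
  obtain ⟨z, w, hz, hw, hkey⟩ := piece isometry_inl hT hqc hqi (le_refl (0:ℝ)) zero_le_one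
    (le_refl (1:ℝ)) (fun v _ _ => hmem v)
  have hza : z = a := Sum.inl_injective ((hz.symm.trans h0) : inlS z = inlS a)
  have hwb : w = b := Sum.inl_injective ((hw.symm.trans h1) : inlS w = inlS b)
  rw [hza, hwb] at hkey
  rw [← image_piece_full q]
  exact hkey (hT.1 a b).choose (hT.1 a b).choose_spec.1

theorem p2_rr_same (hT : IsRealTree G.T) (hTi : ∀ i, IsRealTree (G.Ti i)) {i : G.I}
    {x y : {x : G.Ti i // x ≠ G.ρi i}}
    (q : Set.Icc (0:ℝ) 1 → G.Space) (hqc : Continuous q) (hqi : Function.Injective q)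
    (h0 : q ⟨0, Set.left_mem_Icc.2 zero_le_one⟩ = inrS x)
    (h1 : q ⟨1, Set.right_mem_Icc.2 zero_le_one⟩ = inrS y) :
    ∀ f : Set.Icc (0:ℝ) (dist (inrS x : G.Space) (inrS y)) → G.Space,
      arcProp (inrS x) (inrS y) f → Set.range q = Set.range f := by
  intro f hf
  have hdet : f = canRRsame hTi i x y := det_rr_same hTi hf (canRRsame_arcProp hTi i x y)
  rw [hdet, canRRsame_range]
  set Qr : ℝ → G.Space := fun v => q (Set.projIcc 0 1 zero_le_one v) with hQr
  have hQc : Continuous Qr := hqc.comp continuous_projIcc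
  have hq' : ∀ v : Set.Icc (0:ℝ) 1, Qr v.1 = q v := by
    intro v
    simp only [hQr]
    rw [Set.projIcc_val]
  have hQinj : Set.InjOn Qr (Set.Icc 0 1) := by
    intro u hu v hv h
    have h1' : q ⟨u, hu⟩ = q ⟨v, hv⟩ :=
      (hq' ⟨u, hu⟩).symm.trans (h.trans (hq' ⟨v, hv⟩))
    exact congrArg Subtype.val (hqi h1')
  have hmem : ∀ v : Set.Icc (0:ℝ) 1, q v ∈ Set.range (emb i) := by
    intro v
    have hg := gate1 ((isClosed_range_emb i).isOpen_compl) (closure_compl_range_emb i)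
      hQc hQinj
      (by rw [hq' ⟨0, Set.left_mem_Icc.2 zero_le_one⟩, h0]
          exact not_not.2 (P_subset_range_emb i (mem_P_inr x)))
      (by rw [hq' ⟨1, Set.right_mem_Icc.2 zero_le_one⟩, h1]
          exact not_not.2 (P_subset_range_emb i (mem_P_inr y)))
      v.1 v.2
    rw [hq' v] at hg
    exact not_not.1 hg
  obtain ⟨z, w, hz, hw, hkey⟩ := piece (isometry_emb i) (hTi i) hqc hqi (le_refl (0:ℝ))
    zero_le_one (le_refl (1:ℝ)) (fun v _ _ => hmem v)
  have hza : z = (x : G.Ti i) := (isometry_emb i).injective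
    ((hz.symm.trans h0).trans (emb_sub x).symm)
  have hwb : w = (y : G.Ti i) := (isometry_emb i).injective
    ((hw.symm.trans h1).trans (emb_sub y).symm)
  rw [hza, hwb] at hkey
  rw [← image_piece_full q]
  exact hkey _ ((hTi i).1 _ _).choose_spec.1

end GraftSetup
namespace GraftSetup

variable {G : GraftSetup}

theorem p2_rl (hT : IsRealTree G.T) (hTi : ∀ i, IsRealTree (G.Ti i)) {i : G.I}
    {x : {x : G.Ti i // x ≠ G.ρi i}} {b : G.T}
    (q : Set.Icc (0:ℝ) 1 → G.Space) (hqc : Continuous q) (hqi : Function.Injective q)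
    (h0 : q ⟨0, Set.left_mem_Icc.2 zero_le_one⟩ = inrS x)
    (h1 : q ⟨1, Set.right_mem_Icc.2 zero_le_one⟩ = inlS b) :
    ∀ f : Set.Icc (0:ℝ) (dist (inrS x : G.Space) (inlS b)) → G.Space,
      arcProp (inrS x) (inlS b) f → Set.range q = Set.range f := by
  intro f hf
  rw [det_rl hT hTi hf (canRL_arcProp hT hTi i x b), canRL_range]
  set Qr : ℝ → G.Space := fun v => q (Set.projIcc 0 1 zero_le_one v) with hQr
  have hQc : Continuous Qr := hqc.comp continuous_projIcc
  have hq' : ∀ v : Set.Icc (0:ℝ) 1, Qr v.1 = q v := by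
    intro v
    simp only [hQr]
    rw [Set.projIcc_val]
  have hQinj : Set.InjOn Qr (Set.Icc 0 1) := by
    intro u hu v hv h
    have h1' : q ⟨u, hu⟩ = q ⟨v, hv⟩ :=
      (hq' ⟨u, hu⟩).symm.trans (h.trans (hq' ⟨v, hv⟩))
    exact congrArg Subtype.val (hqi h1')
  have hnk : ∀ k, k ≠ i → ∀ v : Set.Icc (0:ℝ) 1, q v ∉ P k := by
    intro k hk v
    have hg := gate1 (isOpen_P k) (closure_P k) hQc hQinj
      (by rw [hq' ⟨0, Set.left_mem_Icc.2 zero_le_one⟩, h0]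
          exact not_mem_P_inr_ne (Ne.symm hk) x)
      (by rw [hq' ⟨1, Set.right_mem_Icc.2 zero_le_one⟩, h1]; exact not_mem_P_inl b)
      v.1 v.2
    rwa [hq' v] at hg
  obtain ⟨c, ⟨hc0, hc1⟩, hcb, hbef, haft⟩ := gate2 (isOpen_P i) (closure_P i) hQc hQinj
    (by rw [hq' ⟨0, Set.left_mem_Icc.2 zero_le_one⟩, h0]; exact mem_P_inr x)
    (by rw [hq' ⟨1, Set.right_mem_Icc.2 zero_le_one⟩, h1]; exact not_mem_P_inl b)
  have hqcc : q ⟨c, ⟨hc0.le, hc1⟩⟩ = inlS (G.sig i) :=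
    (hq' ⟨c, ⟨hc0.le, hc1⟩⟩).symm.trans hcb
  have memA : ∀ v : Set.Icc (0:ℝ) 1, 0 ≤ v.1 → v.1 ≤ c → q v ∈ Set.range (emb i) := by
    intro v hv1 hv2
    rcases lt_or_eq_of_le hv2 with hlt | heq
    · have hg := hbef v.1 v.2.1 hlt
      rw [hq' v] at hg
      exact P_subset_range_emb i hg
    · have hv : v = ⟨c, ⟨hc0.le, hc1⟩⟩ := Subtype.ext heq
      rw [hv, hqcc]
      exact ⟨G.ρi i, emb_root i⟩
  have memB : ∀ v : Set.Icc (0:ℝ) 1, c ≤ v.1 → v.1 ≤ 1 →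
      q v ∈ Set.range (inlS : G.T → G.Space) := by
    intro v hv1 hv2
    rcases hv : q v with c' | ⟨k, y⟩
    · exact ⟨c', rfl⟩
    · exfalso
      by_cases hk : k = i
      · subst hk
        rcases lt_or_eq_of_le hv1 with hlt | heq
        · have hg := haft v.1 hlt v.2.2
          rw [hq' v, hv] at hg
          exact hg (mem_P_inr y)
        · have hvv : v = ⟨c, ⟨hc0.le, hc1⟩⟩ := Subtype.ext heq.symm
          rw [hvv, hqcc] at hv
          simp [inlS] at hv
      · have hg := hnk k hk v
        rw [hv] at hg
        exact hg (mem_P_inr y)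
  obtain ⟨z1, w1, hz1, hw1, hkey1⟩ := piece (isometry_emb i) (hTi i) hqc hqi
    (le_refl (0:ℝ)) hc0.le hc1 memA
  obtain ⟨z2, w2, hz2, hw2, hkey2⟩ := piece (isometry_inl (G := G)) hT hqc hqi
    hc0.le hc1 (le_refl (1:ℝ)) memB
  have hz1' : z1 = (x : G.Ti i) := (isometry_emb i).injective
    ((hz1.symm.trans h0).trans (emb_sub x).symm)
  have hw1' : w1 = G.ρi i := (isometry_emb i).injective
    ((hw1.symm.trans hqcc).trans (emb_root i).symm)
  have hz2' : z2 = G.sig i := Sum.inl_injective (hz2.symm.trans hqcc)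
  have hw2' : w2 = b := Sum.inl_injective (hw2.symm.trans h1)
  rw [hz1', hw1'] at hkey1
  rw [hz2', hw2'] at hkey2
  rw [range_eq_union2 q (c := c),
    hkey1 _ ((hTi i).1 (x : G.Ti i) (G.ρi i)).choose_spec.1,
    hkey2 _ (hT.1 (G.sig i) b).choose_spec.1]

theorem p2_lr (hT : IsRealTree G.T) (hTi : ∀ i, IsRealTree (G.Ti i)) {i : G.I}
    {x : {x : G.Ti i // x ≠ G.ρi i}} {b : G.T}
    (q : Set.Icc (0:ℝ) 1 → G.Space) (hqc : Continuous q) (hqi : Function.Injective q)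
    (h0 : q ⟨0, Set.left_mem_Icc.2 zero_le_one⟩ = inlS b)
    (h1 : q ⟨1, Set.right_mem_Icc.2 zero_le_one⟩ = inrS x) :
    ∀ f : Set.Icc (0:ℝ) (dist (inlS b : G.Space) (inrS x)) → G.Space,
      arcProp (inlS b) (inrS x) f → Set.range q = Set.range f := by
  intro f hf
  have h0' : (q ∘ rev01) ⟨0, Set.left_mem_Icc.2 zero_le_one⟩ = inrS x := by
    show q (rev01 _) = _
    rw [show rev01 (⟨0, Set.left_mem_Icc.2 zero_le_one⟩ : Set.Icc (0:ℝ) 1) =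
      ⟨1, Set.right_mem_Icc.2 zero_le_one⟩ from Subtype.ext (by norm_num [rev01])]
    exact h1
  have h1' : (q ∘ rev01) ⟨1, Set.right_mem_Icc.2 zero_le_one⟩ = inlS b := by
    show q (rev01 _) = _
    rw [show rev01 (⟨1, Set.right_mem_Icc.2 zero_le_one⟩ : Set.Icc (0:ℝ) 1) =
      ⟨0, Set.left_mem_Icc.2 zero_le_one⟩ from Subtype.ext (by norm_num [rev01])]
    exact h0
  have hres := p2_rl hT hTi (q ∘ rev01) (hqc.comp rev01_continuous)
    (hqi.comp rev01_injective) h0' h1' (revArc (inlS b) (inrS x) f) (revArc_arcProp hf)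
  rw [range_comp_rev01, revArc_range] at hres
  exact hres

theorem p2_rr_ne (hT : IsRealTree G.T) (hTi : ∀ i, IsRealTree (G.Ti i)) {i j : G.I}
    (hij : i ≠ j) {x : {x : G.Ti i // x ≠ G.ρi i}} {y : {x : G.Ti j // x ≠ G.ρi j}}
    (q : Set.Icc (0:ℝ) 1 → G.Space) (hqc : Continuous q) (hqi : Function.Injective q)
    (h0 : q ⟨0, Set.left_mem_Icc.2 zero_le_one⟩ = inrS x)
    (h1 : q ⟨1, Set.right_mem_Icc.2 zero_le_one⟩ = inrS y) :
    ∀ f : Set.Icc (0:ℝ) (dist (inrS x : G.Space) (inrS y)) → G.Space,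
      arcProp (inrS x) (inrS y) f → Set.range q = Set.range f := by
  intro f hf
  rw [det_rr_ne hT hTi hij hf (canRRne_arcProp hT hTi hij x y), canRRne_range]
  set Qr : ℝ → G.Space := fun v => q (Set.projIcc 0 1 zero_le_one v) with hQr
  have hQc : Continuous Qr := hqc.comp continuous_projIcc
  have hq' : ∀ v : Set.Icc (0:ℝ) 1, Qr v.1 = q v := by
    intro v
    simp only [hQr]
    rw [Set.projIcc_val]
  have hQinj : Set.InjOn Qr (Set.Icc 0 1) := by
    intro u hu v hv h
    have h1' : q ⟨u, hu⟩ = q ⟨v, hv⟩ :=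
      (hq' ⟨u, hu⟩).symm.trans (h.trans (hq' ⟨v, hv⟩))
    exact congrArg Subtype.val (hqi h1')
  have hnk : ∀ k, k ≠ i → k ≠ j → ∀ v : Set.Icc (0:ℝ) 1, q v ∉ P k := by
    intro k hki hkj v
    have hg := gate1 (isOpen_P k) (closure_P k) hQc hQinj
      (by rw [hq' ⟨0, Set.left_mem_Icc.2 zero_le_one⟩, h0]
          exact not_mem_P_inr_ne (Ne.symm hki) x)
      (by rw [hq' ⟨1, Set.right_mem_Icc.2 zero_le_one⟩, h1]
          exact not_mem_P_inr_ne (Ne.symm hkj) y)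
      v.1 v.2
    rwa [hq' v] at hg
  -- exit point from `P i`
  obtain ⟨c, ⟨hc0, hc1⟩, hcb, hbef, haft⟩ := gate2 (isOpen_P i) (closure_P i) hQc hQinj
    (by rw [hq' ⟨0, Set.left_mem_Icc.2 zero_le_one⟩, h0]; exact mem_P_inr x)
    (by rw [hq' ⟨1, Set.right_mem_Icc.2 zero_le_one⟩, h1]
        exact not_mem_P_inr_ne (Ne.symm hij) y)
  have hqcc : q ⟨c, ⟨hc0.le, hc1⟩⟩ = inlS (G.sig i) :=
    (hq' ⟨c, ⟨hc0.le, hc1⟩⟩).symm.trans hcb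
  -- entry point into `P j`, via the reversed path
  set q2 : Set.Icc (0:ℝ) 1 → G.Space := q ∘ rev01 with hq2
  set Qr2 : ℝ → G.Space := fun v => q2 (Set.projIcc 0 1 zero_le_one v) with hQr2
  have hQc2 : Continuous Qr2 := (hqc.comp rev01_continuous).comp continuous_projIcc
  have hq2' : ∀ v : Set.Icc (0:ℝ) 1, Qr2 v.1 = q2 v := by
    intro v
    simp only [hQr2]
    rw [Set.projIcc_val]
  have hQinj2 : Set.InjOn Qr2 (Set.Icc 0 1) := by
    intro u hu v hv h
    have h1' : q2 ⟨u, hu⟩ = q2 ⟨v, hv⟩ :=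
      (hq2' ⟨u, hu⟩).symm.trans (h.trans (hq2' ⟨v, hv⟩))
    exact congrArg Subtype.val ((hqi.comp rev01_injective) h1')
  have h02 : q2 ⟨0, Set.left_mem_Icc.2 zero_le_one⟩ = inrS y := by
    show q (rev01 _) = _
    rw [show rev01 (⟨0, Set.left_mem_Icc.2 zero_le_one⟩ : Set.Icc (0:ℝ) 1) =
      ⟨1, Set.right_mem_Icc.2 zero_le_one⟩ from Subtype.ext (by norm_num [rev01])]
    exact h1
  have h12 : q2 ⟨1, Set.right_mem_Icc.2 zero_le_one⟩ = inrS x := by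
    show q (rev01 _) = _
    rw [show rev01 (⟨1, Set.right_mem_Icc.2 zero_le_one⟩ : Set.Icc (0:ℝ) 1) =
      ⟨0, Set.left_mem_Icc.2 zero_le_one⟩ from Subtype.ext (by norm_num [rev01])]
    exact h0
  obtain ⟨c2, ⟨hc20, hc21⟩, hcb2, hbef2, haft2⟩ := gate2 (isOpen_P j) (closure_P j)
    hQc2 hQinj2
    (by rw [hq2' ⟨0, Set.left_mem_Icc.2 zero_le_one⟩, h02]; exact mem_P_inr y)
    (by rw [hq2' ⟨1, Set.right_mem_Icc.2 zero_le_one⟩, h12]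
        exact not_mem_P_inr_ne hij x)
  set d : ℝ := 1 - c2 with hd
  have hd0 : 0 ≤ d := by simp only [hd]; linarith
  have hd1 : d ≤ 1 := by simp only [hd]; linarith
  have hq2eval : ∀ (v : Set.Icc (0:ℝ) 1), q2 (rev01 v) = q v := by
    intro v
    show q (rev01 (rev01 v)) = q v
    congr 1
    exact Subtype.ext (by simp [rev01])
  have hqdd : q ⟨d, ⟨hd0, hd1⟩⟩ = inlS (G.sig j) := by
    have h3 := (hq2' ⟨c2, ⟨hc20.le, hc21⟩⟩).symm.trans hcb2
    have h4 : q2 ⟨c2, ⟨hc20.le, hc21⟩⟩ = q ⟨d, ⟨hd0, hd1⟩⟩ := rfl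
    exact h4.symm.trans h3
  -- after `d` the path is in `P j`, before `d` it is not
  have hafterd : ∀ v : Set.Icc (0:ℝ) 1, d < v.1 → q v ∈ P j := by
    intro v hv
    have h3 := hbef2 (1 - v.1) (by linarith [v.2.2]) (by simp only [hd] at hv; linarith)
    rw [hq2' ⟨1 - v.1, ⟨by linarith [v.2.2], by linarith [v.2.1]⟩⟩] at h3
    have h4 : q2 ⟨1 - v.1, ⟨by linarith [v.2.2], by linarith [v.2.1]⟩⟩ = q v := by
      show q (rev01 _) = _
      congr 1
      exact Subtype.ext (by simp [rev01])
    rwa [h4] at h3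
  have hbefored : ∀ v : Set.Icc (0:ℝ) 1, v.1 < d → q v ∉ P j := by
    intro v hv
    have h3 := haft2 (1 - v.1) (by simp only [hd] at hv; linarith) (by linarith [v.2.1])
    rw [hq2' ⟨1 - v.1, ⟨by linarith [v.2.2], by linarith [v.2.1]⟩⟩] at h3
    have h4 : q2 ⟨1 - v.1, ⟨by linarith [v.2.2], by linarith [v.2.1]⟩⟩ = q v := by
      show q (rev01 _) = _
      congr 1
      exact Subtype.ext (by simp [rev01])
    rwa [h4] at h3
  have hcd : c ≤ d := by
    by_contra hdc
    push_neg at hdc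
    set v : Set.Icc (0:ℝ) 1 := ⟨(d + c) / 2, ⟨by linarith, by linarith⟩⟩ with hv
    have h5 : q v ∈ P i := by
      have := hbef v.1 v.2.1 (show (d + c) / 2 < c by linarith)
      rwa [hq' v] at this
    have h6 : q v ∈ P j := hafterd v (show d < (d + c) / 2 by linarith)
    obtain ⟨yv, hyv⟩ := mem_P_iff.1 h6
    rw [hyv] at h5
    exact not_mem_P_inr_ne (Ne.symm hij) yv h5
  have memA : ∀ v : Set.Icc (0:ℝ) 1, 0 ≤ v.1 → v.1 ≤ c → q v ∈ Set.range (emb i) := by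
    intro v hv1 hv2
    rcases lt_or_eq_of_le hv2 with hlt | heq
    · have hg := hbef v.1 v.2.1 hlt
      rw [hq' v] at hg
      exact P_subset_range_emb i hg
    · have hv : v = ⟨c, ⟨hc0.le, hc1⟩⟩ := Subtype.ext heq
      rw [hv, hqcc]
      exact ⟨G.ρi i, emb_root i⟩
  have memC : ∀ v : Set.Icc (0:ℝ) 1, d ≤ v.1 → v.1 ≤ 1 → q v ∈ Set.range (emb j) := by
    intro v hv1 hv2
    rcases lt_or_eq_of_le hv1 with hlt | heq
    · exact P_subset_range_emb j (hafterd v hlt)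
    · have hv : v = ⟨d, ⟨hd0, hd1⟩⟩ := Subtype.ext heq.symm
      rw [hv, hqdd]
      exact ⟨G.ρi j, emb_root j⟩
  have memB : ∀ v : Set.Icc (0:ℝ) 1, c ≤ v.1 → v.1 ≤ d →
      q v ∈ Set.range (inlS : G.T → G.Space) := by
    intro v hv1 hv2
    rcases hv : q v with c' | ⟨k, y'⟩
    · exact ⟨c', rfl⟩
    · exfalso
      by_cases hk : k = i
      · subst hk
        rcases lt_or_eq_of_le hv1 with hlt | heq
        · have hg := haft v.1 hlt (le_trans hv2 hd1)
          rw [hq' v, hv] at hg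
          exact hg (mem_P_inr y')
        · have hvv : v = ⟨c, ⟨hc0.le, hc1⟩⟩ := Subtype.ext heq.symm
          rw [hvv, hqcc] at hv
          simp [inlS] at hv
      · by_cases hk2 : k = j
        · subst hk2
          rcases lt_or_eq_of_le hv2 with hlt | heq
          · have hg := hbefored v hlt
            rw [hv] at hg
            exact hg (mem_P_inr y')
          · have hvv : v = ⟨d, ⟨hd0, hd1⟩⟩ := Subtype.ext heq
            rw [hvv, hqdd] at hv
            simp [inlS] at hv
        · have hg := hnk k hk hk2 v
          rw [hv] at hg
          exact hg (mem_P_inr y')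
  obtain ⟨z1, w1, hz1, hw1, hkey1⟩ := piece (isometry_emb i) (hTi i) hqc hqi
    (le_refl (0:ℝ)) hc0.le hc1 memA
  obtain ⟨z2, w2, hz2, hw2, hkey2⟩ := piece (isometry_inl (G := G)) hT hqc hqi
    hc0.le hcd hd1 memB
  obtain ⟨z3, w3, hz3, hw3, hkey3⟩ := piece (isometry_emb j) (hTi j) hqc hqi
    hd0 hd1 (le_refl (1:ℝ)) memC
  have hz1' : z1 = (x : G.Ti i) := (isometry_emb i).injective
    ((hz1.symm.trans h0).trans (emb_sub x).symm)
  have hw1' : w1 = G.ρi i := (isometry_emb i).injective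
    ((hw1.symm.trans hqcc).trans (emb_root i).symm)
  have hz2' : z2 = G.sig i := Sum.inl_injective (hz2.symm.trans hqcc)
  have hw2' : w2 = G.sig j := Sum.inl_injective (hw2.symm.trans hqdd)
  have hz3' : z3 = G.ρi j := (isometry_emb j).injective
    ((hz3.symm.trans hqdd).trans (emb_root j).symm)
  have hw3' : w3 = (y : G.Ti j) := (isometry_emb j).injective
    ((hw3.symm.trans h1).trans (emb_sub y).symm)
  rw [hz1', hw1'] at hkey1
  rw [hz2', hw2'] at hkey2
  rw [hz3', hw3'] at hkey3
  rw [range_eq_union3 q hcd,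
    hkey1 _ ((hTi i).1 (x : G.Ti i) (G.ρi i)).choose_spec.1,
    hkey3 (revArc _ _ ((hTi j).1 (y : G.Ti j) (G.ρi j)).choose)
      (revArc_arcProp ((hTi j).1 (y : G.Ti j) (G.ρi j)).choose_spec.1),
    hkey2 (revArc _ _ ((hT.1 (G.sig j) (G.sig i)).choose))
      (revArc_arcProp (hT.1 (G.sig j) (G.sig i)).choose_spec.1),
    revArc_range, revArc_range]

end GraftSetup

namespace GraftSetup

theorem graft_realTree (G : GraftSetup) (hT : IsRealTree G.T)
    (hTi : ∀ i, IsRealTree (G.Ti i)) : IsRealTree G.Space := by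
  constructor
  · exact unique_arc hT hTi
  · intro q hqc hqi
    rcases h0 : q ⟨0, Set.left_mem_Icc.2 zero_le_one⟩ with a | ⟨i, x⟩ <;>
      rcases h1 : q ⟨1, Set.right_mem_Icc.2 zero_le_one⟩ with b | ⟨j, y⟩
    · exact p2_ll hT hTi q hqc hqi h0 h1
    · exact p2_lr hT hTi q hqc hqi h0 h1
    · exact p2_rl hT hTi q hqc hqi h0 h1
    · by_cases hij : i = j
      · subst hij
        exact p2_rr_same hT hTi q hqc hqi h0 h1
      · exact p2_rr_ne hT hTi hij q hqc hqi h0 h1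

end GraftSetup


/-- Grafting real trees onto a real tree yields a real tree: the disjoint union
`T ⊔ ⨆ᵢ (Tᵢ \ {ρᵢ})` carries a metric space structure, given by the grafting formulas, which
makes it a rooted real tree (rooted at the root of `T`). -/
theorem graft_isRealTree (T : Type*) [MetricSpace T] (ρ : T) (hT : IsRealTree T)
    {I : Type*} (σ : I → T) (Ti : I → Type*) [∀ i, MetricSpace (Ti i)] (ρi : ∀ i, Ti i)
    (hTi : ∀ i, IsRealTree (Ti i)) :
    ∃ m : MetricSpace (T ⊕ (Σ i : I, {x : Ti i // x ≠ ρi i})),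
      (∀ s s' : T, mdist m (Sum.inl s) (Sum.inl s') = dist s s') ∧
      (∀ (i : I) (s : {x : Ti i // x ≠ ρi i}) (s' : T),
        mdist m (Sum.inr ⟨i, s⟩) (Sum.inl s') = dist (s : Ti i) (ρi i) + dist (σ i) s') ∧
      (∀ i j : I, i ≠ j → ∀ (s : {x : Ti i // x ≠ ρi i}) (s' : {x : Ti j // x ≠ ρi j}),
        mdist m (Sum.inr ⟨i, s⟩) (Sum.inr ⟨j, s'⟩)
          = dist (s : Ti i) (ρi i) + dist (σ i) (σ j) + dist (s' : Ti j) (ρi j)) ∧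
      (∀ (i : I) (s s' : {x : Ti i // x ≠ ρi i}),
        mdist m (Sum.inr ⟨i, s⟩) (Sum.inr ⟨i, s'⟩) = dist (s : Ti i) (s' : Ti i)) ∧
      @IsRealTree _ m := by
  refine ⟨GraftSetup.metricSpace (G := ⟨T, I, σ, Ti, ρi⟩), ?_, ?_, ?_, ?_, ?_⟩
  · intro s s'
    rfl
  · intro i s s'
    rfl
  · intro i j hij s s'
    exact GraftSetup.gdist_inr_inr_ne (G := ⟨T, I, σ, Ti, ρi⟩) hij s s'
  · intro i s s'
    exact GraftSetup.gdist_inr_inr_same (G := ⟨T, I, σ, Ti, ρi⟩) i s s'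
  · exact GraftSetup.graft_realTree ⟨T, I, σ, Ti, ρi⟩ hT hTi
end
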